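/- arXiv:2404.02753 — 6 statements merged into one kernel-verified Lean document; each statement's English description precedes it below -/
import Mathlib

section
/- The group generated by the involutions π_{t,a} (for 1 ≤ t < g, a > 0) acts transitively on the set of standard Young tableaux of any skew Young diagram σ with g boxes. -/
open Finset
open scoped Classical

/-- A standard Young tableau of a (skew) diagram given by its set of `cells`
(pairs (row, column)) with `g` boxes: a filling by `1,…,g` (and `0` outside),
bijective onto `{1,…,g}`, strictly increasing along rows and columns. -/
def IsSYT (cells : Finset (ℕ × ℕ)) (g : ℕ) (T : ℕ × ℕ → ℕ) : Prop :=
  (∀ c, c ∉ cells → T c = 0) ∧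
  Set.BijOn T (cells : Set (ℕ × ℕ)) (Set.Icc 1 g) ∧
  (∀ i j j', (i, j) ∈ cells → (i, j') ∈ cells → j < j' → T (i, j) < T (i, j')) ∧
  (∀ i i' j, (i, j) ∈ cells → (i', j) ∈ cells → i < i' → T (i, j) < T (i', j))

/-- Exchange the entries `t` and `t+1` in a filling. -/
def swapVals (t : ℕ) (T : ℕ × ℕ → ℕ) : ℕ × ℕ → ℕ := fun c => Equiv.swap t (t + 1) (T c)

/-- The entries `t` and `t+1` lie in different rows and different columns,
at distance `a` (sum of horizontal and vertical distances). -/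
def ShouldSwap (cells : Finset (ℕ × ℕ)) (t a : ℕ) (T : ℕ × ℕ → ℕ) : Prop :=
  ∃ c ∈ cells, ∃ c' ∈ cells, T c = t ∧ T c' = t + 1 ∧ c.1 ≠ c'.1 ∧ c.2 ≠ c'.2 ∧
    Nat.dist c.1 c'.1 + Nat.dist c.2 c'.2 = a

/-- The involution `π_{t,a}`. -/
noncomputable def piAct (cells : Finset (ℕ × ℕ)) (t a : ℕ) (T : ℕ × ℕ → ℕ) : ℕ × ℕ → ℕ :=
  if ShouldSwap cells t a T then swapVals t T else T

/-- Column reading order on boxes: left to right, top to bottom within a column. -/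
def colLt (c c' : ℕ × ℕ) : Prop := c.2 < c'.2 ∨ (c.2 = c'.2 ∧ c.1 < c'.1)

/-- Row reading order on boxes: top to bottom, left to right within a row. -/
def rowLt (c c' : ℕ × ℕ) : Prop := c.1 < c'.1 ∨ (c.1 = c'.1 ∧ c.2 < c'.2)

/-- Column-wise lexicographic order on tableaux: at the first box (in column
reading order) where they differ, `T` has the smaller entry. -/
def lexLt (cells : Finset (ℕ × ℕ)) (T T' : ℕ × ℕ → ℕ) : Prop :=
  ∃ c ∈ cells, T c < T' c ∧ ∀ c' ∈ cells, colLt c' c → T c' = T' c'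

/-- The tableau filling `1,…,g` column by column (top to bottom in each column). -/
noncomputable def colMin (cells : Finset (ℕ × ℕ)) : ℕ × ℕ → ℕ :=
  fun c => if c ∈ cells then 1 + (cells.filter (fun c' => colLt c' c)).card else 0

/-- The tableau filling `1,…,g` row by row (left to right in each row). -/
noncomputable def rowMax (cells : Finset (ℕ × ℕ)) : ℕ × ℕ → ℕ :=
  fun c => if c ∈ cells then 1 + (cells.filter (fun c' => rowLt c' c)).card else 0

/-- Apply a composition of generators `π_{t,a}` given by a list of pairs `(t,a)`. -/
noncomputable def applyList (cells : Finset (ℕ × ℕ)) (l : List (ℕ × ℕ))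
    (T : ℕ × ℕ → ℕ) : ℕ × ℕ → ℕ :=
  l.foldl (fun U p => piAct cells p.1 p.2 U) T


section Aux

lemma colLt_trans {a b c : ℕ × ℕ} (h1 : colLt a b) (h2 : colLt b c) : colLt a c := by
  unfold colLt at *; omega

lemma colLt_irrefl (a : ℕ × ℕ) : ¬ colLt a a := by unfold colLt; omega

lemma colLt_total {a b : ℕ × ℕ} (h : a ≠ b) : colLt a b ∨ colLt b a := by
  have h' : ¬ (a.1 = b.1 ∧ a.2 = b.2) := fun ⟨h1, h2⟩ => h (Prod.ext h1 h2)
  unfold colLt; omega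

lemma isSYT_swap {cells : Finset (ℕ × ℕ)} {g : ℕ} {T : ℕ × ℕ → ℕ}
    (hT : IsSYT cells g T) {c c' : ℕ × ℕ} (hc : c ∈ cells) (hc' : c' ∈ cells)
    {t : ℕ} (htc : T c = t) (htc' : T c' = t + 1)
    (hr : c.1 ≠ c'.1) (hcol : c.2 ≠ c'.2) :
    IsSYT cells g (swapVals t T) := by
  obtain ⟨h0, hbij, hrow, hcolm⟩ := hT
  have hmem : T c ∈ Set.Icc 1 g := hbij.mapsTo hc
  have hmem' : T c' ∈ Set.Icc 1 g := hbij.mapsTo hc'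
  have ht1 : 1 ≤ t := by rw [htc] at hmem; exact hmem.1
  have htg : t + 1 ≤ g := by rw [htc'] at hmem'; exact hmem'.2
  have hsw : ∀ x ∈ Set.Icc 1 g, Equiv.swap t (t + 1) x ∈ Set.Icc (1 : ℕ) g := by
    intro x hx
    obtain ⟨hx1, hx2⟩ := hx
    rcases eq_or_ne x t with hxt | hxt
    · rw [hxt, Equiv.swap_apply_left]; exact ⟨by omega, htg⟩
    rcases eq_or_ne x (t + 1) with hxt1 | hxt1
    · rw [hxt1, Equiv.swap_apply_right]; exact ⟨ht1, by omega⟩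
    · rw [Equiv.swap_apply_of_ne_of_ne hxt hxt1]; exact ⟨hx1, hx2⟩
  have hmono : ∀ a ∈ cells, ∀ b ∈ cells, T a < T b → (a.1 = b.1 ∨ a.2 = b.2) →
      swapVals t T a < swapVals t T b := by
    intro a ha b hb hab hline
    unfold swapVals
    rcases eq_or_ne (T a) t with hat | hat
    · have hbt1 : T b ≠ t + 1 := by
        intro hbt
        have hac : a = c := hbij.injOn ha hc (by rw [hat, htc])
        have hbc : b = c' := hbij.injOn hb hc' (by rw [hbt, htc'])
        subst hac; subst hbc
        rcases hline with h | h
        · exact hr h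
        · exact hcol h
      rw [hat, Equiv.swap_apply_left, Equiv.swap_apply_of_ne_of_ne (by omega) hbt1]
      omega
    rcases eq_or_ne (T a) (t + 1) with hat1 | hat1
    · rw [hat1, Equiv.swap_apply_right,
        Equiv.swap_apply_of_ne_of_ne (by omega) (by omega)]
      omega
    rcases eq_or_ne (T b) t with hbt | hbt
    · rw [hbt, Equiv.swap_apply_left, Equiv.swap_apply_of_ne_of_ne hat (by omega)]
      omega
    rcases eq_or_ne (T b) (t + 1) with hbt1 | hbt1
    · rw [hbt1, Equiv.swap_apply_right, Equiv.swap_apply_of_ne_of_ne hat hat1]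
      omega
    · rw [Equiv.swap_apply_of_ne_of_ne hat hat1, Equiv.swap_apply_of_ne_of_ne hbt hbt1]
      exact hab
  refine ⟨?_, ?_, ?_, ?_⟩
  · intro x hx
    unfold swapVals
    rw [h0 x hx, Equiv.swap_apply_of_ne_of_ne (by omega) (by omega)]
  · have hb : Set.BijOn (Equiv.swap t (t + 1)) (Set.Icc 1 g) (Set.Icc 1 g) := by
      refine ⟨hsw, (Equiv.injective _).injOn, ?_⟩
      intro y hy
      exact ⟨Equiv.swap t (t + 1) y, hsw y hy, Equiv.swap_apply_self t (t + 1) y⟩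
    exact hb.comp hbij
  · intro i j j' h1 h2 hj
    exact hmono _ h1 _ h2 (hrow i j j' h1 h2 hj) (Or.inl rfl)
  · intro i i' j h1 h2 hi
    exact hmono _ h1 _ h2 (hcolm i i' j h1 h2 hi) (Or.inr rfl)

lemma colMin_strictMono {cells : Finset (ℕ × ℕ)} {a b : ℕ × ℕ} (ha : a ∈ cells)
    (hb : b ∈ cells) (h : colLt a b) : colMin cells a < colMin cells b := by
  have hsub : cells.filter (fun c' => colLt c' a) ⊆ cells.filter (fun c' => colLt c' b) := by
    intro x hx
    rw [Finset.mem_filter] at *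
    exact ⟨hx.1, colLt_trans hx.2 h⟩
  have hss : cells.filter (fun c' => colLt c' a) ⊂ cells.filter (fun c' => colLt c' b) :=
    (Finset.ssubset_iff_of_subset hsub).mpr
      ⟨a, Finset.mem_filter.mpr ⟨ha, h⟩, fun hx => colLt_irrefl a (Finset.mem_filter.mp hx).2⟩
  simp only [colMin, if_pos ha, if_pos hb]
  exact Nat.add_lt_add_left (Finset.card_lt_card hss) 1

/-- Weight measure: earlier cells (in column order) are heavier. -/
noncomputable def Mwt (cells : Finset (ℕ × ℕ)) (g : ℕ) (T : ℕ × ℕ → ℕ) : ℕ :=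
  ∑ c ∈ cells, T c * (g + 1) ^ (cells.filter (fun c' => colLt c c')).card

lemma step_lemma {cells : Finset (ℕ × ℕ)} {g : ℕ} {T : ℕ × ℕ → ℕ}
    (hT : IsSYT cells g T) {c0 : ℕ × ℕ} (hc0 : c0 ∈ cells)
    (hne0 : T c0 ≠ colMin cells c0) :
    ∃ t a, 1 ≤ t ∧ t < g ∧ 0 < a ∧
      IsSYT cells g (piAct cells t a T) ∧
      Mwt cells g (piAct cells t a T) < Mwt cells g T := by
  classical
  set S := cells.filter (fun c => T c ≠ colMin cells c) with hS
  have hSne : S.Nonempty := ⟨c0, Finset.mem_filter.mpr ⟨hc0, hne0⟩⟩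
  obtain ⟨cs, hcsS, hmin⟩ := Finset.exists_min_image S (colMin cells) hSne
  obtain ⟨hcs, hTne⟩ := Finset.mem_filter.mp hcsS
  set B := cells.filter (fun c' => colLt c' cs) with hB
  have hBagree : ∀ c' ∈ B, T c' = colMin cells c' := by
    intro c' hc'B
    obtain ⟨hc'c, hltc⟩ := Finset.mem_filter.mp hc'B
    by_contra hcon
    have hc'S : c' ∈ S := Finset.mem_filter.mpr ⟨hc'c, hcon⟩
    have h1 := hmin c' hc'S
    have h2 := colMin_strictMono hc'c hcs hltc
    omega
  have hBle : ∀ c' ∈ B, T c' ≤ B.card := by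
    intro c' hc'B
    obtain ⟨hc'c, hltc⟩ := Finset.mem_filter.mp hc'B
    rw [hBagree c' hc'B]
    simp only [colMin, if_pos hc'c]
    have hsub : cells.filter (fun x => colLt x c') ⊆ B := by
      intro x hx
      rw [Finset.mem_filter] at *
      exact ⟨hx.1, colLt_trans hx.2 hltc⟩
    have hss : cells.filter (fun x => colLt x c') ⊂ B :=
      (Finset.ssubset_iff_of_subset hsub).mpr
        ⟨c', hc'B, fun hx => colLt_irrefl c' (Finset.mem_filter.mp hx).2⟩
    have := Finset.card_lt_card hss
    omega
  have hcsB : cs ∉ B := fun h => colLt_irrefl cs (Finset.mem_filter.mp h).2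
  have hkey : 1 + B.card ≤ T cs := by
    by_contra hcon
    push_neg at hcon
    have hmaps : ∀ x ∈ insert cs B, T x ∈ Finset.Icc 1 B.card := by
      intro x hx
      rcases Finset.mem_insert.mp hx with rfl | hxB
      · have h1 := hT.2.1.mapsTo hcs
        exact Finset.mem_Icc.mpr ⟨h1.1, by omega⟩
      · have h1 := hT.2.1.mapsTo (Finset.mem_filter.mp hxB).1
        exact Finset.mem_Icc.mpr ⟨h1.1, hBle x hxB⟩
    have hinj : Set.InjOn T (insert cs B : Finset (ℕ × ℕ)) := by
      apply hT.2.1.injOn.mono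
      intro x hx
      rcases Finset.mem_insert.mp (by exact_mod_cast hx) with rfl | hxB
      · exact hcs
      · exact (Finset.mem_filter.mp hxB).1
    have hcard := Finset.card_le_card_of_injOn T hmaps hinj
    rw [Finset.card_insert_of_notMem hcsB, Nat.card_Icc] at hcard
    omega
  have hcolMincs : colMin cells cs = 1 + B.card := by simp only [colMin, if_pos hcs]; rfl
  set v := T cs with hv
  have hvk : 1 + B.card < v := by omega
  have hvg : v ≤ g := (hT.2.1.mapsTo hcs).2
  have hv2 : 2 ≤ v := by omega
  obtain ⟨d, hd', hTd⟩ := hT.2.1.surjOn (show v - 1 ∈ Set.Icc 1 g from ⟨by omega, by omega⟩)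
  have hd : d ∈ cells := hd'
  have hdB : d ∉ B := fun h => by have := hBle d h; omega
  have hdcs : d ≠ cs := fun h => by rw [h, ← hv] at hTd; omega
  have hlt : colLt cs d := by
    rcases colLt_total hdcs with h | h
    · exact absurd (show d ∈ B from Finset.mem_filter.mpr ⟨hd, h⟩) hdB
    · exact h
  have hr1 : cs.1 ≠ d.1 := by
    intro h
    have hj : cs.2 < d.2 := by unfold colLt at hlt; omega
    have := hT.2.2.1 cs.1 cs.2 d.2 (by simpa using hcs) (by rw [h]; simpa using hd) hj
    rw [show ((cs.1, d.2) : ℕ × ℕ) = d from Prod.ext h rfl] at this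
    simp only [Prod.mk.eta] at this
    omega
  have hr2 : cs.2 ≠ d.2 := by
    intro h
    have hi : cs.1 < d.1 := by unfold colLt at hlt; omega
    have := hT.2.2.2 cs.1 d.1 cs.2 (by simpa using hcs) (by rw [h]; simpa using hd) hi
    rw [show ((d.1, cs.2) : ℕ × ℕ) = d from Prod.ext rfl h] at this
    simp only [Prod.mk.eta] at this
    omega
  have hv1 : v - 1 + 1 = v := by omega
  have hss : ShouldSwap cells (v - 1) (Nat.dist d.1 cs.1 + Nat.dist d.2 cs.2) T :=
    ⟨d, hd, cs, hcs, hTd, by omega, fun h => hr1 h.symm, fun h => hr2 h.symm, rfl⟩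
  have hpi : piAct cells (v - 1) (Nat.dist d.1 cs.1 + Nat.dist d.2 cs.2) T = swapVals (v - 1) T := by
    simp only [piAct]
    rw [if_pos hss]
  refine ⟨v - 1, Nat.dist d.1 cs.1 + Nat.dist d.2 cs.2, by omega, by omega, ?_, ?_, ?_⟩
  · have : Nat.dist d.2 cs.2 ≠ 0 := by
      simp only [Nat.dist]
      omega
    omega
  · rw [hpi]
    exact isSYT_swap ⟨hT.1, hT.2.1, hT.2.2.1, hT.2.2.2⟩ hd hcs hTd (by omega)
      (fun h => hr1 h.symm) (fun h => hr2 h.symm)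
  · rw [hpi]
    set w : ℕ × ℕ → ℕ := fun c => (g + 1) ^ (cells.filter (fun c' => colLt c c')).card with hwdef
    have hw : w d < w cs := by
      have hsub : cells.filter (fun c' => colLt d c') ⊆ cells.filter (fun c' => colLt cs c') := by
        intro x hx
        rw [Finset.mem_filter] at *
        exact ⟨hx.1, colLt_trans hlt hx.2⟩
      have hssub : cells.filter (fun c' => colLt d c') ⊂ cells.filter (fun c' => colLt cs c') :=
        (Finset.ssubset_iff_of_subset hsub).mpr
          ⟨d, Finset.mem_filter.mpr ⟨hd, hlt⟩, fun hx => colLt_irrefl d (Finset.mem_filter.mp hx).2⟩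
      exact Nat.pow_lt_pow_right (by omega) (Finset.card_lt_card hssub)
    have hdsplit : d ∈ cells.erase cs := Finset.mem_erase.mpr ⟨hdcs, hd⟩
    have hsplit : ∀ U : ℕ × ℕ → ℕ, ∑ c ∈ cells, U c * w c =
        U cs * w cs + (U d * w d + ∑ c ∈ (cells.erase cs).erase d, U c * w c) := by
      intro U
      rw [← Finset.add_sum_erase _ (fun c => U c * w c) hcs,
        ← Finset.add_sum_erase _ (fun c => U c * w c) hdsplit]
    have hMT : Mwt cells g T = v * w cs + ((v - 1) * w d + ∑ c ∈ (cells.erase cs).erase d, T c * w c) := by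
      rw [Mwt, hsplit T, ← hv, hTd]
    have hval_cs : swapVals (v - 1) T cs = v - 1 := by
      unfold swapVals
      rw [show T cs = v - 1 + 1 from by omega]
      exact Equiv.swap_apply_right _ _
    have hval_d : swapVals (v - 1) T d = v := by
      unfold swapVals
      rw [hTd, Equiv.swap_apply_left, hv1]
    have hval_other : ∀ c ∈ (cells.erase cs).erase d, swapVals (v - 1) T c = T c := by
      intro c hcmem
      obtain ⟨hcd, hcmem2⟩ := Finset.mem_erase.mp hcmem
      obtain ⟨hccs, hcc⟩ := Finset.mem_erase.mp hcmem2
      unfold swapVals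
      have h1 : T c ≠ v - 1 := fun h => hcd (hT.2.1.injOn hcc hd (by rw [h, hTd]))
      have h2 : T c ≠ v - 1 + 1 := by
        rw [hv1]
        exact fun h => hccs (hT.2.1.injOn hcc hcs (by rw [h, ← hv]))
      rw [Equiv.swap_apply_of_ne_of_ne h1 h2]
    have hMT' : Mwt cells g (swapVals (v - 1) T) =
        (v - 1) * w cs + (v * w d + ∑ c ∈ (cells.erase cs).erase d, T c * w c) := by
      rw [Mwt, hsplit (swapVals (v - 1) T), hval_cs, hval_d]
      congr 2
      exact Finset.sum_congr rfl fun c hcmem => by rw [hval_other c hcmem]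
    rw [hMT, hMT']
    have e : ∀ m x : ℕ, 1 ≤ m → m * x = (m - 1) * x + x := by
      intro m x hm
      obtain ⟨u, rfl⟩ : ∃ u, m = u + 1 := ⟨m - 1, by omega⟩
      simp [Nat.add_sub_cancel]
      ring
    rw [e v (w cs) (by omega), e v (w d) (by omega)]
    linarith [hw]

lemma reach {cells : Finset (ℕ × ℕ)} {g : ℕ} (T : ℕ × ℕ → ℕ) (hT : IsSYT cells g T) :
    ∃ l : List (ℕ × ℕ), (∀ p ∈ l, 1 ≤ p.1 ∧ p.1 < g ∧ 0 < p.2) ∧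
      applyList cells l T = colMin cells := by
  suffices H : ∀ n (T : ℕ × ℕ → ℕ), Mwt cells g T = n → IsSYT cells g T →
      ∃ l : List (ℕ × ℕ), (∀ p ∈ l, 1 ≤ p.1 ∧ p.1 < g ∧ 0 < p.2) ∧
        applyList cells l T = colMin cells from H _ T rfl hT
  intro n
  induction n using Nat.strong_induction_on with
  | _ n ih =>
    intro T hM hT
    by_cases hall : ∀ c ∈ cells, T c = colMin cells c
    · refine ⟨[], by simp, funext fun c => ?_⟩
      show T c = colMin cells c
      by_cases hc : c ∈ cells
      · exact hall c hc
      · rw [hT.1 c hc]; simp [colMin, hc]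
    · push_neg at hall
      obtain ⟨c0, hc0, hne⟩ := hall
      obtain ⟨t, a, ht1, htg, ha, hSYT, hM'⟩ := step_lemma hT hc0 hne
      rw [hM] at hM'
      obtain ⟨l, hl, happ⟩ := ih _ hM' (piAct cells t a T) rfl hSYT
      refine ⟨(t, a) :: l, ?_, ?_⟩
      · rintro p hp
        rcases List.mem_cons.mp hp with rfl | hp2
        · exact ⟨ht1, htg, ha⟩
        · exact hl p hp2
      · show applyList cells l (piAct cells t a T) = colMin cells
        exact happ

lemma applyList_append (cells : Finset (ℕ × ℕ)) (l1 l2 : List (ℕ × ℕ)) (T : ℕ × ℕ → ℕ) :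
    applyList cells (l1 ++ l2) T = applyList cells l2 (applyList cells l1 T) :=
  List.foldl_append

lemma piAct_invol (cells : Finset (ℕ × ℕ)) (t a : ℕ) (T : ℕ × ℕ → ℕ) :
    piAct cells t a (piAct cells t a T) = T := by
  by_cases h : ShouldSwap cells t a T
  · have e1 : piAct cells t a T = swapVals t T := by simp only [piAct]; rw [if_pos h]
    have h2 : ShouldSwap cells t a (swapVals t T) := by
      obtain ⟨c, hc, c', hc', h1, h1', h3, h4, h5⟩ := h
      refine ⟨c', hc', c, hc, ?_, ?_, h3.symm, h4.symm, ?_⟩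
      · unfold swapVals; rw [h1', Equiv.swap_apply_right]
      · unfold swapVals; rw [h1, Equiv.swap_apply_left]
      · rw [Nat.dist_comm c'.1 c.1, Nat.dist_comm c'.2 c.2]; exact h5
    rw [e1]
    have e2 : piAct cells t a (swapVals t T) = swapVals t (swapVals t T) := by
      simp only [piAct]; rw [if_pos h2]
    rw [e2]
    funext c
    simp [swapVals, Equiv.swap_apply_self]
  · have e : piAct cells t a T = T := by simp only [piAct]; rw [if_neg h]
    rw [e, e]

lemma applyList_reverse (cells : Finset (ℕ × ℕ)) :
    ∀ (l : List (ℕ × ℕ)) (T : ℕ × ℕ → ℕ),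
      applyList cells l.reverse (applyList cells l T) = T := by
  intro l
  induction l with
  | nil => intro T; rfl
  | cons p l ih =>
    intro T
    show applyList cells (p :: l).reverse (applyList cells l (piAct cells p.1 p.2 T)) = T
    rw [List.reverse_cons, applyList_append]
    show piAct cells p.1 p.2 (applyList cells l.reverse (applyList cells l (piAct cells p.1 p.2 T))) = T
    rw [ih]
    exact piAct_invol cells p.1 p.2 T

end Aux

/-- The group generated by the involutions `π_{t,a}` (for `1 ≤ t < g`, `a > 0`) acts
transitively on the set of standard Young tableaux of any skew diagram `σ = λ \ μ`
with `g` boxes: any tableau can be carried to any other by a composition of the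
generators. -/
theorem stmt_6 (lam mu : YoungDiagram) (hmu : mu ≤ lam) (g : ℕ)
    (hg : (lam.cells \ mu.cells).card = g)
    (T T' : ℕ × ℕ → ℕ) (hT : IsSYT (lam.cells \ mu.cells) g T)
    (hT' : IsSYT (lam.cells \ mu.cells) g T') :
    ∃ l : List (ℕ × ℕ), (∀ p ∈ l, 1 ≤ p.1 ∧ p.1 < g ∧ 0 < p.2) ∧
      applyList (lam.cells \ mu.cells) l T = T' := by
  obtain ⟨l1, hl1, h1⟩ := reach T hT
  obtain ⟨l2, hl2, h2⟩ := reach T' hT'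
  refine ⟨l1 ++ l2.reverse, ?_, ?_⟩
  · intro p hp
    rcases List.mem_append.mp hp with h | h
    · exact hl1 p h
    · exact hl2 p (List.mem_reverse.mp h)
  · rw [applyList_append, h1, ← h2, applyList_reverse]
end

section
/- The Catalan number C_n is odd if and only if n = 2^i − 1 for some integer i ≥ 0. -/
open Finset Finset.Nat

private lemma key_odd (n : ℕ) (h : ¬ 2 ∣ n) : (catalan (n + 1) : ZMod 2) = 0 := by
  rw [catalan_succ']
  push_cast
  apply Finset.sum_involution (fun p _ => Prod.swap p)
  · intro a ha
    simp only [Prod.fst_swap, Prod.snd_swap]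
    rw [mul_comm]
    exact CharTwo.add_self_eq_zero _
  · intro a ha _
    simp only [Finset.HasAntidiagonal.mem_antidiagonal] at ha
    intro hc
    apply h
    have : a.2 = a.1 := congrArg Prod.fst hc
    omega
  · intro a ha
    simp only [Finset.HasAntidiagonal.mem_antidiagonal, Prod.fst_swap, Prod.snd_swap] at ha ⊢
    omega
  · intro a ha
    simp

private lemma key_even (m : ℕ) : (catalan (2 * m + 1) : ZMod 2) = catalan m := by
  rw [catalan_succ']
  push_cast
  have hm : (m, m) ∈ antidiagonal (2 * m) := by
    simp [Finset.HasAntidiagonal.mem_antidiagonal]; omega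
  rw [← Finset.add_sum_erase _ _ hm]
  have h0 : ∑ ij ∈ (antidiagonal (2 * m)).erase (m, m),
      (catalan ij.1 : ZMod 2) * catalan ij.2 = 0 := by
    apply Finset.sum_involution (fun p _ => Prod.swap p)
    · intro a ha
      simp only [Prod.fst_swap, Prod.snd_swap]
      rw [mul_comm]
      exact CharTwo.add_self_eq_zero _
    · intro a ha _
      simp only [Finset.mem_erase, Finset.HasAntidiagonal.mem_antidiagonal] at ha
      intro hc
      have h1 : a.2 = a.1 := congrArg Prod.fst hc
      apply ha.1
      have : a.1 = m := by omega
      rw [Prod.ext_iff]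
      constructor <;> omega
    · intro a ha
      simp only [Finset.mem_erase, Finset.HasAntidiagonal.mem_antidiagonal, Prod.fst_swap,
        Prod.snd_swap] at ha ⊢
      refine ⟨fun hc => ha.1 ?_, by omega⟩
      rw [Prod.ext_iff] at hc ⊢
      simp at hc ⊢
      omega
    · intro a ha
      simp
  rw [h0, add_zero]
  have : ∀ x : ZMod 2, x * x = x := by decide
  exact this _

private lemma key (n : ℕ) : Odd (catalan (n + 1)) ↔ ∃ m, n = 2 * m ∧ Odd (catalan m) := by
  rw [← ZMod.natCast_eq_one_iff_odd]
  rcases Nat.even_or_odd n with ⟨m, hm⟩ | hodd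
  · rw [show n = 2 * m by omega, key_even, ZMod.natCast_eq_one_iff_odd]
    constructor
    · exact fun h => ⟨m, rfl, h⟩
    · rintro ⟨m', hm', h⟩
      have : m' = m := by omega
      rwa [this] at h
  · have h2 : ¬ 2 ∣ n := by rw [Nat.odd_iff] at hodd; omega
    rw [key_odd n h2]
    constructor
    · intro h; exact absurd h (by decide)
    · rintro ⟨m, hm, -⟩; exact absurd hm (by omega)

/-- The Catalan number `C_n` is odd if and only if `n = 2^i − 1` for some `i ≥ 0`. -/
theorem stmt_12 (n : ℕ) : Odd (catalan n) ↔ ∃ i : ℕ, n = 2 ^ i - 1 := by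
  induction n using Nat.strong_induction_on with
  | _ n ih =>
    match n with
    | 0 => simp only [catalan_zero]
           exact ⟨fun _ => ⟨0, by norm_num⟩, fun _ => odd_one⟩
    | n + 1 =>
      rw [key]
      constructor
      · rintro ⟨m, hm, hodd⟩
        have hlt : m < n + 1 := by omega
        obtain ⟨i, hi⟩ := (ih m hlt).mp hodd
        have hp : 1 ≤ 2 ^ i := Nat.one_le_two_pow
        refine ⟨i + 1, ?_⟩
        rw [pow_succ]
        omega
      · rintro ⟨i, hi⟩
        match i with
        | 0 => simp at hi
        | j + 1 =>
          have hp : 1 ≤ 2 ^ j := Nat.one_le_two_pow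
          rw [pow_succ] at hi
          refine ⟨2 ^ j - 1, by omega, ?_⟩
          exact (ih (2 ^ j - 1) (by omega)).mpr ⟨j, rfl⟩
end

section
/- Let σ be a skew Young diagram with exactly two rows and g boxes, in which the first row and first column overlap (i.e., the box in position (row 1, column 1) of the diagram exists). Let s be the length of the first column, t the length of the first row, and L the distance from the lower-left corner box to the upper-right corner box. Then the involution π_{s+t−2,L} on standard Young tableaux of σ moves at most two tableaux, i.e., it is either the identity or a transposition. -/
open Finset
open scoped Classical

/-- Let `σ = λ \ μ` be a skew diagram with exactly two rows and `g` boxes whose first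
row and first column overlap (the box `(0,0)` belongs to the diagram).  With `s` the
length of the first column, `t` the length of the first row, and `L` the distance
from the lower-left corner box `(1, j₁)` to the upper-right corner box `(0, j₂)`,
the involution `π_{s+t−2, L}` moves at most two standard Young tableaux of `σ`,
i.e. it is the identity or a transposition. -/
theorem stmt_14 (lam mu : YoungDiagram) (hmu : mu ≤ lam) (g : ℕ)
    (hg : (lam.cells \ mu.cells).card = g)
    (htworows : ∀ c ∈ lam.cells \ mu.cells, c.1 ≤ 1)
    (hcorner : ((0 : ℕ), (0 : ℕ)) ∈ lam.cells \ mu.cells)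
    (s t : ℕ)
    (hs : s = ((lam.cells \ mu.cells).filter fun c => c.2 = 0).card)
    (ht : t = ((lam.cells \ mu.cells).filter fun c => c.1 = 0).card)
    (j₁ j₂ : ℕ)
    (hj₁ : (1, j₁) ∈ lam.cells \ mu.cells ∧
      ∀ j, (1, j) ∈ lam.cells \ mu.cells → j₁ ≤ j)
    (hj₂ : (0, j₂) ∈ lam.cells \ mu.cells ∧
      ∀ j, (0, j) ∈ lam.cells \ mu.cells → j ≤ j₂)
    (L : ℕ) (hL : L = 1 + Nat.dist j₁ j₂) :
    ∃ T₁ T₂ : ℕ × ℕ → ℕ, ∀ T : ℕ × ℕ → ℕ,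
      IsSYT (lam.cells \ mu.cells) g T →
        piAct (lam.cells \ mu.cells) (s + t - 2) L T ≠ T → T = T₁ ∨ T = T₂ := by

  classical
  -- μ is empty
  have hmucells : mu.cells = ∅ := by
    by_contra h
    obtain ⟨c, hc⟩ := Finset.nonempty_iff_ne_empty.2 h
    have h00 : ((0 : ℕ), (0 : ℕ)) ∈ mu.cells :=
      mu.isLowerSet (by simp [Prod.le_def]) hc
    rw [Finset.mem_sdiff] at hcorner
    exact hcorner.2 h00
  have hD : lam.cells \ mu.cells = lam.cells := by rw [hmucells, Finset.sdiff_empty]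
  rw [hD] at hg htworows hcorner hs ht hj₁ hj₂ ⊢
  set t0 := lam.rowLen 0 with ht0def
  set r := lam.rowLen 1 with hrdef
  have hrow0 : ∀ j, ((0 : ℕ), j) ∈ lam.cells ↔ j < t0 := by
    intro j; rw [YoungDiagram.mem_cells, YoungDiagram.mem_iff_lt_rowLen]
  have hrow1 : ∀ j, ((1 : ℕ), j) ∈ lam.cells ↔ j < r := by
    intro j; rw [YoungDiagram.mem_cells, YoungDiagram.mem_iff_lt_rowLen]
  have ht1 : 1 ≤ t0 := (hrow0 0).1 hcorner
  have h10mem : ((1 : ℕ), (0 : ℕ)) ∈ lam.cells := by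
    rw [YoungDiagram.mem_cells]
    exact lam.up_left_mem le_rfl (Nat.zero_le _) ((YoungDiagram.mem_cells _).1 hj₁.1)
  have hr1 : 1 ≤ r := (hrow1 0).1 h10mem
  have hrt : r ≤ t0 := lam.rowLen_anti 0 1 (by norm_num)
  -- t = t0
  have hfilt0 : lam.cells.filter (fun c => c.1 = 0) = lam.row 0 := by
    ext c
    simp [YoungDiagram.row, YoungDiagram.mem_cells]
  have hfilt1 : lam.cells.filter (fun c => c.1 = 1) = lam.row 1 := by
    ext c
    simp [YoungDiagram.row, YoungDiagram.mem_cells]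
  have htt0 : t = t0 := by
    rw [ht, hfilt0, ht0def, lam.rowLen_eq_card]
  -- s = 2
  have hs2 : s = 2 := by
    rw [hs]
    have : lam.cells.filter (fun c => c.2 = 0) = {((0:ℕ),(0:ℕ)), ((1:ℕ),(0:ℕ))} := by
      ext c
      simp only [Finset.mem_filter, Finset.mem_insert, Finset.mem_singleton]
      constructor
      · rintro ⟨hc, hc2⟩
        have hc1 := htworows c hc
        obtain ⟨i, j⟩ := c
        simp only at hc2
        subst hc2
        interval_cases i
        · left; rfl
        · right; rfl
      · rintro (rfl | rfl)
        · exact ⟨hcorner, rfl⟩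
        · exact ⟨h10mem, rfl⟩
    rw [this]
    rfl
  -- j₁ = 0, j₂ = t0 - 1
  have hj10 : j₁ = 0 := Nat.le_zero.1 (hj₁.2 0 h10mem)
  have hj2t : j₂ = t0 - 1 := by
    have h1 : j₂ < t0 := (hrow0 j₂).1 hj₂.1
    have h2 : t0 - 1 ≤ j₂ := hj₂.2 (t0 - 1) ((hrow0 _).2 (by omega))
    omega
  have hLt : L = t0 := by
    rw [hL, hj10, hj2t, Nat.dist_zero_left]
    omega
  have hstt : s + t - 2 = t0 := by omega
  -- g = t0 + r
  have hgtr : g = t0 + r := by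
    have hsplit := Finset.card_filter_add_card_filter_not
      (s := lam.cells) (p := fun c => c.1 = 0)
    have h1 : (lam.cells.filter (fun c => c.1 = 0)).card = t0 := by
      rw [hfilt0, ht0def, lam.rowLen_eq_card]
    have h2 : lam.cells.filter (fun c => ¬ c.1 = 0) = lam.cells.filter (fun c => c.1 = 1) := by
      apply Finset.filter_congr
      intro c hc
      have := htworows c hc
      omega
    have h3 : (lam.cells.filter (fun c => c.1 = 1)).card = r := by
      rw [hfilt1, hrdef, lam.rowLen_eq_card]
    rw [h1, h2, h3] at hsplit
    omega
  refine ⟨(fun c => if c ∈ lam.cells then (if c.1 = 0 then c.2 + 1 else t0 + 1 + c.2) else 0),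
    (fun c => if c = ((0 : ℕ), t0 - 1) then t0 + 1 else if c = ((1 : ℕ), (0 : ℕ)) then t0 else
      (if c ∈ lam.cells then (if c.1 = 0 then c.2 + 1 else t0 + 1 + c.2) else 0)), ?_⟩
  intro T hT hne
  obtain ⟨hzero, hbij, hrowinc, hcolinc⟩ := hT
  have hmaps := hbij.mapsTo
  have hinj := hbij.injOn
  have hsurj := hbij.surjOn
  -- ShouldSwap holds
  have hss : ShouldSwap lam.cells t0 t0 T := by
    have h : ShouldSwap lam.cells (s + t - 2) L T := by
      by_contra h
      exact hne (if_neg h)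
    rwa [hstt, hLt] at h
  -- T (0,0) = 1
  have hmin : ∀ d ∈ lam.cells, d ≠ ((0 : ℕ), (0 : ℕ)) → T (0, 0) < T d := by
    intro d hd hdne
    obtain ⟨i, j⟩ := d
    have hi : i ≤ 1 := htworows _ hd
    interval_cases i
    · have hj : 0 < j := by
        rcases Nat.eq_zero_or_pos j with rfl | h
        · exact absurd rfl hdne
        · exact h
      exact hrowinc 0 0 j hcorner hd hj
    · rcases Nat.eq_zero_or_pos j with rfl | hj
      · exact hcolinc 0 1 0 hcorner hd one_pos
      · exact lt_trans (hcolinc 0 1 0 hcorner h10mem one_pos)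
          (hrowinc 1 0 j h10mem hd hj)
  have hT00 : T (0, 0) = 1 := by
    have h1g : (1 : ℕ) ∈ Set.Icc 1 g := ⟨le_rfl, by omega⟩
    obtain ⟨d, hd, hd1⟩ := hsurj h1g
    have hd' : d ∈ lam.cells := hd
    have hm := hmaps (Finset.mem_coe.2 hcorner)
    simp only [Set.mem_Icc] at hm
    by_cases hdd : d = ((0 : ℕ), (0 : ℕ))
    · rw [hdd] at hd1; exact hd1
    · have := hmin d hd' hdd; omega
  -- chain lemmas
  have chain0 : ∀ j d, j + d < t0 → T (0, j) + d ≤ T (0, j + d) := by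
    intro j d
    induction d with
    | zero => intro _; simp
    | succ n ih =>
      intro h
      have h1 : T (0, j + n) < T (0, j + (n + 1)) :=
        hrowinc 0 (j + n) (j + (n + 1)) ((hrow0 _).2 (by omega)) ((hrow0 _).2 (by omega))
          (by omega)
      have h2 := ih (by omega)
      omega
  have chain1 : ∀ j d, j + d < r → T (1, j) + d ≤ T (1, j + d) := by
    intro j d
    induction d with
    | zero => intro _; simp
    | succ n ih =>
      intro h
      have h1 : T (1, j + n) < T (1, j + (n + 1)) :=
        hrowinc 1 (j + n) (j + (n + 1)) ((hrow1 _).2 (by omega)) ((hrow1 _).2 (by omega))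
          (by omega)
      have h2 := ih (by omega)
      omega
  -- corner analysis
  obtain ⟨c, hc, c', hc', hTc, hTc', hne1, hne2, hdist⟩ := hss
  have ht2 : 2 ≤ t0 ∧
      ((T (0, t0 - 1) = t0 ∧ T (1, 0) = t0 + 1) ∨
       (T (1, 0) = t0 ∧ T (0, t0 - 1) = t0 + 1)) := by
    obtain ⟨i, j⟩ := c
    obtain ⟨i', j'⟩ := c'
    simp only at hTc hTc' hne1 hne2 hdist
    have hi : i ≤ 1 := htworows _ hc
    have hi' : i' ≤ 1 := htworows _ hc'
    simp only [Nat.dist] at hdist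
    interval_cases i <;> interval_cases i'
    · exact absurd rfl hne1
    · -- i = 0, i' = 1
      have hjt : j < t0 := (hrow0 j).1 hc
      have hjr : j' < r := (hrow1 j').1 hc'
      rcases le_or_gt j j' with hle | hlt
      · have hj0 : j = 0 := by omega
        subst hj0
        rw [hT00] at hTc
        omega
      · have hj' : j' = 0 := by omega
        have hj : j = t0 - 1 := by omega
        subst hj'; subst hj
        exact ⟨by omega, Or.inl ⟨hTc, hTc'⟩⟩
    · -- i = 1, i' = 0
      have hjt : j' < t0 := (hrow0 j').1 hc'
      have hjr : j < r := (hrow1 j).1 hc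
      rcases le_or_gt j' j with hle | hlt
      · have hj0 : j' = 0 := by omega
        subst hj0
        rw [hT00] at hTc'
        omega
      · have hj : j = 0 := by omega
        have hj' : j' = t0 - 1 := by omega
        subst hj; subst hj'
        exact ⟨by omega, Or.inr ⟨hTc, hTc'⟩⟩
    · exact absurd rfl hne1
  obtain ⟨ht2, hcase⟩ := ht2
  have hcornermem : ((0 : ℕ), t0 - 1) ∈ lam.cells := (hrow0 _).2 (by omega)
  have hAne : T (0, t0 - 1) ≠ T (1, 0) := by
    intro h
    have h3 := hinj (Finset.mem_coe.2 hcornermem) (Finset.mem_coe.2 h10mem) h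
    exact absurd (congrArg Prod.fst h3) (by norm_num)
  -- row 0 is determined
  have hrow0val : ∀ j, j < t0 - 1 → T (0, j) = j + 1 := by
    intro j hj
    have hmem2 : ((0 : ℕ), t0 - 2) ∈ lam.cells := (hrow0 _).2 (by omega)
    have hub2 : T (0, t0 - 2) ≤ t0 - 1 := by
      have h1 : T (0, t0 - 2) < T (0, t0 - 1) :=
        hrowinc 0 (t0 - 2) (t0 - 1) hmem2 hcornermem (by omega)
      have h2 : T (0, t0 - 2) ≠ t0 := by
        intro heq
        rcases hcase with ⟨hA, hB⟩ | ⟨hB, hA⟩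
        · omega
        · have h3 := hinj (Finset.mem_coe.2 hmem2) (Finset.mem_coe.2 h10mem) (by omega)
          exact absurd (congrArg Prod.fst h3) (by norm_num)
      rcases hcase with ⟨hA, hB⟩ | ⟨hB, hA⟩ <;> omega
    have hlb := chain0 0 j (by omega)
    rw [hT00] at hlb
    simp only [Nat.zero_add] at hlb
    have hub := chain0 j (t0 - 2 - j) (by omega)
    have heq : j + (t0 - 2 - j) = t0 - 2 := by omega
    rw [heq] at hub
    omega
  -- row 1 is determined
  have hrow1val : ∀ j, 1 ≤ j → j < r → T (1, j) = t0 + 1 + j := by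
    intro j hj1 hjr
    have hmem1 : ((1 : ℕ), (1 : ℕ)) ∈ lam.cells := (hrow1 _).2 (by omega)
    have hlb1 : t0 + 2 ≤ T (1, 1) := by
      have h1 : T (1, 0) < T (1, 1) := hrowinc 1 0 1 h10mem hmem1 one_pos
      have h2 : T (1, 1) ≠ t0 + 1 := by
        intro heq
        rcases hcase with ⟨hA, hB⟩ | ⟨hB, hA⟩
        · omega
        · have h3 := hinj (Finset.mem_coe.2 hmem1) (Finset.mem_coe.2 hcornermem) (by omega)
          exact absurd (congrArg Prod.fst h3) (by norm_num)
      rcases hcase with ⟨hA, hB⟩ | ⟨hB, hA⟩ <;> omega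
    have hlb := chain1 1 (j - 1) (by omega)
    have heq : 1 + (j - 1) = j := by omega
    rw [heq] at hlb
    have hmemr : ((1 : ℕ), r - 1) ∈ lam.cells := (hrow1 _).2 (by omega)
    have hubg : T (1, r - 1) ≤ g := by
      have := hmaps (Finset.mem_coe.2 hmemr)
      simp only [Set.mem_Icc] at this
      exact this.2
    have hub := chain1 j (r - 1 - j) (by omega)
    have heq2 : j + (r - 1 - j) = r - 1 := by omega
    rw [heq2] at hub
    omega
  -- conclude
  rcases hcase with ⟨hA, hB⟩ | ⟨hB, hA⟩
  · left
    funext d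
    by_cases hd : d ∈ lam.cells
    · simp only [if_pos hd]
      obtain ⟨i, j⟩ := d
      have hi : i ≤ 1 := htworows _ hd
      interval_cases i
      · show T (0, j) = j + 1
        by_cases hjt : j = t0 - 1
        · subst hjt; omega
        · exact hrow0val j (by have := (hrow0 j).1 hd; omega)
      · show T (1, j) = t0 + 1 + j
        rcases Nat.eq_zero_or_pos j with rfl | hj
        · omega
        · exact hrow1val j hj ((hrow1 j).1 hd)
    · rw [hzero d hd, if_neg hd]
  · right
    funext d
    by_cases hd0 : d = ((0 : ℕ), t0 - 1)
    · rw [if_pos hd0, hd0]; exact hA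
    · rw [if_neg hd0]
      by_cases hd1 : d = ((1 : ℕ), (0 : ℕ))
      · rw [if_pos hd1, hd1]; exact hB
      · rw [if_neg hd1]
        by_cases hd : d ∈ lam.cells
        · simp only [if_pos hd]
          obtain ⟨i, j⟩ := d
          have hi : i ≤ 1 := htworows _ hd
          interval_cases i
          · show T (0, j) = j + 1
            have hjt : j ≠ t0 - 1 := fun h => hd0 (by rw [h])
            exact hrow0val j (by have := (hrow0 j).1 hd; omega)
          · show T (1, j) = t0 + 1 + j
            have hj0 : j ≠ 0 := fun h => hd1 (by rw [h])
            exact hrow1val j (by omega) ((hrow1 j).1 hd)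
        · rw [hzero d hd, if_neg hd]
end

section
/- Let α, β be ramification sequences with ρ(g,r,d,α,β) = 0, and suppose additionally r ≥ 2 and α_r + β_r + g − d + r > r + 1. Then the number N(g,r,d,α,β) of standard Young tableaux of the skew diagram σ(g,r,d,α,β) satisfies N(g,r,d,α,β) ≥ 231. -/
open Finset
open scoped Classical

/-- Cells of the skew diagram `σ(g,r,d,α,β)`: row `i` (for `0 ≤ i ≤ r`, top to
bottom) occupies the columns `[α_0 − α_{r−i}, α_0 + (g−d+r) + β_i)`, so it has
length `α_{r−i} + (g−d+r) + β_i`. -/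
def sigmaCells (g r d : ℕ) (α β : ℕ → ℕ) : Finset (ℕ × ℕ) :=
  (Finset.range (r + 1)).biUnion fun i =>
    (Finset.Ico (α 0 - α (r - i)) (α 0 + (g + r - d) + β i)).image fun j => ((i, j) : ℕ × ℕ)


namespace SYTAux

structure StrictOrd (lt : ℕ × ℕ → ℕ × ℕ → Prop) : Prop where
  irrefl : ∀ c, ¬ lt c c
  trans : ∀ a b c, lt a b → lt b c → lt a c
  trichot : ∀ a b, a ≠ b → lt a b ∨ lt b a

noncomputable def rnk (lt : ℕ × ℕ → ℕ × ℕ → Prop) (Q : Finset (ℕ × ℕ)) (c : ℕ × ℕ) : ℕ :=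
  1 + (Q.filter fun c' => lt c' c).card

lemma colLt_SO : StrictOrd colLt := by
  constructor
  · intro c; simp [colLt]
  · intro a b c h1 h2; unfold colLt at *; omega
  · intro a b hne
    have h : a.1 ≠ b.1 ∨ a.2 ≠ b.2 := by
      by_contra h; push_neg at h; exact hne (Prod.ext h.1 h.2)
    unfold colLt; omega

lemma rowLt_SO : StrictOrd rowLt := by
  constructor
  · intro c; simp [rowLt]
  · intro a b c h1 h2; unfold rowLt at *; omega
  · intro a b hne
    have h : a.1 ≠ b.1 ∨ a.2 ≠ b.2 := by
      by_contra h; push_neg at h; exact hne (Prod.ext h.1 h.2)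
    unfold rowLt; omega

variable {lt : ℕ × ℕ → ℕ × ℕ → Prop}

lemma rnk_lt (h : StrictOrd lt) {Q : Finset (ℕ × ℕ)} {c c' : ℕ × ℕ}
    (hc : c ∈ Q) (hlt : lt c c') : rnk lt Q c < rnk lt Q c' := by
  have hsub : (Q.filter fun x => lt x c) ⊆ (Q.filter fun x => lt x c') := by
    intro x hx
    simp only [Finset.mem_filter] at hx ⊢
    exact ⟨hx.1, h.trans _ _ _ hx.2 hlt⟩
  have hss : (Q.filter fun x => lt x c) ⊂ (Q.filter fun x => lt x c') := by
    rw [Finset.ssubset_iff_of_subset hsub]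
    refine ⟨c, by simp [Finset.mem_filter, hc, hlt], by simp [Finset.mem_filter, h.irrefl c]⟩
  have := Finset.card_lt_card hss
  unfold rnk; omega

lemma rnk_injOn (h : StrictOrd lt) (Q : Finset (ℕ × ℕ)) : Set.InjOn (rnk lt Q) Q := by
  intro a ha b hb heq
  by_contra hne
  rcases h.trichot a b hne with hl | hl
  · exact absurd heq (Nat.ne_of_lt (rnk_lt h (Finset.mem_coe.mp ha) hl))
  · exact absurd heq.symm (Nat.ne_of_lt (rnk_lt h (Finset.mem_coe.mp hb) hl))

lemma rnk_mem (h : StrictOrd lt) {Q : Finset (ℕ × ℕ)} {c : ℕ × ℕ} (hc : c ∈ Q) :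
    rnk lt Q c ∈ Finset.Icc 1 Q.card := by
  have hsub : (Q.filter fun x => lt x c) ⊆ Q.erase c := by
    intro x hx
    simp only [Finset.mem_filter] at hx
    refine Finset.mem_erase.mpr ⟨?_, hx.1⟩
    rintro rfl; exact h.irrefl _ hx.2
  have h1 := Finset.card_le_card hsub
  rw [Finset.card_erase_of_mem hc] at h1
  have h2 : 1 ≤ Q.card := Finset.card_pos.mpr ⟨c, hc⟩
  simp only [Finset.mem_Icc, rnk]
  omega

lemma rnk_image (h : StrictOrd lt) (Q : Finset (ℕ × ℕ)) :
    Q.image (rnk lt Q) = Finset.Icc 1 Q.card := by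
  apply Finset.eq_of_subset_of_card_le
  · intro x hx
    simp only [Finset.mem_image] at hx
    obtain ⟨c, hc, rfl⟩ := hx
    exact rnk_mem h hc
  · rw [Finset.card_image_of_injOn (rnk_injOn h Q), Nat.card_Icc]
    omega

lemma isSYT_mk (cells : Finset (ℕ × ℕ)) (g : ℕ) (T : ℕ × ℕ → ℕ)
    (hcard : cells.card = g)
    (h0 : ∀ c ∉ cells, T c = 0)
    (himg : cells.image T = Finset.Icc 1 g)
    (hrow : ∀ c ∈ cells, ∀ c' ∈ cells, c.1 = c'.1 → c.2 < c'.2 → T c < T c')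
    (hcol : ∀ c ∈ cells, ∀ c' ∈ cells, c.2 = c'.2 → c.1 < c'.1 → T c < T c') :
    IsSYT cells g T := by
  have himg' : T '' (cells : Set (ℕ × ℕ)) = Set.Icc 1 g := by
    rw [← Finset.coe_image, himg, Finset.coe_Icc]
  refine ⟨h0, ⟨?_, ?_, ?_⟩, ?_, ?_⟩
  · intro c hc; rw [← himg']; exact Set.mem_image_of_mem T hc
  · apply Finset.injOn_of_card_image_eq
    rw [himg, Nat.card_Icc, hcard]; omega
  · rw [Set.SurjOn, himg']
  · intro i j j' h1 h2 hlt; exact hrow _ h1 _ h2 rfl hlt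
  · intro i i' j h1 h2 hlt; exact hcol _ h1 _ h2 rfl hlt

lemma image_eq_of_isSYT {cells : Finset (ℕ × ℕ)} {g : ℕ} {T : ℕ × ℕ → ℕ}
    (h : IsSYT cells g T) : cells.image T = Finset.Icc 1 g := by
  apply Finset.coe_injective
  rw [Finset.coe_image, Finset.coe_Icc, h.2.1.image_eq]

lemma syt_finite (cells : Finset (ℕ × ℕ)) (g : ℕ) :
    Finite {T : ℕ × ℕ → ℕ // IsSYT cells g T} := by
  have hb : ∀ (T : {T : ℕ × ℕ → ℕ // IsSYT cells g T}) (c : ℕ × ℕ), c ∈ cells →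
      T.1 c < g + 1 := by
    intro T c hc
    have := T.2.2.1.1 (Finset.mem_coe.mpr hc)
    rw [Set.mem_Icc] at this
    omega
  apply Finite.of_injective
    (fun T : {T : ℕ × ℕ → ℕ // IsSYT cells g T} =>
      (fun c : cells => (⟨T.1 c.1, hb T c.1 c.2⟩ : Fin (g + 1))))
  intro T T' heq
  apply Subtype.ext; funext c
  by_cases hc : c ∈ cells
  · have := congrFun heq ⟨c, hc⟩
    exact congrArg Fin.val this
  · rw [T.2.1 c hc, T'.2.1 c hc]

lemma image_shift (Q : Finset (ℕ × ℕ)) (f : ℕ × ℕ → ℕ) (a b k : ℕ)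
    (hf : Q.image f = Finset.Icc a b) :
    Q.image (fun c => k + f c) = Finset.Icc (k + a) (k + b) := by
  have h1 : Q.image (fun c => k + f c) = (Q.image f).image (fun x => k + x) := by
    rw [Finset.image_image]; rfl
  rw [h1, hf]
  ext x
  simp only [Finset.mem_image, Finset.mem_Icc]
  constructor
  · rintro ⟨y, hy, rfl⟩; omega
  · intro hx; exact ⟨x - k, by omega, by omega⟩

lemma mem_sigma {g r d : ℕ} {α β : ℕ → ℕ} {i j : ℕ} :
    (i, j) ∈ sigmaCells g r d α β ↔
      i ≤ r ∧ α 0 - α (r - i) ≤ j ∧ j < α 0 + (g + r - d) + β i := by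
  simp only [sigmaCells, Finset.mem_biUnion, Finset.mem_range, Finset.mem_image,
    Finset.mem_Ico, Prod.mk.injEq, Nat.lt_succ_iff]
  constructor
  · rintro ⟨i', hi', j', hj', rfl, rfl⟩; exact ⟨hi', hj'⟩
  · rintro ⟨hi, hj⟩; exact ⟨i, hi, j, hj, rfl, rfl⟩

lemma card_sigma (g r d : ℕ) (α β : ℕ → ℕ) (hα : ∀ i, i ≤ r → α i ≤ α 0) :
    (sigmaCells g r d α β).card
      = ∑ i ∈ Finset.range (r + 1), (α (r - i) + (g + r - d) + β i) := by
  rw [sigmaCells, Finset.card_biUnion]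
  · apply Finset.sum_congr rfl
    intro i hi
    rw [Finset.card_image_of_injective _ (fun a b hab => by simpa using hab), Nat.card_Ico]
    have := hα (r - i) (Nat.sub_le r i)
    omega
  · intro x hx y hy hxy
    simp only [Finset.disjoint_left]
    rintro c hc hc'
    simp only [Finset.mem_image] at hc hc'
    obtain ⟨a, _, rfl⟩ := hc
    obtain ⟨b, _, h⟩ := hc'
    injection h with h1 h2
    exact hxy h1.symm

def D0 : Finset (ℕ × ℕ) := Finset.range 3 ×ˢ Finset.range 4

lemma mem_D0 {c : ℕ × ℕ} : c ∈ D0 ↔ c.1 < 3 ∧ c.2 < 4 := by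
  simp [D0, Finset.mem_product]

def ofList (l : List ℕ) : ℕ × ℕ → ℕ :=
  fun c => if c.1 < 3 ∧ c.2 < 4 then l.getD (4 * c.1 + c.2) 0 else 0

def tabs : List (List ℕ) := [
[1, 2, 3, 4, 5, 6, 7, 8, 9, 10, 11, 12],
[1, 2, 3, 4, 5, 6, 7, 9, 8, 10, 11, 12],
[1, 2, 3, 4, 5, 6, 7, 10, 8, 9, 11, 12],
[1, 2, 3, 4, 5, 6, 7, 11, 8, 9, 10, 12],
[1, 2, 3, 4, 5, 6, 8, 9, 7, 10, 11, 12],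
[1, 2, 3, 4, 5, 6, 8, 10, 7, 9, 11, 12],
[1, 2, 3, 4, 5, 6, 8, 11, 7, 9, 10, 12],
[1, 2, 3, 4, 5, 6, 9, 10, 7, 8, 11, 12],
[1, 2, 3, 4, 5, 6, 9, 11, 7, 8, 10, 12],
[1, 2, 3, 4, 5, 7, 8, 9, 6, 10, 11, 12],
[1, 2, 3, 4, 5, 7, 8, 10, 6, 9, 11, 12],
[1, 2, 3, 4, 5, 7, 8, 11, 6, 9, 10, 12],
[1, 2, 3, 4, 5, 7, 9, 10, 6, 8, 11, 12],
[1, 2, 3, 4, 5, 7, 9, 11, 6, 8, 10, 12],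
[1, 2, 3, 5, 4, 6, 7, 8, 9, 10, 11, 12],
[1, 2, 3, 5, 4, 6, 7, 9, 8, 10, 11, 12],
[1, 2, 3, 5, 4, 6, 7, 10, 8, 9, 11, 12],
[1, 2, 3, 5, 4, 6, 7, 11, 8, 9, 10, 12],
[1, 2, 3, 5, 4, 6, 8, 9, 7, 10, 11, 12],
[1, 2, 3, 5, 4, 6, 8, 10, 7, 9, 11, 12],
[1, 2, 3, 5, 4, 6, 8, 11, 7, 9, 10, 12],
[1, 2, 3, 5, 4, 6, 9, 10, 7, 8, 11, 12],
[1, 2, 3, 5, 4, 6, 9, 11, 7, 8, 10, 12],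
[1, 2, 3, 5, 4, 7, 8, 9, 6, 10, 11, 12],
[1, 2, 3, 5, 4, 7, 8, 10, 6, 9, 11, 12],
[1, 2, 3, 5, 4, 7, 8, 11, 6, 9, 10, 12],
[1, 2, 3, 5, 4, 7, 9, 10, 6, 8, 11, 12],
[1, 2, 3, 5, 4, 7, 9, 11, 6, 8, 10, 12],
[1, 2, 3, 6, 4, 5, 7, 8, 9, 10, 11, 12],
[1, 2, 3, 6, 4, 5, 7, 9, 8, 10, 11, 12],
[1, 2, 3, 6, 4, 5, 7, 10, 8, 9, 11, 12],
[1, 2, 3, 6, 4, 5, 7, 11, 8, 9, 10, 12],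
[1, 2, 3, 6, 4, 5, 8, 9, 7, 10, 11, 12],
[1, 2, 3, 6, 4, 5, 8, 10, 7, 9, 11, 12],
[1, 2, 3, 6, 4, 5, 8, 11, 7, 9, 10, 12],
[1, 2, 3, 6, 4, 5, 9, 10, 7, 8, 11, 12],
[1, 2, 3, 6, 4, 5, 9, 11, 7, 8, 10, 12],
[1, 2, 3, 6, 4, 7, 8, 9, 5, 10, 11, 12],
[1, 2, 3, 6, 4, 7, 8, 10, 5, 9, 11, 12],
[1, 2, 3, 6, 4, 7, 8, 11, 5, 9, 10, 12],
[1, 2, 3, 6, 4, 7, 9, 10, 5, 8, 11, 12],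
[1, 2, 3, 6, 4, 7, 9, 11, 5, 8, 10, 12],
[1, 2, 3, 7, 4, 5, 6, 8, 9, 10, 11, 12],
[1, 2, 3, 7, 4, 5, 6, 9, 8, 10, 11, 12],
[1, 2, 3, 7, 4, 5, 6, 10, 8, 9, 11, 12],
[1, 2, 3, 7, 4, 5, 6, 11, 8, 9, 10, 12],
[1, 2, 3, 7, 4, 5, 8, 9, 6, 10, 11, 12],
[1, 2, 3, 7, 4, 5, 8, 10, 6, 9, 11, 12],
[1, 2, 3, 7, 4, 5, 8, 11, 6, 9, 10, 12],
[1, 2, 3, 7, 4, 5, 9, 10, 6, 8, 11, 12],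
[1, 2, 3, 7, 4, 5, 9, 11, 6, 8, 10, 12],
[1, 2, 3, 7, 4, 6, 8, 9, 5, 10, 11, 12],
[1, 2, 3, 7, 4, 6, 8, 10, 5, 9, 11, 12],
[1, 2, 3, 7, 4, 6, 8, 11, 5, 9, 10, 12],
[1, 2, 3, 7, 4, 6, 9, 10, 5, 8, 11, 12],
[1, 2, 3, 7, 4, 6, 9, 11, 5, 8, 10, 12],
[1, 2, 3, 8, 4, 5, 6, 9, 7, 10, 11, 12],
[1, 2, 3, 8, 4, 5, 6, 10, 7, 9, 11, 12],
[1, 2, 3, 8, 4, 5, 6, 11, 7, 9, 10, 12],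
[1, 2, 3, 8, 4, 5, 7, 9, 6, 10, 11, 12],
[1, 2, 3, 8, 4, 5, 7, 10, 6, 9, 11, 12],
[1, 2, 3, 8, 4, 5, 7, 11, 6, 9, 10, 12],
[1, 2, 3, 8, 4, 5, 9, 10, 6, 7, 11, 12],
[1, 2, 3, 8, 4, 5, 9, 11, 6, 7, 10, 12],
[1, 2, 3, 8, 4, 6, 7, 9, 5, 10, 11, 12],
[1, 2, 3, 8, 4, 6, 7, 10, 5, 9, 11, 12],
[1, 2, 3, 8, 4, 6, 7, 11, 5, 9, 10, 12],
[1, 2, 3, 8, 4, 6, 9, 10, 5, 7, 11, 12],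
[1, 2, 3, 8, 4, 6, 9, 11, 5, 7, 10, 12],
[1, 2, 3, 9, 4, 5, 6, 10, 7, 8, 11, 12],
[1, 2, 3, 9, 4, 5, 6, 11, 7, 8, 10, 12],
[1, 2, 3, 9, 4, 5, 7, 10, 6, 8, 11, 12],
[1, 2, 3, 9, 4, 5, 7, 11, 6, 8, 10, 12],
[1, 2, 3, 9, 4, 5, 8, 10, 6, 7, 11, 12],
[1, 2, 3, 9, 4, 5, 8, 11, 6, 7, 10, 12],
[1, 2, 3, 9, 4, 6, 7, 10, 5, 8, 11, 12],
[1, 2, 3, 9, 4, 6, 7, 11, 5, 8, 10, 12],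
[1, 2, 3, 9, 4, 6, 8, 10, 5, 7, 11, 12],
[1, 2, 3, 9, 4, 6, 8, 11, 5, 7, 10, 12],
[1, 2, 3, 10, 4, 5, 6, 11, 7, 8, 9, 12],
[1, 2, 3, 10, 4, 5, 7, 11, 6, 8, 9, 12],
[1, 2, 3, 10, 4, 5, 8, 11, 6, 7, 9, 12],
[1, 2, 3, 10, 4, 6, 7, 11, 5, 8, 9, 12],
[1, 2, 3, 10, 4, 6, 8, 11, 5, 7, 9, 12],
[1, 2, 4, 5, 3, 6, 7, 8, 9, 10, 11, 12],
[1, 2, 4, 5, 3, 6, 7, 9, 8, 10, 11, 12],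
[1, 2, 4, 5, 3, 6, 7, 10, 8, 9, 11, 12],
[1, 2, 4, 5, 3, 6, 7, 11, 8, 9, 10, 12],
[1, 2, 4, 5, 3, 6, 8, 9, 7, 10, 11, 12],
[1, 2, 4, 5, 3, 6, 8, 10, 7, 9, 11, 12],
[1, 2, 4, 5, 3, 6, 8, 11, 7, 9, 10, 12],
[1, 2, 4, 5, 3, 6, 9, 10, 7, 8, 11, 12],
[1, 2, 4, 5, 3, 6, 9, 11, 7, 8, 10, 12],
[1, 2, 4, 5, 3, 7, 8, 9, 6, 10, 11, 12],
[1, 2, 4, 5, 3, 7, 8, 10, 6, 9, 11, 12],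
[1, 2, 4, 5, 3, 7, 8, 11, 6, 9, 10, 12],
[1, 2, 4, 5, 3, 7, 9, 10, 6, 8, 11, 12],
[1, 2, 4, 5, 3, 7, 9, 11, 6, 8, 10, 12],
[1, 2, 4, 6, 3, 5, 7, 8, 9, 10, 11, 12],
[1, 2, 4, 6, 3, 5, 7, 9, 8, 10, 11, 12],
[1, 2, 4, 6, 3, 5, 7, 10, 8, 9, 11, 12],
[1, 2, 4, 6, 3, 5, 7, 11, 8, 9, 10, 12],
[1, 2, 4, 6, 3, 5, 8, 9, 7, 10, 11, 12],
[1, 2, 4, 6, 3, 5, 8, 10, 7, 9, 11, 12],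
[1, 2, 4, 6, 3, 5, 8, 11, 7, 9, 10, 12],
[1, 2, 4, 6, 3, 5, 9, 10, 7, 8, 11, 12],
[1, 2, 4, 6, 3, 5, 9, 11, 7, 8, 10, 12],
[1, 2, 4, 6, 3, 7, 8, 9, 5, 10, 11, 12],
[1, 2, 4, 6, 3, 7, 8, 10, 5, 9, 11, 12],
[1, 2, 4, 6, 3, 7, 8, 11, 5, 9, 10, 12],
[1, 2, 4, 6, 3, 7, 9, 10, 5, 8, 11, 12],
[1, 2, 4, 6, 3, 7, 9, 11, 5, 8, 10, 12],
[1, 2, 4, 7, 3, 5, 6, 8, 9, 10, 11, 12],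
[1, 2, 4, 7, 3, 5, 6, 9, 8, 10, 11, 12],
[1, 2, 4, 7, 3, 5, 6, 10, 8, 9, 11, 12],
[1, 2, 4, 7, 3, 5, 6, 11, 8, 9, 10, 12],
[1, 2, 4, 7, 3, 5, 8, 9, 6, 10, 11, 12],
[1, 2, 4, 7, 3, 5, 8, 10, 6, 9, 11, 12],
[1, 2, 4, 7, 3, 5, 8, 11, 6, 9, 10, 12],
[1, 2, 4, 7, 3, 5, 9, 10, 6, 8, 11, 12],
[1, 2, 4, 7, 3, 5, 9, 11, 6, 8, 10, 12],
[1, 2, 4, 7, 3, 6, 8, 9, 5, 10, 11, 12],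
[1, 2, 4, 7, 3, 6, 8, 10, 5, 9, 11, 12],
[1, 2, 4, 7, 3, 6, 8, 11, 5, 9, 10, 12],
[1, 2, 4, 7, 3, 6, 9, 10, 5, 8, 11, 12],
[1, 2, 4, 7, 3, 6, 9, 11, 5, 8, 10, 12],
[1, 2, 4, 8, 3, 5, 6, 9, 7, 10, 11, 12],
[1, 2, 4, 8, 3, 5, 6, 10, 7, 9, 11, 12],
[1, 2, 4, 8, 3, 5, 6, 11, 7, 9, 10, 12],
[1, 2, 4, 8, 3, 5, 7, 9, 6, 10, 11, 12],
[1, 2, 4, 8, 3, 5, 7, 10, 6, 9, 11, 12],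
[1, 2, 4, 8, 3, 5, 7, 11, 6, 9, 10, 12],
[1, 2, 4, 8, 3, 5, 9, 10, 6, 7, 11, 12],
[1, 2, 4, 8, 3, 5, 9, 11, 6, 7, 10, 12],
[1, 2, 4, 8, 3, 6, 7, 9, 5, 10, 11, 12],
[1, 2, 4, 8, 3, 6, 7, 10, 5, 9, 11, 12],
[1, 2, 4, 8, 3, 6, 7, 11, 5, 9, 10, 12],
[1, 2, 4, 8, 3, 6, 9, 10, 5, 7, 11, 12],
[1, 2, 4, 8, 3, 6, 9, 11, 5, 7, 10, 12],
[1, 2, 4, 9, 3, 5, 6, 10, 7, 8, 11, 12],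
[1, 2, 4, 9, 3, 5, 6, 11, 7, 8, 10, 12],
[1, 2, 4, 9, 3, 5, 7, 10, 6, 8, 11, 12],
[1, 2, 4, 9, 3, 5, 7, 11, 6, 8, 10, 12],
[1, 2, 4, 9, 3, 5, 8, 10, 6, 7, 11, 12],
[1, 2, 4, 9, 3, 5, 8, 11, 6, 7, 10, 12],
[1, 2, 4, 9, 3, 6, 7, 10, 5, 8, 11, 12],
[1, 2, 4, 9, 3, 6, 7, 11, 5, 8, 10, 12],
[1, 2, 4, 9, 3, 6, 8, 10, 5, 7, 11, 12],
[1, 2, 4, 9, 3, 6, 8, 11, 5, 7, 10, 12],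
[1, 2, 4, 10, 3, 5, 6, 11, 7, 8, 9, 12],
[1, 2, 4, 10, 3, 5, 7, 11, 6, 8, 9, 12],
[1, 2, 4, 10, 3, 5, 8, 11, 6, 7, 9, 12],
[1, 2, 4, 10, 3, 6, 7, 11, 5, 8, 9, 12],
[1, 2, 4, 10, 3, 6, 8, 11, 5, 7, 9, 12],
[1, 2, 5, 6, 3, 4, 7, 8, 9, 10, 11, 12],
[1, 2, 5, 6, 3, 4, 7, 9, 8, 10, 11, 12],
[1, 2, 5, 6, 3, 4, 7, 10, 8, 9, 11, 12],
[1, 2, 5, 6, 3, 4, 7, 11, 8, 9, 10, 12],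
[1, 2, 5, 6, 3, 4, 8, 9, 7, 10, 11, 12],
[1, 2, 5, 6, 3, 4, 8, 10, 7, 9, 11, 12],
[1, 2, 5, 6, 3, 4, 8, 11, 7, 9, 10, 12],
[1, 2, 5, 6, 3, 4, 9, 10, 7, 8, 11, 12],
[1, 2, 5, 6, 3, 4, 9, 11, 7, 8, 10, 12],
[1, 2, 5, 6, 3, 7, 8, 9, 4, 10, 11, 12],
[1, 2, 5, 6, 3, 7, 8, 10, 4, 9, 11, 12],
[1, 2, 5, 6, 3, 7, 8, 11, 4, 9, 10, 12],
[1, 2, 5, 6, 3, 7, 9, 10, 4, 8, 11, 12],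
[1, 2, 5, 6, 3, 7, 9, 11, 4, 8, 10, 12],
[1, 2, 5, 7, 3, 4, 6, 8, 9, 10, 11, 12],
[1, 2, 5, 7, 3, 4, 6, 9, 8, 10, 11, 12],
[1, 2, 5, 7, 3, 4, 6, 10, 8, 9, 11, 12],
[1, 2, 5, 7, 3, 4, 6, 11, 8, 9, 10, 12],
[1, 2, 5, 7, 3, 4, 8, 9, 6, 10, 11, 12],
[1, 2, 5, 7, 3, 4, 8, 10, 6, 9, 11, 12],
[1, 2, 5, 7, 3, 4, 8, 11, 6, 9, 10, 12],
[1, 2, 5, 7, 3, 4, 9, 10, 6, 8, 11, 12],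
[1, 2, 5, 7, 3, 4, 9, 11, 6, 8, 10, 12],
[1, 2, 5, 7, 3, 6, 8, 9, 4, 10, 11, 12],
[1, 2, 5, 7, 3, 6, 8, 10, 4, 9, 11, 12],
[1, 2, 5, 7, 3, 6, 8, 11, 4, 9, 10, 12],
[1, 2, 5, 7, 3, 6, 9, 10, 4, 8, 11, 12],
[1, 2, 5, 7, 3, 6, 9, 11, 4, 8, 10, 12],
[1, 2, 5, 8, 3, 4, 6, 9, 7, 10, 11, 12],
[1, 2, 5, 8, 3, 4, 6, 10, 7, 9, 11, 12],
[1, 2, 5, 8, 3, 4, 6, 11, 7, 9, 10, 12],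
[1, 2, 5, 8, 3, 4, 7, 9, 6, 10, 11, 12],
[1, 2, 5, 8, 3, 4, 7, 10, 6, 9, 11, 12],
[1, 2, 5, 8, 3, 4, 7, 11, 6, 9, 10, 12],
[1, 2, 5, 8, 3, 4, 9, 10, 6, 7, 11, 12],
[1, 2, 5, 8, 3, 4, 9, 11, 6, 7, 10, 12],
[1, 2, 5, 8, 3, 6, 7, 9, 4, 10, 11, 12],
[1, 2, 5, 8, 3, 6, 7, 10, 4, 9, 11, 12],
[1, 2, 5, 8, 3, 6, 7, 11, 4, 9, 10, 12],
[1, 2, 5, 8, 3, 6, 9, 10, 4, 7, 11, 12],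
[1, 2, 5, 8, 3, 6, 9, 11, 4, 7, 10, 12],
[1, 2, 5, 9, 3, 4, 6, 10, 7, 8, 11, 12],
[1, 2, 5, 9, 3, 4, 6, 11, 7, 8, 10, 12],
[1, 2, 5, 9, 3, 4, 7, 10, 6, 8, 11, 12],
[1, 2, 5, 9, 3, 4, 7, 11, 6, 8, 10, 12],
[1, 2, 5, 9, 3, 4, 8, 10, 6, 7, 11, 12],
[1, 2, 5, 9, 3, 4, 8, 11, 6, 7, 10, 12],
[1, 2, 5, 9, 3, 6, 7, 10, 4, 8, 11, 12],
[1, 2, 5, 9, 3, 6, 7, 11, 4, 8, 10, 12],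
[1, 2, 5, 9, 3, 6, 8, 10, 4, 7, 11, 12],
[1, 2, 5, 9, 3, 6, 8, 11, 4, 7, 10, 12],
[1, 2, 5, 10, 3, 4, 6, 11, 7, 8, 9, 12],
[1, 2, 5, 10, 3, 4, 7, 11, 6, 8, 9, 12],
[1, 2, 5, 10, 3, 4, 8, 11, 6, 7, 9, 12],
[1, 2, 5, 10, 3, 6, 7, 11, 4, 8, 9, 12],
[1, 2, 5, 10, 3, 6, 8, 11, 4, 7, 9, 12],
[1, 2, 6, 7, 3, 4, 8, 9, 5, 10, 11, 12],
[1, 2, 6, 7, 3, 4, 8, 10, 5, 9, 11, 12],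
[1, 2, 6, 7, 3, 4, 8, 11, 5, 9, 10, 12],
[1, 2, 6, 7, 3, 4, 9, 10, 5, 8, 11, 12],
[1, 2, 6, 7, 3, 4, 9, 11, 5, 8, 10, 12],
[1, 2, 6, 7, 3, 5, 8, 9, 4, 10, 11, 12],
[1, 2, 6, 7, 3, 5, 8, 10, 4, 9, 11, 12],
[1, 2, 6, 7, 3, 5, 8, 11, 4, 9, 10, 12],
[1, 2, 6, 7, 3, 5, 9, 10, 4, 8, 11, 12],
[1, 2, 6, 7, 3, 5, 9, 11, 4, 8, 10, 12],
[1, 2, 6, 8, 3, 4, 7, 9, 5, 10, 11, 12],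
[1, 2, 6, 8, 3, 4, 7, 10, 5, 9, 11, 12],
[1, 2, 6, 8, 3, 4, 7, 11, 5, 9, 10, 12],
[1, 2, 6, 8, 3, 4, 9, 10, 5, 7, 11, 12],
[1, 2, 6, 8, 3, 4, 9, 11, 5, 7, 10, 12],
[1, 2, 6, 8, 3, 5, 7, 9, 4, 10, 11, 12],
[1, 2, 6, 8, 3, 5, 7, 10, 4, 9, 11, 12],
[1, 2, 6, 8, 3, 5, 7, 11, 4, 9, 10, 12],
[1, 2, 6, 8, 3, 5, 9, 10, 4, 7, 11, 12],
[1, 2, 6, 8, 3, 5, 9, 11, 4, 7, 10, 12],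
[1, 2, 6, 9, 3, 4, 7, 10, 5, 8, 11, 12]
]

lemma tabs_length : tabs.length = 231 := by rfl

set_option maxRecDepth 100000 in
set_option maxHeartbeats 2000000 in
lemma tabs_nodup : tabs.Nodup := by decide

set_option maxRecDepth 100000 in
set_option maxHeartbeats 2000000 in
lemma tabs_len12 : ∀ l ∈ tabs, l.length = 12 := by decide

set_option maxRecDepth 100000 in
set_option maxHeartbeats 4000000 in
lemma tabs_syt : ∀ l ∈ tabs, IsSYT D0 12 (ofList l) := by
  have key : ∀ l ∈ tabs,
      D0.image (ofList l) = Finset.Icc 1 12 ∧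
      (∀ c ∈ D0, ∀ c' ∈ D0, c.1 = c'.1 → c.2 < c'.2 → ofList l c < ofList l c') ∧
      (∀ c ∈ D0, ∀ c' ∈ D0, c.2 = c'.2 → c.1 < c'.1 → ofList l c < ofList l c') := by decide
  intro l hl
  obtain ⟨h1, h2, h3⟩ := key l hl
  refine isSYT_mk _ _ _ (by decide) ?_ h1 h2 h3
  intro c hc
  rw [mem_D0] at hc
  exact if_neg hc

lemma ofList_inj {l l' : List ℕ} (h12 : l.length = 12) (h12' : l'.length = 12)
    (h : ofList l = ofList l') : l = l' := by
  apply List.ext_getElem (by omega)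
  intro n hn hn'
  have hlt : n < 12 := by omega
  have h1 : n / 4 < 3 := by omega
  have h2 : n % 4 < 4 := by omega
  have key := congrFun h (n / 4, n % 4)
  simp only [ofList] at key
  rw [if_pos ⟨h1, h2⟩, if_pos ⟨h1, h2⟩] at key
  have hd : 4 * (n / 4) + n % 4 = n := by omega
  rw [hd, List.getD_eq_getElem l 0 (by omega), List.getD_eq_getElem l' 0 (by omega)] at key
  exact key

lemma card_D0_syt : 231 ≤ Nat.card {T : ℕ × ℕ → ℕ // IsSYT D0 12 T} := by
  have : Finite {T : ℕ × ℕ → ℕ // IsSYT D0 12 T} := syt_finite _ _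
  have hlen : ∀ k : Fin 231, (k : ℕ) < tabs.length := by
    intro k; rw [tabs_length]; exact k.2
  calc (231 : ℕ) = Nat.card (Fin 231) := by simp
    _ ≤ _ := by
        apply Nat.card_le_card_of_injective
          (fun k : Fin 231 => (⟨ofList (tabs.get ⟨k, hlen k⟩),
            tabs_syt _ (tabs.get_mem _)⟩ : {T : ℕ × ℕ → ℕ // IsSYT D0 12 T}))
        intro k k' heq
        have h1 : ofList (tabs.get ⟨k, hlen k⟩) = ofList (tabs.get ⟨k', hlen k'⟩) :=
          congrArg Subtype.val heq
        have h2 : tabs.get ⟨k, hlen k⟩ = tabs.get ⟨k', hlen k'⟩ :=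
          ofList_inj (tabs_len12 _ (tabs.get_mem _)) (tabs_len12 _ (tabs.get_mem _)) h1
        have h3 := (List.Nodup.get_inj_iff tabs_nodup).mp h2
        exact Fin.ext (congrArg Fin.val h3)

end SYTAux

/-- If `ρ(g,r,d,α,β) = 0`, `r ≥ 2` and `α_r + β_r + g − d + r > r + 1`, then the
number `N(g,r,d,α,β)` of standard Young tableaux of `σ(g,r,d,α,β)` is at least
`231`. -/
theorem stmt_15 (g r d : ℕ) (α β : ℕ → ℕ)
    (hd : d ≤ g + r)
    (hα : ∀ i j, i ≤ j → j ≤ r → α j ≤ α i)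
    (hβ : ∀ i j, i ≤ j → j ≤ r → β j ≤ β i)
    (hα0 : α 0 + r ≤ d) (hβ0 : β 0 + r ≤ d)
    (hρ : g = (r + 1) * (g + r - d) + (∑ i ∈ Finset.range (r + 1), α i) +
      ∑ i ∈ Finset.range (r + 1), β i)
    (hr : 2 ≤ r) (hbig : r + 1 < α r + β r + (g + r - d)) :
    231 ≤ Nat.card {T : ℕ × ℕ → ℕ // IsSYT (sigmaCells g r d α β) g T} := by
  classical
  set c0 := α 0 - α r with hc0
  set cells := sigmaCells g r d α β with hcells
  have hαr : α r ≤ α 0 := hα 0 r (Nat.zero_le _) le_rfl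
  have hαm : ∀ i, i ≤ r → α i ≤ α 0 := fun i hi => hα 0 i (Nat.zero_le _) hi
  have hmem : ∀ i j : ℕ, ((i, j) ∈ cells ↔ i ≤ r ∧ α 0 - α (r - i) ≤ j ∧ j < α 0 + (g + r - d) + β i) :=
    fun i j => SYTAux.mem_sigma
  have hcard : cells.card = g := by
    rw [hcells, SYTAux.card_sigma g r d α β hαm]
    have hsum : ∑ i ∈ Finset.range (r + 1), (α (r - i) + (g + r - d) + β i)
        = (r + 1) * (g + r - d) + (∑ i ∈ Finset.range (r + 1), α i)
          + ∑ i ∈ Finset.range (r + 1), β i := by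
      rw [Finset.sum_add_distrib, Finset.sum_add_distrib, Finset.sum_const,
        Finset.card_range, smul_eq_mul]
      have hrefl : ∑ i ∈ Finset.range (r + 1), α (r - i)
          = ∑ i ∈ Finset.range (r + 1), α i := by
        rw [← Finset.sum_range_reflect]
        apply Finset.sum_congr rfl
        intro i hi
        rw [Finset.mem_range] at hi
        congr 1
        omega
      rw [hrefl]
      ring
    rw [hsum]
    omega
  -- the 3×4 corner
  set corner := Finset.range 3 ×ˢ Finset.Ico c0 (c0 + 4) with hcorner
  have hmemc : ∀ c : ℕ × ℕ, c ∈ corner ↔ c.1 < 3 ∧ c0 ≤ c.2 ∧ c.2 < c0 + 4 := by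
    intro c
    simp [hcorner, Finset.mem_product, Finset.mem_Ico, and_assoc]
  have hcsub : corner ⊆ cells := by
    intro c hc
    rw [hmemc] at hc
    obtain ⟨i, j⟩ := c
    simp only at hc
    rw [hmem]
    have hαi : α r ≤ α (r - i) := hα (r - i) r (Nat.sub_le _ _) le_rfl
    have hβi : β r ≤ β i := hβ i r (by omega) le_rfl
    refine ⟨by omega, by omega, by omega⟩
  -- the zones
  set Pz := cells.filter (fun c => c.2 < c0) with hPz
  set Qz := (cells \ Pz) \ corner with hQz
  set p := Pz.card with hp
  set q := Qz.card with hq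
  have hPmem : ∀ c : ℕ × ℕ, c ∈ Pz ↔ c ∈ cells ∧ c.2 < c0 := fun c => Finset.mem_filter
  have hQmem : ∀ c : ℕ × ℕ, c ∈ Qz ↔ c ∈ cells ∧ ¬ c.2 < c0 ∧ c ∉ corner := by
    intro c
    rw [hQz]
    simp only [Finset.mem_sdiff, hPmem]
    tauto
  have hunion : cells = Pz ∪ corner ∪ Qz := by
    ext c
    simp only [Finset.mem_union, hPmem, hQmem]
    constructor
    · intro hc
      by_cases h1 : c.2 < c0
      · exact Or.inl (Or.inl ⟨hc, h1⟩)
      · by_cases h2 : c ∈ corner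
        · exact Or.inl (Or.inr h2)
        · exact Or.inr ⟨hc, h1, h2⟩
    · rintro ((h | h) | h)
      exacts [h.1, hcsub h, h.1]
  have hdisjPC : Disjoint Pz corner := by
    rw [Finset.disjoint_left]
    intro c hc hc'
    rw [hPmem] at hc
    rw [hmemc] at hc'
    omega
  have hdisjPQ : Disjoint Pz Qz := by
    rw [Finset.disjoint_left]
    intro c hc hc'
    exact ((hQmem c).mp hc').2.1 ((hPmem c).mp hc).2
  have hdisjCQ : Disjoint corner Qz := by
    rw [Finset.disjoint_left]
    intro c hc hc'
    exact ((hQmem c).mp hc').2.2 hc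
  have hcardsplit : p + 12 + q = g := by
    have h12 : corner.card = 12 := by
      rw [hcorner, Finset.card_product, Finset.card_range, Nat.card_Ico]
      omega
    have hcu : (Pz ∪ corner ∪ Qz).card = g := by rw [← hunion]; exact hcard
    rw [Finset.card_union_of_disjoint (Finset.disjoint_union_left.mpr ⟨hdisjPQ, hdisjCQ⟩),
      Finset.card_union_of_disjoint hdisjPC, h12] at hcu
    omega
  -- the filling map
  set rkP : ℕ × ℕ → ℕ := SYTAux.rnk colLt Pz with hrkP
  set rkQ : ℕ × ℕ → ℕ := SYTAux.rnk rowLt Qz with hrkQ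
  set Φ : (ℕ × ℕ → ℕ) → (ℕ × ℕ → ℕ) := fun S c =>
    if c ∈ Pz then rkP c
    else if c ∈ corner then p + S (c.1, c.2 - c0)
    else if c ∈ Qz then p + 12 + rkQ c
    else 0 with hΦ
  have hvP : ∀ S : ℕ × ℕ → ℕ, ∀ c ∈ Pz, Φ S c = rkP c := by
    intro S c hc
    simp only [hΦ, if_pos hc]
  have hvC : ∀ S : ℕ × ℕ → ℕ, ∀ c ∈ corner, Φ S c = p + S (c.1, c.2 - c0) := by
    intro S c hc
    have h1 : c ∉ Pz := Finset.disjoint_right.mp hdisjPC hc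
    simp only [hΦ, if_neg h1, if_pos hc]
  have hvQ : ∀ S : ℕ × ℕ → ℕ, ∀ c ∈ Qz, Φ S c = p + 12 + rkQ c := by
    intro S c hc
    have h1 : c ∉ Pz := Finset.disjoint_right.mp hdisjPQ hc
    have h2 : c ∉ corner := Finset.disjoint_right.mp hdisjCQ hc
    simp only [hΦ, if_neg h1, if_neg h2, if_pos hc]
  have hvC' : ∀ S : ℕ × ℕ → ℕ, ∀ i j : ℕ, ((i, j) : ℕ × ℕ) ∈ corner →
      Φ S (i, j) = p + S (i, j - c0) := fun S i j h => hvC S (i, j) h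
  have hbP : ∀ c ∈ Pz, 1 ≤ rkP c ∧ rkP c ≤ p := by
    intro c hc
    have := SYTAux.rnk_mem SYTAux.colLt_SO hc
    rw [Finset.mem_Icc] at this
    exact this
  have hbQ : ∀ c ∈ Qz, 1 ≤ rkQ c ∧ rkQ c ≤ q := by
    intro c hc
    have := SYTAux.rnk_mem SYTAux.rowLt_SO hc
    rw [Finset.mem_Icc] at this
    exact this
  have hshift : ∀ c ∈ corner, ((c.1, c.2 - c0) : ℕ × ℕ) ∈ SYTAux.D0 := by
    intro c hc
    rw [hmemc] at hc
    rw [SYTAux.mem_D0]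
    simp only
    omega
  have hSb : ∀ S : ℕ × ℕ → ℕ, IsSYT SYTAux.D0 12 S → ∀ d ∈ SYTAux.D0, 1 ≤ S d ∧ S d ≤ 12 := by
    intro S hS d hd
    have := hS.2.1.1 (Finset.mem_coe.mpr hd)
    rw [Set.mem_Icc] at this
    exact this
  have hvCb : ∀ S : ℕ × ℕ → ℕ, IsSYT SYTAux.D0 12 S → ∀ c ∈ corner,
      p + 1 ≤ Φ S c ∧ Φ S c ≤ p + 12 := by
    intro S hS c hc
    rw [hvC S c hc]
    have := hSb S hS _ (hshift c hc)
    omega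
  have hvQb : ∀ S : ℕ × ℕ → ℕ, ∀ c ∈ Qz, p + 13 ≤ Φ S c ∧ Φ S c ≤ g := by
    intro S c hc
    rw [hvQ S c hc]
    have := hbQ c hc
    omega
  have hvPb : ∀ S : ℕ × ℕ → ℕ, ∀ c ∈ Pz, 1 ≤ Φ S c ∧ Φ S c ≤ p := by
    intro S c hc
    rw [hvP S c hc]
    exact hbP c hc
  -- not in Pz means column at least c0
  have hnotP : ∀ c : ℕ × ℕ, c ∈ cells → c ∉ Pz → c0 ≤ c.2 := by
    intro c hc hcp
    by_contra h
    exact hcp ((hPmem c).mpr ⟨hc, by omega⟩)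
  have hQcol : ∀ c : ℕ × ℕ, c ∈ Qz → c.1 < 3 → c0 + 4 ≤ c.2 := by
    intro c hc h3
    obtain ⟨hc1, hc2, hc3⟩ := (hQmem c).mp hc
    by_contra h
    exact hc3 ((hmemc c).mpr ⟨h3, by omega, by omega⟩)
  -- main SYT property
  have hSYT : ∀ S : ℕ × ℕ → ℕ, IsSYT SYTAux.D0 12 S → IsSYT cells g (Φ S) := by
    intro S hS
    apply SYTAux.isSYT_mk cells g (Φ S) hcard
    · -- zero outside
      intro c hc
      have h1 : c ∉ Pz := fun h => hc ((hPmem c).mp h).1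
      have h2 : c ∉ corner := fun h => hc (hcsub h)
      have h3 : c ∉ Qz := fun h => hc ((hQmem c).mp h).1
      simp only [hΦ, if_neg h1, if_neg h2, if_neg h3]
    · -- image
      rw [hunion, Finset.image_union, Finset.image_union]
      have e1 : Pz.image (Φ S) = Finset.Icc 1 p := by
        rw [Finset.image_congr (fun c hc => hvP S c hc)]
        exact SYTAux.rnk_image SYTAux.colLt_SO Pz
      have e2 : corner.image (Φ S) = Finset.Icc (p + 1) (p + 12) := by
        rw [Finset.image_congr (fun c hc => hvC S c hc)]
        have hsh : corner.image (fun c => ((c.1, c.2 - c0) : ℕ × ℕ)) = SYTAux.D0 := by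
          ext d
          simp only [Finset.mem_image, hmemc, SYTAux.mem_D0]
          constructor
          · rintro ⟨c, hc, rfl⟩
            simp only
            omega
          · intro hd
            refine ⟨(d.1, d.2 + c0), by simp only; omega, ?_⟩
            have : d.2 + c0 - c0 = d.2 := by omega
            rw [this]
        have hcomp : corner.image (fun c => p + S (c.1, c.2 - c0))
            = (corner.image (fun c => ((c.1, c.2 - c0) : ℕ × ℕ))).image (fun x => p + S x) := by
          rw [Finset.image_image]
          rfl
        rw [hcomp, hsh]
        exact SYTAux.image_shift SYTAux.D0 S 1 12 p (SYTAux.image_eq_of_isSYT hS)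
      have e3 : Qz.image (Φ S) = Finset.Icc (p + 12 + 1) (p + 12 + q) := by
        rw [Finset.image_congr (fun c hc => hvQ S c hc)]
        exact SYTAux.image_shift Qz rkQ 1 q (p + 12) (SYTAux.rnk_image SYTAux.rowLt_SO Qz)
      rw [e1, e2, e3]
      ext x
      simp only [Finset.mem_union, Finset.mem_Icc]
      omega
    · -- rows
      intro c hc c' hc' h1 h2
      obtain ⟨i, j⟩ := c
      obtain ⟨i', j'⟩ := c'
      simp only at h1 h2
      subst h1
      by_cases hcP : ((i, j) : ℕ × ℕ) ∈ Pz
      · by_cases hc'P : ((i, j') : ℕ × ℕ) ∈ Pz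
        · rw [hvP S _ hcP, hvP S _ hc'P]
          exact SYTAux.rnk_lt SYTAux.colLt_SO hcP (Or.inl h2)
        · have hb1 := hvPb S _ hcP
          rcases (by rw [hunion] at hc'; simpa using hc' : ((i, j') : ℕ × ℕ) ∈ Pz ∨ _ ∈ corner ∨ _ ∈ Qz) with h | h | h
          · exact absurd h hc'P
          · have := hvCb S hS _ h
            omega
          · have := hvQb S _ h
            omega
      · have hj : c0 ≤ j := hnotP _ hc hcP
        by_cases hcC : ((i, j) : ℕ × ℕ) ∈ corner
        · have hi3 : i < 3 := ((hmemc _).mp hcC).1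
          by_cases hc'C : ((i, j') : ℕ × ℕ) ∈ corner
          · rw [hvC' S i j hcC, hvC' S i j' hc'C]
            have := hS.2.2.1 i (j - c0) (j' - c0) (hshift _ hcC) (hshift _ hc'C) (by omega)
            omega
          · have hc'Q : ((i, j') : ℕ × ℕ) ∈ Qz := by
              rw [hQmem]
              refine ⟨hc', by simp only; omega, hc'C⟩
            have := hvCb S hS _ hcC
            have := hvQb S _ hc'Q
            omega
        · have hcQ : ((i, j) : ℕ × ℕ) ∈ Qz := (hQmem _).mpr ⟨hc, by simp only; omega, hcC⟩
          have hc'Q : ((i, j') : ℕ × ℕ) ∈ Qz := by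
            rw [hQmem]
            refine ⟨hc', by simp only; omega, ?_⟩
            intro h
            have h3 := (hmemc _).mp h
            simp only at h3
            have := hQcol _ hcQ (by omega)
            simp only at this
            omega
          rw [hvQ S _ hcQ, hvQ S _ hc'Q]
          have : rkQ (i, j) < rkQ (i, j') :=
            SYTAux.rnk_lt SYTAux.rowLt_SO hcQ (Or.inr ⟨rfl, h2⟩)
          omega
    · -- columns
      intro c hc c' hc' h1 h2
      obtain ⟨i, j⟩ := c
      obtain ⟨i', j'⟩ := c'
      simp only at h1 h2
      subst h1
      by_cases hj : j < c0
      · have hcP : ((i, j) : ℕ × ℕ) ∈ Pz := (hPmem _).mpr ⟨hc, by simp only; omega⟩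
        have hc'P : ((i', j) : ℕ × ℕ) ∈ Pz := (hPmem _).mpr ⟨hc', by simp only; omega⟩
        rw [hvP S _ hcP, hvP S _ hc'P]
        show rkP (i, j) < rkP (i', j)
        exact SYTAux.rnk_lt SYTAux.colLt_SO hcP (Or.inr ⟨rfl, h2⟩)
      · by_cases hcC : ((i, j) : ℕ × ℕ) ∈ corner
        · by_cases hc'C : ((i', j) : ℕ × ℕ) ∈ corner
          · rw [hvC' S i j hcC, hvC' S i' j hc'C]
            have := hS.2.2.2 i i' (j - c0) (hshift _ hcC) (hshift _ hc'C) h2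
            omega
          · have hc'Q : ((i', j) : ℕ × ℕ) ∈ Qz := by
              rw [hQmem]
              exact ⟨hc', by simp only; omega, hc'C⟩
            have := hvCb S hS _ hcC
            have := hvQb S _ hc'Q
            omega
        · have hcQ : ((i, j) : ℕ × ℕ) ∈ Qz := (hQmem _).mpr ⟨hc, by simp only; omega, hcC⟩
          have hc'Q : ((i', j) : ℕ × ℕ) ∈ Qz := by
            rw [hQmem]
            refine ⟨hc', by simp only; omega, ?_⟩
            intro h
            have h3 := (hmemc _).mp h
            simp only at h3
            exact hcC ((hmemc _).mpr ⟨by omega, by simp only; omega, by simp only; omega⟩)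
          rw [hvQ S _ hcQ, hvQ S _ hc'Q]
          have : rkQ (i, j) < rkQ (i', j) := SYTAux.rnk_lt SYTAux.rowLt_SO hcQ (Or.inl h2)
          omega
  -- injectivity
  have hinj : ∀ S S' : ℕ × ℕ → ℕ, IsSYT SYTAux.D0 12 S → IsSYT SYTAux.D0 12 S' →
      Φ S = Φ S' → S = S' := by
    intro S S' hS hS' heq
    funext d
    by_cases hd : d ∈ SYTAux.D0
    · obtain ⟨x, y⟩ := d
      rw [SYTAux.mem_D0] at hd
      simp only at hd
      have hcm : ((x, c0 + y) : ℕ × ℕ) ∈ corner := by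
        rw [hmemc]
        simp only
        omega
      have key := congrFun heq (x, c0 + y)
      rw [hvC' S x (c0 + y) hcm, hvC' S' x (c0 + y) hcm] at key
      have hy : c0 + y - c0 = y := by omega
      rw [hy] at key
      omega
    · rw [hS.1 d hd, hS'.1 d hd]
  -- conclusion
  have hfin : Finite {T : ℕ × ℕ → ℕ // IsSYT cells g T} := SYTAux.syt_finite _ _
  have step : Nat.card {T : ℕ × ℕ → ℕ // IsSYT SYTAux.D0 12 T}
      ≤ Nat.card {T : ℕ × ℕ → ℕ // IsSYT cells g T} := by
    apply Nat.card_le_card_of_injective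
      (fun S : {T : ℕ × ℕ → ℕ // IsSYT SYTAux.D0 12 T} =>
        (⟨Φ S.1, hSYT S.1 S.2⟩ : {T : ℕ × ℕ → ℕ // IsSYT cells g T}))
    intro S S' h
    exact Subtype.ext (hinj _ _ S.2 S'.2 (congrArg Subtype.val h))
  exact le_trans SYTAux.card_D0_syt step
end

section
/- Suppose ρ(g,r,d,α,β) = 0, r ≥ 2, and α_r + β_r + g − d + r > r + 1. Then there exists a non-identity element of the group generated by the involutions π_{t,a} on standard Young tableaux of σ(g,r,d,α,β) that moves at most one quarter of all standard Young tableaux of σ(g,r,d,α,β). -/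
open Finset
open scoped Classical

/-- Rank filling associated to a priority function. -/
noncomputable def rkT (s : Finset (ℕ × ℕ)) (f : ℕ × ℕ → ℕ) (c : ℕ × ℕ) : ℕ :=
  if c ∈ s then 1 + (s.filter fun c' => f c' < f c).card else 0

lemma rkT_lt {s : Finset (ℕ × ℕ)} {f : ℕ × ℕ → ℕ} {c c' : ℕ × ℕ}
    (hc : c ∈ s) (hc' : c' ∈ s) (h : f c < f c') : rkT s f c < rkT s f c' := by
  simp only [rkT, if_pos hc, if_pos hc']
  have hsub : (s.filter fun d => f d < f c) ⊆ (s.filter fun d => f d < f c') := by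
    intro d hd
    simp only [Finset.mem_filter] at *
    exact ⟨hd.1, hd.2.trans h⟩
  have hss : (s.filter fun d => f d < f c) ⊂ (s.filter fun d => f d < f c') := by
    rw [Finset.ssubset_iff_of_subset hsub]
    exact ⟨c, by simp [Finset.mem_filter, hc, h], by simp [Finset.mem_filter]⟩
  exact Nat.add_lt_add_left (Finset.card_lt_card hss) 1

lemma rkT_injOn {s : Finset (ℕ × ℕ)} {f : ℕ × ℕ → ℕ}
    (hinj : ∀ c ∈ s, ∀ c' ∈ s, f c = f c' → c = c') :
    ∀ c ∈ s, ∀ c' ∈ s, rkT s f c = rkT s f c' → c = c' := by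
  intro c hc c' hc' h
  rcases lt_trichotomy (f c) (f c') with hlt | heq | hgt
  · exact absurd h (Nat.ne_of_lt (rkT_lt hc hc' hlt))
  · exact hinj c hc c' hc' heq
  · exact absurd h.symm (Nat.ne_of_lt (rkT_lt hc' hc hgt))

lemma rkT_mem {s : Finset (ℕ × ℕ)} {f : ℕ × ℕ → ℕ} {c : ℕ × ℕ} (hc : c ∈ s) :
    rkT s f c ∈ Set.Icc 1 s.card := by
  simp only [rkT, if_pos hc, Set.mem_Icc]
  constructor
  · omega
  · have hss : (s.filter fun d => f d < f c) ⊂ s := by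
      rw [Finset.ssubset_iff_of_subset (Finset.filter_subset _ _)]
      exact ⟨c, hc, by simp [Finset.mem_filter]⟩
    have := Finset.card_lt_card hss
    omega

lemma rkT_isSYT (s : Finset (ℕ × ℕ)) (f : ℕ × ℕ → ℕ)
    (hinj : ∀ c ∈ s, ∀ c' ∈ s, f c = f c' → c = c')
    (hrow : ∀ i j j', (i, j) ∈ s → (i, j') ∈ s → j < j' → f (i, j) < f (i, j'))
    (hcol : ∀ i i' j, (i, j) ∈ s → (i', j) ∈ s → i < i' → f (i, j) < f (i', j)) :
    IsSYT s s.card (rkT s f) := by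
  refine ⟨fun c hc => by simp [rkT, hc], ⟨?_, ?_, ?_⟩, ?_, ?_⟩
  · intro c hc
    exact rkT_mem (by exact_mod_cast hc)
  · intro c hc c' hc' h
    exact rkT_injOn hinj c (by exact_mod_cast hc) c' (by exact_mod_cast hc') h
  · -- SurjOn
    have himg : s.image (rkT s f) = Finset.Icc 1 s.card := by
      apply Finset.eq_of_subset_of_card_le
      · intro k hk
        simp only [Finset.mem_image] at hk
        obtain ⟨c, hc, rfl⟩ := hk
        have := rkT_mem (f := f) hc
        simp only [Set.mem_Icc] at this
        simp [Finset.mem_Icc, this]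
      · rw [Finset.card_image_of_injOn (fun c hc c' hc' h => rkT_injOn hinj c hc c' hc' h)]
        simp [Nat.card_Icc]
    intro k hk
    simp only [Set.mem_Icc] at hk
    have : k ∈ s.image (rkT s f) := by
      rw [himg]; simp [Finset.mem_Icc, hk]
    simp only [Finset.mem_image] at this
    obtain ⟨c, hc, rfl⟩ := this
    exact ⟨c, by exact_mod_cast hc, rfl⟩
  · intro i j j' h1 h2 hlt
    exact rkT_lt h1 h2 (hrow i j j' h1 h2 hlt)
  · intro i i' j h1 h2 hlt
    exact rkT_lt h1 h2 (hcol i i' j h1 h2 hlt)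

lemma rkT_val {s : Finset (ℕ × ℕ)} {f : ℕ × ℕ → ℕ} {c : ℕ × ℕ} (hc : c ∈ s)
    {I : Finset (ℕ × ℕ)} (hfil : s.filter (fun d => f d < f c) = I) :
    rkT s f c = I.card + 1 := by
  simp [rkT, if_pos hc, hfil, Nat.add_comm]
/-- Stage function: cells of the ideal `I` first, then `x`, then `y`, then the rest. -/
noncomputable def stg (I : Finset (ℕ × ℕ)) (x y c : ℕ × ℕ) : ℕ :=
  if c ∈ I then 0 else if c = x then 1 else if c = y then 2 else 3

/-- Priority function realizing the order: `I` (in lex order), `x`, `y`, rest (lex). -/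
noncomputable def prio (R W : ℕ) (I : Finset (ℕ × ℕ)) (x y c : ℕ × ℕ) : ℕ :=
  stg I x y c * ((R + 1) * W) + (c.1 * W + c.2)

lemma prio_lt_of_stg {R W : ℕ} {I : Finset (ℕ × ℕ)} {x y c c' : ℕ × ℕ}
    (hb : c.1 ≤ R ∧ c.2 < W) (h : stg I x y c < stg I x y c') :
    prio R W I x y c < prio R W I x y c' := by
  unfold prio
  have h1 : c.1 * W + c.2 < (R + 1) * W := by
    have h2 : c.1 * W + c.2 < (c.1 + 1) * W := by
      rw [Nat.succ_mul]; omega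
    exact h2.trans_le (Nat.mul_le_mul_right W (by omega))
  have h3 : (stg I x y c + 1) * ((R + 1) * W) ≤ stg I x y c' * ((R + 1) * W) :=
    Nat.mul_le_mul_right _ (by omega)
  rw [Nat.succ_mul] at h3
  omega

lemma prio_lt_of_lex {R W : ℕ} {I : Finset (ℕ × ℕ)} {x y c c' : ℕ × ℕ}
    (hb : c.2 < W) (hs : stg I x y c = stg I x y c')
    (h : c.1 < c'.1 ∨ (c.1 = c'.1 ∧ c.2 < c'.2)) :
    prio R W I x y c < prio R W I x y c' := by
  unfold prio
  rw [hs]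
  have : c.1 * W + c.2 < c'.1 * W + c'.2 := by
    rcases h with h | ⟨h1, h2⟩
    · have h4 : (c.1 + 1) * W ≤ c'.1 * W := Nat.mul_le_mul_right W (by omega)
      rw [Nat.succ_mul] at h4
      omega
    · rw [h1]; omega
  omega

/-- Main construction: a standard Young tableau whose values `|I|+1` and `|I|+2`
sit at the prescribed incomparable cells `x` and `y`. -/
lemma config_main (s : Finset (ℕ × ℕ)) (R W : ℕ)
    (hbound : ∀ c ∈ s, c.1 ≤ R ∧ c.2 < W)
    (I : Finset (ℕ × ℕ)) (x y : ℕ × ℕ) (hIs : I ⊆ s)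
    (hx : x ∈ s) (hy : y ∈ s) (hxI : x ∉ I) (hyI : y ∉ I) (hne : x ≠ y)
    (hI1 : ∀ c ∈ s, ∀ c' ∈ I, ((c.1 = c'.1 ∧ c.2 < c'.2) ∨ (c.2 = c'.2 ∧ c.1 < c'.1)) → c ∈ I)
    (hx1 : ∀ c ∈ s, ((c.1 = x.1 ∧ c.2 < x.2) ∨ (c.2 = x.2 ∧ c.1 < x.1)) → c ∈ I)
    (hy1 : ∀ c ∈ s, ((c.1 = y.1 ∧ c.2 < y.2) ∨ (c.2 = y.2 ∧ c.1 < y.1)) → c ∈ I) :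
    ∃ T : ℕ × ℕ → ℕ, IsSYT s s.card T ∧ T x = I.card + 1 ∧ T y = I.card + 2 := by
  classical
  set F := prio R W I x y with hF
  have hsx : stg I x y x = 1 := by simp [stg, hxI]
  have hsy : stg I x y y = 2 := by simp [stg, hyI, hne.symm]
  have hs0 : ∀ c ∈ I, stg I x y c = 0 := fun c hc => by simp [stg, hc]
  -- monotonicity along rows and columns
  have mono : ∀ c ∈ s, ∀ c' ∈ s,
      ((c.1 = c'.1 ∧ c.2 < c'.2) ∨ (c.2 = c'.2 ∧ c.1 < c'.1)) → F c < F c' := by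
    intro c hc c' hc' hcc
    have hb := hbound c hc
    have hb' := hbound c' hc'
    have hlex : c.1 < c'.1 ∨ (c.1 = c'.1 ∧ c.2 < c'.2) := by tauto
    by_cases h0 : c' ∈ I
    · have hcI : c ∈ I := hI1 c hc c' h0 hcc
      exact prio_lt_of_lex hb.2 (by rw [hs0 c hcI, hs0 c' h0]) hlex
    · by_cases h1 : c' = x
      · have hcI : c ∈ I := hx1 c hc (by rw [← h1]; exact hcc)
        apply prio_lt_of_stg hb
        rw [hs0 c hcI, h1, hsx]; omega
      · by_cases h2 : c' = y
        · have hcI : c ∈ I := hy1 c hc (by rw [← h2]; exact hcc)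
          apply prio_lt_of_stg hb
          rw [hs0 c hcI, h2, hsy]; omega
        · have hs3 : stg I x y c' = 3 := by simp [stg, h0, h1, h2]
          by_cases hcI : c ∈ I
          · exact prio_lt_of_stg hb (by rw [hs0 c hcI, hs3]; omega)
          · by_cases hcx : c = x
            · exact prio_lt_of_stg hb (by rw [hcx, hsx, hs3]; omega)
            · by_cases hcy : c = y
              · exact prio_lt_of_stg hb (by rw [hcy, hsy, hs3]; omega)
              · have : stg I x y c = 3 := by simp [stg, hcI, hcx, hcy]
                exact prio_lt_of_lex hb.2 (by rw [this, hs3]) hlex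
  -- injectivity of F on s
  have hinj : ∀ c ∈ s, ∀ c' ∈ s, F c = F c' → c = c' := by
    intro c hc c' hc' h
    by_contra hne'
    have hb := hbound c hc
    have hb' := hbound c' hc'
    rcases lt_trichotomy (stg I x y c) (stg I x y c') with hst | hst | hst
    · exact absurd h (Nat.ne_of_lt (prio_lt_of_stg hb hst))
    · rcases lt_trichotomy c.1 c'.1 with h1 | h1 | h1
      · exact absurd h (Nat.ne_of_lt (prio_lt_of_lex hb.2 hst (Or.inl h1)))
      · rcases lt_trichotomy c.2 c'.2 with h2 | h2 | h2
        · exact absurd h (Nat.ne_of_lt (prio_lt_of_lex hb.2 hst (Or.inr ⟨h1, h2⟩)))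
        · exact hne' (Prod.ext h1 h2)
        · exact absurd h.symm (Nat.ne_of_lt (prio_lt_of_lex hb'.2 hst.symm (Or.inr ⟨h1.symm, h2⟩)))
      · exact absurd h.symm (Nat.ne_of_lt (prio_lt_of_lex hb'.2 hst.symm (Or.inl h1)))
    · exact absurd h.symm (Nat.ne_of_lt (prio_lt_of_stg hb' hst))
  refine ⟨rkT s F, rkT_isSYT s F hinj ?_ ?_, ?_, ?_⟩
  · intro i j j' h1 h2 hlt
    exact mono _ h1 _ h2 (Or.inl ⟨rfl, hlt⟩)
  · intro i i' j h1 h2 hlt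
    exact mono _ h1 _ h2 (Or.inr ⟨rfl, hlt⟩)
  · -- value at x
    apply rkT_val hx
    ext c
    simp only [Finset.mem_filter]
    constructor
    · rintro ⟨hc, hlt⟩
      by_contra hcI
      have hb := hbound c hc
      have hbx := hbound x hx
      by_cases hcx : c = x
      · rw [hcx] at hlt; omega
      · by_cases hcy : c = y
        · have : F x < F c := by
            apply prio_lt_of_stg hbx
            rw [hsx, hcy, hsy]; omega
          omega
        · have : F x < F c := by
            apply prio_lt_of_stg hbx
            rw [hsx, show stg I x y c = 3 by simp [stg, hcI, hcx, hcy]]; omega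
          omega
    · intro hcI
      refine ⟨hIs hcI, ?_⟩
      apply prio_lt_of_stg (hbound c (hIs hcI))
      rw [hs0 c hcI, hsx]; omega
  · -- value at y
    have hfil : s.filter (fun d => F d < F y) = insert x I := by
      ext c
      simp only [Finset.mem_filter, Finset.mem_insert]
      constructor
      · rintro ⟨hc, hlt⟩
        by_contra hcI
        push_neg at hcI
        have hb := hbound c hc
        have hby := hbound y hy
        by_cases hcy : c = y
        · rw [hcy] at hlt; omega
        · have : F y < F c := by
            apply prio_lt_of_stg hby
            rw [hsy, show stg I x y c = 3 by simp [stg, hcI.2, hcI.1, hcy]]; omega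
          omega
      · rintro (rfl | hcI)
        · exact ⟨hx, prio_lt_of_stg (hbound _ hx) (by rw [hsx, hsy]; omega)⟩
        · exact ⟨hIs hcI, prio_lt_of_stg (hbound c (hIs hcI)) (by rw [hs0 c hcI, hsy]; omega)⟩
    have := rkT_val hy hfil
    rw [this, Finset.card_insert_of_notMem hxI]
lemma sigma_mem (g r d : ℕ) (α β : ℕ → ℕ) (i j : ℕ) :
    (i, j) ∈ sigmaCells g r d α β ↔
      i ≤ r ∧ α 0 - α (r - i) ≤ j ∧ j < α 0 + (g + r - d) + β i := by
  simp only [sigmaCells, Finset.mem_biUnion, Finset.mem_range, Finset.mem_image,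
    Finset.mem_Ico, Prod.mk.injEq]
  constructor
  · rintro ⟨a, ha, b, ⟨h1, h2⟩, rfl, rfl⟩
    exact ⟨by omega, h1, h2⟩
  · rintro ⟨h0, h1, h2⟩
    exact ⟨i, by omega, j, ⟨h1, h2⟩, rfl, rfl⟩

lemma sigma_card (g r d : ℕ) (α β : ℕ → ℕ)
    (hα : ∀ i j, i ≤ j → j ≤ r → α j ≤ α i)
    (hρ : g = (r + 1) * (g + r - d) + (∑ i ∈ Finset.range (r + 1), α i) +
      ∑ i ∈ Finset.range (r + 1), β i) :
    (sigmaCells g r d α β).card = g := by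
  rw [sigmaCells, Finset.card_biUnion]
  · have hterm : ∀ i ∈ Finset.range (r + 1),
        ((Finset.Ico (α 0 - α (r - i)) (α 0 + (g + r - d) + β i)).image
          fun j => ((i, j) : ℕ × ℕ)).card = α (r - i) + (g + r - d) + β i := by
      intro i hi
      rw [Finset.card_image_of_injective _ (fun a b h => by simpa using h)]
      rw [Nat.card_Ico]
      have : α (r - i) ≤ α 0 := hα 0 (r - i) (Nat.zero_le _) (by omega)
      omega
    rw [Finset.sum_congr rfl hterm]
    have h1 : ∑ i ∈ Finset.range (r + 1), (α (r - i) + (g + r - d) + β i) =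
        (∑ i ∈ Finset.range (r + 1), α (r - i)) + (r + 1) * (g + r - d) +
          ∑ i ∈ Finset.range (r + 1), β i := by
      rw [Finset.sum_add_distrib, Finset.sum_add_distrib, Finset.sum_const,
        Finset.card_range, smul_eq_mul]
    have h2 : ∑ i ∈ Finset.range (r + 1), α (r - i) = ∑ i ∈ Finset.range (r + 1), α i := by
      have := Finset.sum_range_reflect (fun i => α i) (r + 1)
      simpa using this
    omega
  · intro a _ b _ hab
    simp only [Finset.disjoint_left, Finset.mem_image, Finset.mem_Ico]
    rintro c ⟨j, _, rfl⟩ ⟨j', _, h⟩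
    rw [Prod.mk.injEq] at h
    exact hab h.1.symm
lemma moved_iff (cells : Finset (ℕ × ℕ)) (t a : ℕ) (T : ℕ × ℕ → ℕ) :
    applyList cells [(t, a)] T ≠ T ↔ ShouldSwap cells t a T := by
  have h1 : applyList cells [(t, a)] T = piAct cells t a T := rfl
  rw [h1]
  constructor
  · intro hne
    by_contra hss
    exact hne (by rw [piAct, if_neg hss])
  · intro hss
    rw [piAct, if_pos hss]
    obtain ⟨c, hc, c', hc', hTc, _⟩ := hss
    intro heq
    have := congrFun heq c
    rw [swapVals, hTc] at this
    simp [Equiv.swap_apply_left] at this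
  
lemma syt_finite (cells : Finset (ℕ × ℕ)) (g : ℕ) :
    {T : ℕ × ℕ → ℕ | IsSYT cells g T}.Finite := by
  classical
  set F : (ℕ × ℕ → ℕ) → (↥cells → Fin (g + 1)) :=
    fun T c => ⟨min (T c.1) g, Nat.lt_succ_of_le (min_le_right _ _)⟩ with hF
  apply Set.Finite.of_finite_image (f := F) (Set.toFinite _)
  intro T hT T' hT' heq
  funext c
  by_cases hc : c ∈ cells
  · have h1 := congrFun heq ⟨c, hc⟩
    simp only [hF, Fin.mk.injEq] at h1
    have hTg : T c ≤ g := (hT.2.1.1 (by exact_mod_cast hc)).2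
    have hTg' : T' c ≤ g := (hT'.2.1.1 (by exact_mod_cast hc)).2
    rw [min_eq_left hTg, min_eq_left hTg'] at h1
    exact h1
  · rw [hT.1 c hc, hT'.1 c hc]
set_option maxHeartbeats 2000000 in
/-- If `ρ(g,r,d,α,β) = 0`, `r ≥ 2` and `α_r + β_r + g − d + r > r + 1`, then some
non-identity element of the group generated by the involutions `π_{t,a}` moves at
most one quarter of the standard Young tableaux of `σ(g,r,d,α,β)`. -/
theorem stmt_16 (g r d : ℕ) (α β : ℕ → ℕ)
    (hd : d ≤ g + r)
    (hα : ∀ i j, i ≤ j → j ≤ r → α j ≤ α i)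
    (hβ : ∀ i j, i ≤ j → j ≤ r → β j ≤ β i)
    (hα0 : α 0 + r ≤ d) (hβ0 : β 0 + r ≤ d)
    (hρ : g = (r + 1) * (g + r - d) + (∑ i ∈ Finset.range (r + 1), α i) +
      ∑ i ∈ Finset.range (r + 1), β i)
    (hr : 2 ≤ r) (hbig : r + 1 < α r + β r + (g + r - d)) :
    ∃ l : List (ℕ × ℕ), (∀ p ∈ l, 1 ≤ p.1 ∧ p.1 < g ∧ 0 < p.2) ∧
      (∃ T : ℕ × ℕ → ℕ, IsSYT (sigmaCells g r d α β) g T ∧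
        applyList (sigmaCells g r d α β) l T ≠ T) ∧
      4 * Nat.card {T : ℕ × ℕ → ℕ // IsSYT (sigmaCells g r d α β) g T ∧
          applyList (sigmaCells g r d α β) l T ≠ T} ≤
        Nat.card {T : ℕ × ℕ → ℕ // IsSYT (sigmaCells g r d α β) g T} := by
  classical
  set C := sigmaCells g r d α β with hC
  set q := α 0 - α r with hq
  set W := α 0 + (g + r - d) + β 0 with hWdef
  have hαr0 : α r ≤ α 0 := hα 0 r (Nat.zero_le _) le_rfl
  have hmemC : ∀ i j : ℕ, (i, j) ∈ C ↔
      i ≤ r ∧ α 0 - α (r - i) ≤ j ∧ j < α 0 + (g + r - d) + β i := by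
    intro i j; rw [hC]; exact sigma_mem g r d α β i j
  have hbound : ∀ c ∈ C, c.1 ≤ r ∧ c.2 < W := by
    rintro ⟨i, j⟩ hc
    rw [hmemC] at hc
    have hβi : β i ≤ β 0 := hβ 0 i (Nat.zero_le _) hc.1
    exact ⟨hc.1, by omega⟩
  have hgrid : ∀ i ≤ r, ∀ k ≤ 3, (i, q + k) ∈ C := by
    intro i hi k hk
    rw [hmemC]
    have h1 : α r ≤ α (r - i) := hα (r - i) r (Nat.sub_le r i) le_rfl
    have h2 : β r ≤ β i := hβ i r hi le_rfl
    refine ⟨hi, by omega, by omega⟩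
  have hcard : C.card = g := by rw [hC]; exact sigma_card g r d α β hα hρ
  set Bse := C.filter (fun c => c.2 < q) with hBse
  have hBsub : Bse ⊆ C := Finset.filter_subset _ _
  set t := Bse.card + 5 with ht
  have hB1 : ∀ c ∈ C, ∀ c' ∈ Bse,
      ((c.1 = c'.1 ∧ c.2 < c'.2) ∨ (c.2 = c'.2 ∧ c.1 < c'.1)) → c ∈ Bse := by
    intro c hc c' hc' hcc
    rw [hBse, Finset.mem_filter] at hc' ⊢
    exact ⟨hc, by omega⟩
  -- one parametric configuration builder
  have main4 : ∀ (G : Finset (ℕ × ℕ)) (P : ℕ × ℕ → Prop) (x y : ℕ × ℕ) (a : ℕ),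
      (∀ c : ℕ × ℕ, c ∈ G ↔ P c) → G.card = 4 →
      (∀ c : ℕ × ℕ, P c → c.1 ≤ r ∧ q ≤ c.2 ∧ c.2 ≤ q + 3) →
      (x.1 ≤ r ∧ q ≤ x.2 ∧ x.2 ≤ q + 3) → (y.1 ≤ r ∧ q ≤ y.2 ∧ y.2 ≤ q + 3) →
      ¬ P x → ¬ P y → x.1 ≠ y.1 → x.2 ≠ y.2 →
      (∀ c ∈ C, ∀ c' : ℕ × ℕ, P c' →
        ((c.1 = c'.1 ∧ c.2 < c'.2) ∨ (c.2 = c'.2 ∧ c.1 < c'.1)) → (c.2 < q ∨ P c)) →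
      (∀ c ∈ C, ((c.1 = x.1 ∧ c.2 < x.2) ∨ (c.2 = x.2 ∧ c.1 < x.1)) → (c.2 < q ∨ P c)) →
      (∀ c ∈ C, ((c.1 = y.1 ∧ c.2 < y.2) ∨ (c.2 = y.2 ∧ c.1 < y.1)) → (c.2 < q ∨ P c)) →
      (Nat.dist x.1 y.1 + Nat.dist x.2 y.2 = a) →
      ∃ T : ℕ × ℕ → ℕ, IsSYT C g T ∧ ShouldSwap C t a T := by
    intro G P x y a hGmem hGcard hPb hxb hyb hPx hPy hxy1 hxy2 hPcl hxcl hycl hdist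
    have memC_of_bounds : ∀ c : ℕ × ℕ, c.1 ≤ r → q ≤ c.2 → c.2 ≤ q + 3 → c ∈ C := by
      rintro ⟨i, j⟩ h1 h2 h3
      have h4 := hgrid i h1 (j - q) (by omega)
      have h5 : q + (j - q) = j := by omega
      rwa [h5] at h4
    have hx : x ∈ C := memC_of_bounds x hxb.1 hxb.2.1 hxb.2.2
    have hy : y ∈ C := memC_of_bounds y hyb.1 hyb.2.1 hyb.2.2
    have hGsub : G ⊆ C := by
      intro c hcG
      have h := hPb c ((hGmem c).mp hcG)
      exact memC_of_bounds c h.1 h.2.1 h.2.2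
    set I := Bse ∪ G with hI
    have hIs : I ⊆ C := Finset.union_subset hBsub hGsub
    have hImem : ∀ c : ℕ × ℕ, c ∈ I ↔ (c ∈ C ∧ (c.2 < q ∨ P c)) := by
      intro c
      rw [hI, Finset.mem_union, hBse, Finset.mem_filter, hGmem]
      constructor
      · rintro (⟨h1, h2⟩ | h)
        · exact ⟨h1, Or.inl h2⟩
        · exact ⟨hGsub ((hGmem c).mpr h), Or.inr h⟩
      · rintro ⟨h1, h2 | h2⟩
        · exact Or.inl ⟨h1, h2⟩
        · exact Or.inr h2
    have hxI : x ∉ I := by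
      rw [hImem]
      rintro ⟨-, h | h⟩
      · omega
      · exact hPx h
    have hyI : y ∉ I := by
      rw [hImem]
      rintro ⟨-, h | h⟩
      · omega
      · exact hPy h
    have hne : x ≠ y := fun h => hxy1 (by rw [h])
    have hI1 : ∀ c ∈ C, ∀ c' ∈ I,
        ((c.1 = c'.1 ∧ c.2 < c'.2) ∨ (c.2 = c'.2 ∧ c.1 < c'.1)) → c ∈ I := by
      intro c hc c' hc' hcc
      rw [hImem] at hc'
      rw [hImem]
      refine ⟨hc, ?_⟩
      rcases hc'.2 with h | h
      · left; omega
      · exact hPcl c hc c' h hcc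
    have hx1 : ∀ c ∈ C, ((c.1 = x.1 ∧ c.2 < x.2) ∨ (c.2 = x.2 ∧ c.1 < x.1)) → c ∈ I := by
      intro c hc hcc
      rw [hImem]
      exact ⟨hc, hxcl c hc hcc⟩
    have hy1 : ∀ c ∈ C, ((c.1 = y.1 ∧ c.2 < y.2) ∨ (c.2 = y.2 ∧ c.1 < y.1)) → c ∈ I := by
      intro c hc hcc
      rw [hImem]
      exact ⟨hc, hycl c hc hcc⟩
    obtain ⟨T, hT, hTx, hTy⟩ :=
      config_main C r W hbound I x y hIs hx hy hxI hyI hne hI1 hx1 hy1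
    have hIcard : I.card = Bse.card + 4 := by
      rw [hI, Finset.card_union_of_disjoint, hGcard]
      rw [Finset.disjoint_left]
      intro c hcB hcG
      have h1 : c.2 < q := by
        rw [hBse, Finset.mem_filter] at hcB
        exact hcB.2
      have h2 := hPb c ((hGmem c).mp hcG)
      omega
    rw [hcard] at hT
    refine ⟨T, hT, x, hx, y, hy, ?_, ?_, hxy1, hxy2, hdist⟩
    · rw [hTx, hIcard, ht]
    · rw [hTy, hIcard, ht]
  -- the four configurations
  have hcfg2 : ∃ T : ℕ × ℕ → ℕ, IsSYT C g T ∧ ShouldSwap C t 2 T := by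
    refine main4 {(0, q), (0, q + 1), (1, q), (2, q)}
      (fun c => (c.1 = 0 ∧ (c.2 = q ∨ c.2 = q + 1)) ∨ (c.1 = 1 ∧ c.2 = q) ∨ (c.1 = 2 ∧ c.2 = q))
      (0, q + 2) (1, q + 1) 2 ?_ ?_ ?_ (by omega) (by omega) (by omega) (by omega)
      (by omega) (by omega) ?_ ?_ ?_ ?_
    · intro c; simp [Prod.ext_iff]; tauto
    · rw [Finset.card_insert_of_notMem (by simp [Prod.ext_iff]; try omega),
        Finset.card_insert_of_notMem (by simp [Prod.ext_iff]; try omega),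
        Finset.card_insert_of_notMem (by simp [Prod.ext_iff]; try omega),
        Finset.card_singleton]
    · intro c hc; omega
    · intro c hc c' hc' hcc; omega
    · intro c hc hcc; omega
    · intro c hc hcc; omega
    · simp [Nat.dist]; try omega
  have hcfg3 : ∃ T : ℕ × ℕ → ℕ, IsSYT C g T ∧ ShouldSwap C t 3 T := by
    refine main4 {(0, q), (0, q + 1), (0, q + 2), (1, q)}
      (fun c => (c.1 = 0 ∧ (c.2 = q ∨ c.2 = q + 1 ∨ c.2 = q + 2)) ∨ (c.1 = 1 ∧ c.2 = q))
      (0, q + 3) (1, q + 1) 3 ?_ ?_ ?_ (by omega) (by omega) (by omega) (by omega)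
      (by omega) (by omega) ?_ ?_ ?_ ?_
    · intro c; simp [Prod.ext_iff]; tauto
    · rw [Finset.card_insert_of_notMem (by simp [Prod.ext_iff]; try omega),
        Finset.card_insert_of_notMem (by simp [Prod.ext_iff]; try omega),
        Finset.card_insert_of_notMem (by simp [Prod.ext_iff]; try omega),
        Finset.card_singleton]
    · intro c hc; omega
    · intro c hc c' hc' hcc; omega
    · intro c hc hcc; omega
    · intro c hc hcc; omega
    · simp [Nat.dist]; try omega
  have hcfg4 : ∃ T : ℕ × ℕ → ℕ, IsSYT C g T ∧ ShouldSwap C t 4 T := by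
    refine main4 {(0, q), (0, q + 1), (1, q), (1, q + 1)}
      (fun c => (c.1 = 0 ∧ (c.2 = q ∨ c.2 = q + 1)) ∨ (c.1 = 1 ∧ (c.2 = q ∨ c.2 = q + 1)))
      (0, q + 2) (2, q) 4 ?_ ?_ ?_ (by omega) (by omega) (by omega) (by omega)
      (by omega) (by omega) ?_ ?_ ?_ ?_
    · intro c; simp [Prod.ext_iff]; tauto
    · rw [Finset.card_insert_of_notMem (by simp [Prod.ext_iff]; try omega),
        Finset.card_insert_of_notMem (by simp [Prod.ext_iff]; try omega),
        Finset.card_insert_of_notMem (by simp [Prod.ext_iff]; try omega),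
        Finset.card_singleton]
    · intro c hc; omega
    · intro c hc c' hc' hcc; omega
    · intro c hc hcc; omega
    · intro c hc hcc; omega
    · simp [Nat.dist]; try omega
  have hcfg5 : ∃ T : ℕ × ℕ → ℕ, IsSYT C g T ∧ ShouldSwap C t 5 T := by
    refine main4 {(0, q), (0, q + 1), (0, q + 2), (1, q)}
      (fun c => (c.1 = 0 ∧ (c.2 = q ∨ c.2 = q + 1 ∨ c.2 = q + 2)) ∨ (c.1 = 1 ∧ c.2 = q))
      (2, q) (0, q + 3) 5 ?_ ?_ ?_ (by omega) (by omega) (by omega) (by omega)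
      (by omega) (by omega) ?_ ?_ ?_ ?_
    · intro c; simp [Prod.ext_iff]; tauto
    · rw [Finset.card_insert_of_notMem (by simp [Prod.ext_iff]; try omega),
        Finset.card_insert_of_notMem (by simp [Prod.ext_iff]; try omega),
        Finset.card_insert_of_notMem (by simp [Prod.ext_iff]; try omega),
        Finset.card_singleton]
    · intro c hc; omega
    · intro c hc c' hc' hcc; omega
    · intro c hc hcc; omega
    · intro c hc hcc; omega
    · simp [Nat.dist]; try omega
  -- counting
  set M : ℕ → Set (ℕ × ℕ → ℕ) := fun a => {T | IsSYT C g T ∧ ShouldSwap C t a T} with hM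
  set Tot : Set (ℕ × ℕ → ℕ) := {T | IsSYT C g T} with hTot
  have hfin : Tot.Finite := by rw [hTot, hC]; exact syt_finite _ g
  have hMsub : ∀ a, M a ⊆ Tot := fun a T hT => hT.1
  have hMfin : ∀ a, (M a).Finite := fun a => hfin.subset (hMsub a)
  have hdisj : ∀ a a' : ℕ, a ≠ a' → Disjoint (M a) (M a') := by
    intro a a' hanene
    rw [Set.disjoint_left]
    rintro T ⟨hT, c1, hc1, c1', hc1', hv1, hv1', -, -, hd1⟩
      ⟨-, c2, hc2, c2', hc2', hv2, hv2', -, -, hd2⟩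
    have hinj := hT.2.1.2.1
    have e1 : c1 = c2 := hinj (by exact_mod_cast hc1) (by exact_mod_cast hc2)
      (by rw [hv1, hv2])
    have e2 : c1' = c2' := hinj (by exact_mod_cast hc1') (by exact_mod_cast hc2')
      (by rw [hv1', hv2'])
    rw [e1, e2] at hd1
    exact hanene (by omega)
  have hsum : (M 2).ncard + (M 3).ncard + (M 4).ncard + (M 5).ncard ≤ Tot.ncard := by
    have h45 : (M 4 ∪ M 5).ncard = (M 4).ncard + (M 5).ncard :=
      Set.ncard_union_eq (hdisj 4 5 (by omega)) (hMfin 4) (hMfin 5)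
    have h345 : (M 3 ∪ (M 4 ∪ M 5)).ncard = (M 3).ncard + ((M 4 ∪ M 5)).ncard :=
      Set.ncard_union_eq
        (Set.disjoint_union_right.mpr ⟨hdisj 3 4 (by omega), hdisj 3 5 (by omega)⟩)
        (hMfin 3) ((hMfin 4).union (hMfin 5))
    have h2345 : (M 2 ∪ (M 3 ∪ (M 4 ∪ M 5))).ncard =
        (M 2).ncard + ((M 3 ∪ (M 4 ∪ M 5))).ncard :=
      Set.ncard_union_eq
        (by
          rw [Set.disjoint_union_right, Set.disjoint_union_right]
          exact ⟨hdisj 2 3 (by omega), hdisj 2 4 (by omega), hdisj 2 5 (by omega)⟩)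
        (hMfin 2) (((hMfin 3).union ((hMfin 4).union (hMfin 5))))
    have hsub : M 2 ∪ (M 3 ∪ (M 4 ∪ M 5)) ⊆ Tot := by
      intro T hT
      rcases hT with h | h | h | h
      exacts [hMsub 2 h, hMsub 3 h, hMsub 4 h, hMsub 5 h]
    have hle := Set.ncard_le_ncard hsub hfin
    omega
  obtain ⟨a0, ha0, hmin⟩ :=
    Finset.exists_min_image ({2, 3, 4, 5} : Finset ℕ) (fun a => (M a).ncard) ⟨2, by simp⟩
  have ha0' : a0 = 2 ∨ a0 = 3 ∨ a0 = 4 ∨ a0 = 5 := by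
    simp only [Finset.mem_insert, Finset.mem_singleton] at ha0
    tauto
  have hmin2 := hmin 2 (by simp)
  have hmin3 := hmin 3 (by simp)
  have hmin4 := hmin 4 (by simp)
  have hmin5 := hmin 5 (by simp)
  have hkey : ∀ a : ℕ, Nat.card {T : ℕ × ℕ → ℕ // IsSYT C g T ∧
      applyList C [(t, a)] T ≠ T} = (M a).ncard := by
    intro a
    have hseteq : {T : ℕ × ℕ → ℕ | IsSYT C g T ∧ applyList C [(t, a)] T ≠ T} = M a := by
      ext T
      simp only [hM, Set.mem_setOf_eq]
      exact and_congr_right (fun _ => moved_iff C t a T)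
    have h1 : Nat.card {T : ℕ × ℕ → ℕ // IsSYT C g T ∧ applyList C [(t, a)] T ≠ T} =
        Nat.card ↥{T : ℕ × ℕ → ℕ | IsSYT C g T ∧ applyList C [(t, a)] T ≠ T} := rfl
    rw [h1, hseteq, Nat.card_coe_set_eq]
  have hkeyTot : Nat.card {T : ℕ × ℕ → ℕ // IsSYT C g T} = Tot.ncard := by
    have h1 : Nat.card {T : ℕ × ℕ → ℕ // IsSYT C g T} = Nat.card ↥Tot := rfl
    rw [h1, Nat.card_coe_set_eq]
  -- t < g
  have htg : t < g := by
    obtain ⟨T, hT, c1, hc1, c1', hc1', hv1, hv1', -⟩ := hcfg2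
    have := (hT.2.1.1 (by exact_mod_cast hc1')).2
    omega
  have hMa0ne : (M a0).Nonempty := by
    rcases ha0' with rfl | rfl | rfl | rfl
    · obtain ⟨T, h1, h2⟩ := hcfg2; exact ⟨T, h1, h2⟩
    · obtain ⟨T, h1, h2⟩ := hcfg3; exact ⟨T, h1, h2⟩
    · obtain ⟨T, h1, h2⟩ := hcfg4; exact ⟨T, h1, h2⟩
    · obtain ⟨T, h1, h2⟩ := hcfg5; exact ⟨T, h1, h2⟩
  refine ⟨[(t, a0)], ?_, ?_, ?_⟩
  · rintro p hp
    simp only [List.mem_singleton] at hp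
    subst hp
    refine ⟨by omega, htg, by omega⟩
  · obtain ⟨T, hT1, hT2⟩ := hMa0ne
    exact ⟨T, hT1, (moved_iff C t a0 T).mpr hT2⟩
  · rw [hkey a0, hkeyTot]
    rcases ha0' with rfl | rfl | rfl | rfl <;> omega
end

section
/- If r = 1 (so σ(g,1,d,α,β) is a two-row skew diagram), then for any ramification sequences α, β with ρ(g,1,d,α,β) = 0, the group generated by the involutions π_{t,a} acting on the standard Young tableaux of σ(g,1,d,α,β) is the full symmetric group on the set of these tableaux. -/
open Finset
open scoped Classical

namespace EHAux

/-- `cells` is a two-row skew shape: top row `0` on columns `[L, L+A)`,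
bottom row `1` on columns `[0, B)`. -/
def TwoRow (cells : Finset (ℕ × ℕ)) (A B L : ℕ) : Prop :=
  ∀ c : ℕ × ℕ, c ∈ cells ↔ ((c.1 = 0 ∧ L ≤ c.2 ∧ c.2 < L + A) ∨ (c.1 = 1 ∧ c.2 < B))

variable {g A B L : ℕ} {cells : Finset (ℕ × ℕ)}

lemma TwoRow.mem0 (hc : TwoRow cells A B L) {i : ℕ} (hi : i < A) : ((0 : ℕ), L + i) ∈ cells :=
  (hc _).mpr (Or.inl ⟨rfl, by omega, by omega⟩)

lemma TwoRow.mem1 (hc : TwoRow cells A B L) {j : ℕ} (hj : j < B) : ((1 : ℕ), j) ∈ cells :=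
  (hc _).mpr (Or.inr ⟨rfl, hj⟩)

lemma TwoRow.inv0 (hc : TwoRow cells A B L) {j : ℕ} (h : ((0 : ℕ), j) ∈ cells) :
    L ≤ j ∧ j < L + A := by
  rcases (hc _).mp h with h' | h' <;> simp_all

lemma TwoRow.inv1 (hc : TwoRow cells A B L) {j : ℕ} (h : ((1 : ℕ), j) ∈ cells) : j < B := by
  rcases (hc _).mp h with h' | h' <;> simp_all

lemma TwoRow.rows (hc : TwoRow cells A B L) {c : ℕ × ℕ} (h : c ∈ cells) :
    c.1 = 0 ∨ c.1 = 1 := by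
  rcases (hc _).mp h with h' | h' <;> [left; right] <;> exact h'.1

section SYT

variable {T T' : ℕ × ℕ → ℕ}

lemma val_bounds (hT : IsSYT cells g T) {c : ℕ × ℕ} (h : c ∈ cells) :
    1 ≤ T c ∧ T c ≤ g := by
  have := hT.2.1.1 (Finset.mem_coe.mpr h)
  simpa [Set.mem_Icc] using this

lemma cell_inj (hT : IsSYT cells g T) {c c' : ℕ × ℕ} (h : c ∈ cells) (h' : c' ∈ cells)
    (he : T c = T c') : c = c' :=
  hT.2.1.2.1 (Finset.mem_coe.mpr h) (Finset.mem_coe.mpr h') he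

lemma exists_cell (hT : IsSYT cells g T) {v : ℕ} (h1 : 1 ≤ v) (h2 : v ≤ g) :
    ∃ c ∈ cells, T c = v := by
  have := hT.2.1.2.2 (Set.mem_Icc.mpr ⟨h1, h2⟩)
  rcases this with ⟨c, hc, hTc⟩
  exact ⟨c, Finset.mem_coe.mp hc, hTc⟩

lemma row_lt (hT : IsSYT cells g T) {i j j' : ℕ} (h : (i, j) ∈ cells) (h' : (i, j') ∈ cells)
    (hj : j < j') : T (i, j) < T (i, j') := hT.2.2.1 i j j' h h' hj

lemma col_lt (hT : IsSYT cells g T) {i i' j : ℕ} (h : (i, j) ∈ cells) (h' : (i', j) ∈ cells)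
    (hi : i < i') : T (i, j) < T (i', j) := hT.2.2.2 i i' j h h' hi

lemma swap_eq (t x : ℕ) :
    Equiv.swap t (t + 1) x = if x = t then t + 1 else if x = t + 1 then t else x :=
  Equiv.swap_apply_def t (t + 1) x

/-- Swapping the values `t, t+1` when they sit in different rows and different
columns preserves standardness. -/
lemma swap_isSYT (hT : IsSYT cells g T) {t : ℕ} {c c' : ℕ × ℕ}
    (hmc : c ∈ cells) (hmc' : c' ∈ cells) (hvc : T c = t) (hvc' : T c' = t + 1)
    (hrow : c.1 ≠ c'.1) (hcol : c.2 ≠ c'.2) : IsSYT cells g (swapVals t T) := by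
  obtain ⟨hzero, hbij, hrowlt, hcollt⟩ := hT
  have ht1 : 1 ≤ t := by
    have := hbij.1 (Finset.mem_coe.mpr hmc); rw [hvc] at this; exact (Set.mem_Icc.mp this).1
  have ht2 : t + 1 ≤ g := by
    have := hbij.1 (Finset.mem_coe.mpr hmc'); rw [hvc'] at this; exact (Set.mem_Icc.mp this).2
  -- key order-preservation fact
  have key : ∀ u v : ℕ, u < v → ¬(u = t ∧ v = t + 1) →
      Equiv.swap t (t + 1) u < Equiv.swap t (t + 1) v := by
    intro u v huv hne
    rw [swap_eq, swap_eq]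
    split_ifs <;> omega
  refine ⟨?_, ?_, ?_, ?_⟩
  · intro x hx
    have h0 : T x = 0 := hzero x hx
    show Equiv.swap t (t + 1) (T x) = 0
    rw [h0, swap_eq, if_neg (by omega : ¬ (0 = t)), if_neg (by omega : ¬ (0 = t + 1))]
  · have hswap : Set.BijOn (⇑(Equiv.swap t (t + 1))) (Set.Icc 1 g) (Set.Icc 1 g) := by
      refine ⟨?_, (Equiv.swap t (t + 1)).injective.injOn, ?_⟩
      · intro v hv
        simp only [Set.mem_Icc] at hv ⊢
        rw [swap_eq]; split_ifs <;> omega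
      · intro v hv
        refine ⟨Equiv.swap t (t + 1) v, ?_, by simp⟩
        simp only [Set.mem_Icc] at hv ⊢
        rw [swap_eq]; split_ifs <;> omega
    exact hswap.comp hbij
  · intro i j j' h1 h2 hj
    have hlt := hrowlt i j j' h1 h2 hj
    refine key _ _ hlt ?_
    rintro ⟨e1, e2⟩
    have hc1 : (i, j) = c := hbij.2.1 (Finset.mem_coe.mpr h1) (Finset.mem_coe.mpr hmc) (by rw [e1, hvc])
    have hc2 : (i, j') = c' := hbij.2.1 (Finset.mem_coe.mpr h2) (Finset.mem_coe.mpr hmc') (by rw [e2, hvc'])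
    apply hrow
    rw [← hc1, ← hc2]
  · intro i i' j h1 h2 hi
    have hlt := hcollt i i' j h1 h2 hi
    refine key _ _ hlt ?_
    rintro ⟨e1, e2⟩
    have hc1 : (i, j) = c := hbij.2.1 (Finset.mem_coe.mpr h1) (Finset.mem_coe.mpr hmc) (by rw [e1, hvc])
    have hc2 : (i', j) = c' := hbij.2.1 (Finset.mem_coe.mpr h2) (Finset.mem_coe.mpr hmc') (by rw [e2, hvc'])
    apply hcol
    rw [← hc1, ← hc2]

/-- `t` in the bottom row, `t+1` in the top row (a "valley"), with
`a = 1 +` column distance. -/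
def VlyD (cells : Finset (ℕ × ℕ)) (T : ℕ × ℕ → ℕ) (t a : ℕ) : Prop :=
  ∃ j j', ((1 : ℕ), j) ∈ cells ∧ T (1, j) = t ∧ ((0 : ℕ), j') ∈ cells ∧ T (0, j') = t + 1 ∧
    j ≠ j' ∧ 1 + Nat.dist j j' = a

/-- `t` in the top row, `t+1` in the bottom row (a "peak"), with
`a = 1 +` column distance. -/
def PkD (cells : Finset (ℕ × ℕ)) (T : ℕ × ℕ → ℕ) (t a : ℕ) : Prop :=
  ∃ j j', ((0 : ℕ), j) ∈ cells ∧ T (0, j) = t ∧ ((1 : ℕ), j') ∈ cells ∧ T (1, j') = t + 1 ∧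
    j ≠ j' ∧ 1 + Nat.dist j j' = a

/-- In a valley the columns are automatically distinct. -/
lemma vly_col_ne (hT : IsSYT cells g T) {t j j' : ℕ}
    (h1 : ((1 : ℕ), j) ∈ cells) (hv1 : T (1, j) = t)
    (h2 : ((0 : ℕ), j') ∈ cells) (hv2 : T (0, j') = t + 1) : j ≠ j' := by
  rintro rfl
  have := col_lt hT h2 h1 (by omega)
  omega

lemma dist_one_zero : Nat.dist 1 0 = 1 := rfl
lemma dist_zero_one : Nat.dist 0 1 = 1 := rfl

lemma shouldSwap_iff (hc : TwoRow cells A B L) (hT : IsSYT cells g T) {t a : ℕ} :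
    ShouldSwap cells t a T ↔ (VlyD cells T t a ∨ PkD cells T t a) := by
  constructor
  · rintro ⟨c, hm, c', hm', hv, hv', hrow, hcol, hdist⟩
    rcases hc.rows hm with h0 | h1 <;> rcases hc.rows hm' with h0' | h1'
    · exact absurd (h0.trans h0'.symm) hrow
    · have e : c = (0, c.2) := Prod.ext h0 rfl
      have e' : c' = (1, c'.2) := Prod.ext h1' rfl
      rw [h0, h1', dist_zero_one] at hdist
      rw [e] at hm hv; rw [e'] at hm' hv'
      exact Or.inr ⟨c.2, c'.2, hm, hv, hm', hv', hcol, hdist⟩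
    · have e : c = (1, c.2) := Prod.ext h1 rfl
      have e' : c' = (0, c'.2) := Prod.ext h0' rfl
      rw [h1, h0', dist_one_zero] at hdist
      rw [e] at hm hv; rw [e'] at hm' hv'
      exact Or.inl ⟨c.2, c'.2, hm, hv, hm', hv', hcol, hdist⟩
    · exact absurd (h1.trans h1'.symm) hrow
  · rintro (⟨j, j', hm, hv, hm', hv', hne, hdist⟩ | ⟨j, j', hm, hv, hm', hv', hne, hdist⟩)
    · exact ⟨(1, j), hm, (0, j'), hm', hv, hv', by simp, by simpa using hne,
        by simpa [dist_one_zero] using hdist⟩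
    · exact ⟨(0, j), hm, (1, j'), hm', hv, hv', by simp, by simpa using hne,
        by simpa [dist_zero_one] using hdist⟩

lemma piAct_of_shouldSwap {t a : ℕ} (h : ShouldSwap cells t a T) :
    piAct cells t a T = swapVals t T := if_pos h

lemma piAct_of_not_shouldSwap {t a : ℕ} (h : ¬ ShouldSwap cells t a T) :
    piAct cells t a T = T := if_neg h

lemma piAct_isSYT (hT : IsSYT cells g T) (t a : ℕ) : IsSYT cells g (piAct cells t a T) := by
  by_cases h : ShouldSwap cells t a T
  · rw [piAct_of_shouldSwap h]
    obtain ⟨c, hm, c', hm', hv, hv', hrow, hcol, _⟩ := h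
    exact swap_isSYT hT hm hm' hv hv' hrow hcol
  · rw [piAct_of_not_shouldSwap h]; exact hT

lemma swapVals_swapVals (t : ℕ) (T : ℕ × ℕ → ℕ) : swapVals t (swapVals t T) = T := by
  funext c
  simp [swapVals]

lemma piAct_invol (hT : IsSYT cells g T) (t a : ℕ) :
    piAct cells t a (piAct cells t a T) = T := by
  by_cases h : ShouldSwap cells t a T
  · rw [piAct_of_shouldSwap h]
    have h2 : ShouldSwap cells t a (swapVals t T) := by
      obtain ⟨c, hm, c', hm', hv, hv', hrow, hcol, hdist⟩ := h
      refine ⟨c', hm', c, hm, ?_, ?_, by omega, by omega, ?_⟩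
      · simp [swapVals, hv']
      · simp [swapVals, hv]
      · rw [Nat.dist_comm c'.1 c.1, Nat.dist_comm c'.2 c.2]; exact hdist
    rw [piAct_of_shouldSwap h2, swapVals_swapVals]
  · rw [piAct_of_not_shouldSwap h, piAct_of_not_shouldSwap h]

lemma piAct_inj (hT : IsSYT cells g T) (hT' : IsSYT cells g T') {t a : ℕ}
    (h : piAct cells t a T = piAct cells t a T') : T = T' := by
  have := piAct_invol hT t a
  rw [h, piAct_invol hT' t a] at this
  exact this.symm

lemma applyList_nil (T : ℕ × ℕ → ℕ) : applyList cells [] T = T := rfl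

lemma applyList_cons (p : ℕ × ℕ) (l : List (ℕ × ℕ)) (T : ℕ × ℕ → ℕ) :
    applyList cells (p :: l) T = applyList cells l (piAct cells p.1 p.2 T) := rfl

lemma applyList_append (l₁ l₂ : List (ℕ × ℕ)) (T : ℕ × ℕ → ℕ) :
    applyList cells (l₁ ++ l₂) T = applyList cells l₂ (applyList cells l₁ T) := by
  unfold applyList
  rw [List.foldl_append]

lemma applyList_isSYT (hT : IsSYT cells g T) (l : List (ℕ × ℕ)) :
    IsSYT cells g (applyList cells l T) := by
  induction l generalizing T with
  | nil => exact hT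
  | cons p l ih => rw [applyList_cons]; exact ih (piAct_isSYT hT p.1 p.2)

lemma applyList_reverse (hT : IsSYT cells g T) (l : List (ℕ × ℕ)) :
    applyList cells l.reverse (applyList cells l T) = T := by
  induction l generalizing T with
  | nil => rfl
  | cons p l ih =>
    rw [applyList_cons, List.reverse_cons, applyList_append,
      ih (piAct_isSYT hT p.1 p.2)]
    have : applyList cells [p] (piAct cells p.1 p.2 T) =
        piAct cells p.1 p.2 (piAct cells p.1 p.2 T) := rfl
    rw [this, piAct_invol hT]

lemma applyList_injOn (hT : IsSYT cells g T) (hT' : IsSYT cells g T') (l : List (ℕ × ℕ))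
    (h : applyList cells l T = applyList cells l T') : T = T' := by
  have h1 := applyList_reverse hT l
  rw [h, applyList_reverse hT' l] at h1
  exact h1.symm

end SYT

end EHAux

namespace EHAux

variable {g A B L : ℕ} {cells : Finset (ℕ × ℕ)} {T T' : ℕ × ℕ → ℕ}

/-- The set of values in the top row. -/
def topVals (A L : ℕ) (T : ℕ × ℕ → ℕ) : Finset ℕ := (range A).image fun i => T (0, L + i)

/-- The set of values in the bottom row. -/
def botVals (B : ℕ) (T : ℕ × ℕ → ℕ) : Finset ℕ := (range B).image fun j => T (1, j)

lemma mem_topVals {v : ℕ} : v ∈ topVals A L T ↔ ∃ i < A, T (0, L + i) = v := by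
  simp [topVals]

lemma mem_botVals {v : ℕ} : v ∈ botVals B T ↔ ∃ j < B, T (1, j) = v := by
  simp [botVals]

lemma top_injOn (hc : TwoRow cells A B L) (hT : IsSYT cells g T) :
    Set.InjOn (fun i => T (0, L + i)) (range A) := by
  intro i hi k hk he
  simp only [Finset.coe_range, Set.mem_Iio] at hi hk
  have := cell_inj hT (hc.mem0 hi) (hc.mem0 hk) he
  simpa using this

lemma bot_injOn (hc : TwoRow cells A B L) (hT : IsSYT cells g T) :
    Set.InjOn (fun j => T (1, j)) (range B) := by
  intro i hi k hk he
  simp only [Finset.coe_range, Set.mem_Iio] at hi hk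
  have := cell_inj hT (hc.mem1 hi) (hc.mem1 hk) he
  simpa using this

lemma card_topVals (hc : TwoRow cells A B L) (hT : IsSYT cells g T) :
    (topVals A L T).card = A := by
  rw [topVals, Finset.card_image_of_injOn (top_injOn hc hT), Finset.card_range]

lemma card_botVals (hc : TwoRow cells A B L) (hT : IsSYT cells g T) :
    (botVals B T).card = B := by
  rw [botVals, Finset.card_image_of_injOn (bot_injOn hc hT), Finset.card_range]

lemma topVals_bounds (hc : TwoRow cells A B L) (hT : IsSYT cells g T) {v : ℕ}
    (h : v ∈ topVals A L T) : 1 ≤ v ∧ v ≤ g := by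
  rcases mem_topVals.mp h with ⟨i, hi, he⟩
  rw [← he]; exact val_bounds hT (hc.mem0 hi)

lemma botVals_bounds (hc : TwoRow cells A B L) (hT : IsSYT cells g T) {v : ℕ}
    (h : v ∈ botVals B T) : 1 ≤ v ∧ v ≤ g := by
  rcases mem_botVals.mp h with ⟨j, hj, he⟩
  rw [← he]; exact val_bounds hT (hc.mem1 hj)

lemma top_or_bot (hc : TwoRow cells A B L) (hT : IsSYT cells g T) {v : ℕ}
    (h1 : 1 ≤ v) (h2 : v ≤ g) : v ∈ topVals A L T ∨ v ∈ botVals B T := by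
  obtain ⟨c, hm, he⟩ := exists_cell hT h1 h2
  rcases hc.rows hm with h0 | hr1
  · left
    have e : c = (0, c.2) := Prod.ext h0 rfl
    rw [e] at hm he
    obtain ⟨hL, hA⟩ := hc.inv0 hm
    exact mem_topVals.mpr ⟨c.2 - L, by omega, by rw [show L + (c.2 - L) = c.2 by omega]; exact he⟩
  · right
    have e : c = (1, c.2) := Prod.ext hr1 rfl
    rw [e] at hm he
    exact mem_botVals.mpr ⟨c.2, hc.inv1 hm, he⟩

lemma top_bot_disj (hc : TwoRow cells A B L) (hT : IsSYT cells g T) {v : ℕ}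
    (h1 : v ∈ topVals A L T) (h2 : v ∈ botVals B T) : False := by
  rcases mem_topVals.mp h1 with ⟨i, hi, he⟩
  rcases mem_botVals.mp h2 with ⟨j, hj, he'⟩
  have := cell_inj hT (hc.mem0 hi) (hc.mem1 hj) (he.trans he'.symm)
  simp at this

lemma botVals_eq_compl (hc : TwoRow cells A B L) (hT : IsSYT cells g T) :
    botVals B T = Finset.Icc 1 g \ topVals A L T := by
  ext v
  simp only [Finset.mem_sdiff, Finset.mem_Icc]
  constructor
  · intro h
    exact ⟨botVals_bounds hc hT h, fun h' => top_bot_disj hc hT h' h⟩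
  · rintro ⟨⟨h1, h2⟩, hnt⟩
    rcases top_or_bot hc hT h1 h2 with h | h
    · exact absurd h hnt
    · exact h

/-- The number of smaller values in the same (top) row equals the offset. -/
lemma card_filter_top (hc : TwoRow cells A B L) (hT : IsSYT cells g T) {i : ℕ} (hi : i < A) :
    ((topVals A L T).filter (· < T (0, L + i))).card = i := by
  rw [topVals, Finset.filter_image]
  rw [Finset.card_image_of_injOn ((top_injOn hc hT).mono (by
    intro x hx; simp only [Finset.coe_filter, Set.mem_setOf_eq] at hx
    simp only [Finset.coe_range, Set.mem_Iio]; exact (Finset.mem_range.mp hx.1)))]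
  have : (range A).filter (fun k => T (0, L + k) < T (0, L + i)) = range i := by
    ext k
    simp only [Finset.mem_filter, Finset.mem_range]
    constructor
    · rintro ⟨hk, hlt⟩
      by_contra hki
      rcases Nat.lt_or_ge k i with h | h
      · exact hki h
      · rcases Nat.eq_or_lt_of_le h with rfl | h
        · omega
        · have := row_lt hT (hc.mem0 hi) (hc.mem0 hk) (by omega)
          omega
    · intro hk
      exact ⟨by omega, row_lt hT (hc.mem0 (by omega)) (hc.mem0 hi) (by omega)⟩
  rw [this, Finset.card_range]

lemma card_filter_bot (hc : TwoRow cells A B L) (hT : IsSYT cells g T) {j : ℕ} (hj : j < B) :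
    ((botVals B T).filter (· < T (1, j))).card = j := by
  rw [botVals, Finset.filter_image]
  rw [Finset.card_image_of_injOn ((bot_injOn hc hT).mono (by
    intro x hx; simp only [Finset.coe_filter, Set.mem_setOf_eq] at hx
    simp only [Finset.coe_range, Set.mem_Iio]; exact (Finset.mem_range.mp hx.1)))]
  have : (range B).filter (fun k => T (1, k) < T (1, j)) = range j := by
    ext k
    simp only [Finset.mem_filter, Finset.mem_range]
    constructor
    · rintro ⟨hk, hlt⟩
      by_contra hkj
      rcases Nat.lt_or_ge k j with h | h
      · exact hkj h
      · rcases Nat.eq_or_lt_of_le h with rfl | h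
        · omega
        · have := row_lt hT (hc.mem1 hj) (hc.mem1 hk) (by omega)
          omega
    · intro hk
      exact ⟨by omega, row_lt hT (hc.mem1 (by omega)) (hc.mem1 hj) (by omega)⟩
  rw [this, Finset.card_range]

/-- A standard tableau on a two-row shape is determined by its set of top-row values. -/
lemma eq_of_topVals (hc : TwoRow cells A B L) (hT : IsSYT cells g T) (hT' : IsSYT cells g T')
    (h : topVals A L T = topVals A L T') : T = T' := by
  have hbot : botVals B T = botVals B T' := by
    rw [botVals_eq_compl hc hT, botVals_eq_compl hc hT', h]
  funext c
  by_cases hm : c ∈ cells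
  · rcases hc.rows hm with h0 | h1
    · have e : c = (0, c.2) := Prod.ext h0 rfl
      rw [e] at hm ⊢
      obtain ⟨hL, hA⟩ := hc.inv0 hm
      obtain ⟨i, hci, hi⟩ : ∃ i, c.2 = L + i ∧ i < A := ⟨c.2 - L, by omega, by omega⟩
      rw [hci]
      have hv : T (0, L + i) ∈ topVals A L T' := by
        rw [← h]; exact mem_topVals.mpr ⟨i, hi, rfl⟩
      rcases mem_topVals.mp hv with ⟨k, hk, he⟩
      have h1c := card_filter_top hc hT hi
      have h2c := card_filter_top hc hT' hk
      rw [he, ← h] at h2c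
      have hik : i = k := by rw [← h1c, ← h2c]
      rw [hik] at he ⊢
      exact he.symm
    · have e : c = (1, c.2) := Prod.ext h1 rfl
      rw [e] at hm ⊢
      have hj : c.2 < B := hc.inv1 hm
      have hv : T (1, c.2) ∈ botVals B T' := by
        rw [← hbot]; exact mem_botVals.mpr ⟨c.2, hj, rfl⟩
      rcases mem_botVals.mp hv with ⟨k, hk, he⟩
      have h1c := card_filter_bot hc hT hj
      have h2c := card_filter_bot hc hT' hk
      rw [he, ← hbot] at h2c
      have hik : c.2 = k := by rw [← h1c, ← h2c]
      rw [hik] at he ⊢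
      exact he.symm
  · rw [hT.1 c hm, hT'.1 c hm]

end EHAux

namespace EHAux

variable {g A B L : ℕ} {cells : Finset (ℕ × ℕ)} {T T' : ℕ × ℕ → ℕ}

/-- The top tableau: values `1,…,A` in the top row, `A+1,…,g` in the bottom row. -/
def P1 (A B L : ℕ) : ℕ × ℕ → ℕ := fun c =>
  if c.1 = 0 ∧ L ≤ c.2 ∧ c.2 < L + A then c.2 - L + 1
  else if c.1 = 1 ∧ c.2 < B then A + c.2 + 1 else 0

/-- The second tableau: like `P1` but with `A` and `A+1` exchanged. -/
def P2 (A B L : ℕ) : ℕ × ℕ → ℕ := swapVals A (P1 A B L)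

lemma P1_top {i : ℕ} (hi : i < A) : P1 A B L (0, L + i) = i + 1 := by
  rw [P1, if_pos ⟨rfl, by omega, by omega⟩]
  omega

lemma P1_top' {j : ℕ} (h1 : L ≤ j) (h2 : j < L + A) : P1 A B L ((0 : ℕ), j) = j - L + 1 := by
  rw [P1, if_pos ⟨rfl, h1, h2⟩]

lemma P1_bot {j : ℕ} (hj : j < B) : P1 A B L (1, j) = A + j + 1 := by
  rw [P1, if_neg (by simp), if_pos ⟨rfl, hj⟩]

lemma hval0 (hc : TwoRow cells A B L) (hA : 1 ≤ A) :
    ∀ i j : ℕ, ((i : ℕ), (j : ℕ)) ∈ cells →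
      (i = 0 ∧ L ≤ j ∧ j < L + A ∧ P1 A B L (i, j) = j - L + 1) ∨
      (i = 1 ∧ j < B ∧ P1 A B L (i, j) = A + j + 1) := by
    intro i j hm
    rcases (hc _).mp hm with ⟨h0, hL, hA'⟩ | ⟨h1, hB⟩
    · simp only at h0 hL hA'
      refine Or.inl ⟨h0, hL, hA', ?_⟩
      rw [h0]
      exact P1_top' hL hA'
    · simp only at h1 hB
      refine Or.inr ⟨h1, hB, ?_⟩
      rw [h1]
      exact P1_bot hB

lemma P1_isSYT (hc : TwoRow cells A B L) (hA : 1 ≤ A) (hAB : A + B = g) :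
    IsSYT cells g (P1 A B L) := by
  have hval : ∀ c : ℕ × ℕ, c ∈ cells →
      (c.1 = 0 ∧ L ≤ c.2 ∧ c.2 < L + A ∧ P1 A B L c = c.2 - L + 1) ∨
      (c.1 = 1 ∧ c.2 < B ∧ P1 A B L c = A + c.2 + 1) := by
    intro c hm
    have h := hval0 hc hA c.1 c.2 (by rwa [Prod.mk.eta])
    rwa [Prod.mk.eta] at h
  refine ⟨?_, ⟨?_, ?_, ?_⟩, ?_, ?_⟩
  · intro c hm
    rw [hc c, not_or] at hm
    rw [P1, if_neg hm.1, if_neg hm.2]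
  · intro c hm
    rw [Finset.mem_coe] at hm
    rcases hval c hm with ⟨h0, hL, hA', hv⟩ | ⟨h1, hB, hv⟩ <;> rw [hv] <;>
      simp only [Set.mem_Icc] <;> omega
  · intro c hm c' hm' he
    rw [Finset.mem_coe] at hm hm'
    rcases hval c hm with ⟨h0, hL, hA', hv⟩ | ⟨h1, hB, hv⟩ <;>
      rcases hval c' hm' with ⟨h0', hL', hA'', hv'⟩ | ⟨h1', hB', hv'⟩ <;>
        rw [hv, hv'] at he <;>
          exact Prod.ext (by omega) (by omega)
  · intro v hv
    simp only [Set.mem_Icc] at hv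
    by_cases hvA : v ≤ A
    · refine ⟨((0 : ℕ), L + (v - 1)), ?_, ?_⟩
      · rw [Finset.mem_coe, hc _]
        exact Or.inl ⟨rfl, by omega, by omega⟩
      · rw [P1_top (by omega : v - 1 < A)]; omega
    · refine ⟨((1 : ℕ), v - A - 1), ?_, ?_⟩
      · rw [Finset.mem_coe, hc _]
        exact Or.inr ⟨rfl, by omega⟩
      · rw [P1_bot (by omega : v - A - 1 < B)]; omega
  · intro i j j' hm hm' hjj
    have hv := hval0 hc hA i j hm
    have hv' := hval0 hc hA i j' hm'
    rcases hv with ⟨h0, hL, hA', hv⟩ | ⟨h0, hB, hv⟩ <;>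
      rcases hv' with ⟨h0', hL', hA'', hv'⟩ | ⟨h0', hB', hv'⟩ <;> rw [hv, hv'] <;> omega
  · intro i i' j hm hm' hii
    have hv := hval0 hc hA i j hm
    have hv' := hval0 hc hA i' j hm'
    rcases hv with ⟨h0, hL, hA', hv⟩ | ⟨h0, hB, hv⟩ <;>
      rcases hv' with ⟨h0', hL', hA'', hv'⟩ | ⟨h0', hB', hv'⟩ <;> rw [hv, hv'] <;> omega

lemma topVals_P1 (hA : 1 ≤ A) : topVals A L (P1 A B L) = Finset.Icc 1 A := by
  ext v
  rw [mem_topVals, Finset.mem_Icc]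
  constructor
  · rintro ⟨i, hi, he⟩
    rw [P1_top hi] at he
    omega
  · intro hv
    exact ⟨v - 1, by omega, by rw [P1_top (by omega)]; omega⟩

lemma P2_top {i : ℕ} (hi : i < A) :
    P2 A B L (0, L + i) = if i = A - 1 then A + 1 else i + 1 := by
  rw [P2, swapVals, P1_top hi, swap_eq]
  split_ifs <;> omega

lemma P2_bot {j : ℕ} (hj : j < B) :
    P2 A B L (1, j) = if j = 0 then A else A + j + 1 := by
  rw [P2, swapVals, P1_bot hj, swap_eq]
  split_ifs <;> omega

lemma tau_shouldSwap_P1 (hc : TwoRow cells A B L) (hA : 1 ≤ A) (hB : 1 ≤ B)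
    (hLA : 2 ≤ L + A) : ShouldSwap cells A (L + A) (P1 A B L) := by
  refine ⟨(0, L + (A - 1)), hc.mem0 (by omega), (1, 0), hc.mem1 (by omega), ?_, ?_, ?_, ?_, ?_⟩
  · rw [P1_top (by omega)]; omega
  · rw [P1_bot (by omega)]
  · show (0 : ℕ) ≠ 1
    omega
  · show L + (A - 1) ≠ 0
    omega
  · rw [dist_zero_one]
    have : Nat.dist (L + (A - 1)) 0 = L + (A - 1) := by simp [Nat.dist]
    rw [this]; omega

lemma P2_isSYT (hc : TwoRow cells A B L) (hA : 1 ≤ A) (hB : 1 ≤ B) (hLA : 2 ≤ L + A)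
    (hAB : A + B = g) : IsSYT cells g (P2 A B L) := by
  obtain ⟨c, hm, c', hm', hv, hv', hrow, hcol, _⟩ := tau_shouldSwap_P1 hc hA hB hLA
  exact swap_isSYT (P1_isSYT hc hA hAB) hm hm' hv hv' hrow hcol

lemma piAct_tau_P1 (hc : TwoRow cells A B L) (hA : 1 ≤ A) (hB : 1 ≤ B) (hLA : 2 ≤ L + A) :
    piAct cells A (L + A) (P1 A B L) = P2 A B L :=
  piAct_of_shouldSwap (tau_shouldSwap_P1 hc hA hB hLA)

lemma P1_ne_P2 (hB : 1 ≤ B) : P1 A B L ≠ P2 A B L := by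
  intro h
  have := congrFun h (1, 0)
  rw [P1_bot hB, P2_bot hB, if_pos rfl] at this
  omega

lemma topVals_P2 (hA : 1 ≤ A) :
    topVals A L (P2 A B L) = insert (A + 1) (Finset.Icc 1 (A - 1)) := by
  ext v
  rw [mem_topVals, Finset.mem_insert, Finset.mem_Icc]
  constructor
  · rintro ⟨i, hi, he⟩
    rw [P2_top hi] at he
    split_ifs at he <;> omega
  · rintro (rfl | hv)
    · exact ⟨A - 1, by omega, by rw [P2_top (by omega), if_pos rfl]⟩
    · refine ⟨v - 1, by omega, ?_⟩
      rw [P2_top (by omega), if_neg (by omega)]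
      omega

end EHAux

namespace EHAux

variable {g A B L : ℕ} {cells : Finset (ℕ × ℕ)} {T T' : ℕ × ℕ → ℕ}

/-- `t` is in the bottom row and `t+1` in the top row. -/
def Vly (cells : Finset (ℕ × ℕ)) (T : ℕ × ℕ → ℕ) (t : ℕ) : Prop :=
  ∃ j j', ((1 : ℕ), j) ∈ cells ∧ T (1, j) = t ∧ ((0 : ℕ), j') ∈ cells ∧ T (0, j') = t + 1

lemma vlyD_of_vly (hc : TwoRow cells A B L) (hT : IsSYT cells g T) {t : ℕ}
    (h : Vly cells T t) : ∃ a, VlyD cells T t a ∧ 1 ≤ t ∧ t < g ∧ 1 ≤ a := by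
  obtain ⟨j, j', hm, hv, hm', hv'⟩ := h
  have hne : j ≠ j' := vly_col_ne hT hm hv hm' hv'
  refine ⟨1 + Nat.dist j j', ⟨j, j', hm, hv, hm', hv', hne, rfl⟩, ?_, ?_, by omega⟩
  · have := val_bounds hT hm; omega
  · have := val_bounds hT hm'; omega

lemma botVals_up_closed (hc : TwoRow cells A B L) (hT : IsSYT cells g T)
    (hnv : ∀ t, ¬ Vly cells T t) {v : ℕ} (hv : v ∈ botVals B T) :
    ∀ u, v ≤ u → u ≤ g → u ∈ botVals B T := by
  intro u hvu
  induction u, hvu using Nat.le_induction with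
  | base =>
    intro _; exact hv
  | succ u hu ih =>
    intro hug
    have hb := ih (by omega)
    have hbnd := botVals_bounds hc hT hb
    rcases top_or_bot hc hT (v := u + 1) (by omega) hug with ht | hb'
    · exfalso
      rcases mem_botVals.mp hb with ⟨j, hj, he⟩
      rcases mem_topVals.mp ht with ⟨i, hi, he'⟩
      exact hnv u ⟨j, L + i, hc.mem1 hj, he, hc.mem0 hi, he'⟩
    · exact hb'

lemma novly_eq_P1 (hc : TwoRow cells A B L) (hT : IsSYT cells g T) (hA : 1 ≤ A)
    (hAB : A + B = g) (hnv : ∀ t, ¬ Vly cells T t) : T = P1 A B L := by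
  have hsub : botVals B T ⊆ Finset.Icc (A + 1) g := by
    intro v hv
    have hbnd := botVals_bounds hc hT hv
    rw [Finset.mem_Icc]
    by_contra hcon
    have hup := botVals_up_closed hc hT hnv hv
    have hsub2 : Finset.Icc v g ⊆ botVals B T := by
      intro u hu
      rw [Finset.mem_Icc] at hu
      exact hup u hu.1 hu.2
    have hcard := Finset.card_le_card hsub2
    rw [Nat.card_Icc, card_botVals hc hT] at hcard
    omega
  have hbot : botVals B T = Finset.Icc (A + 1) g := by
    apply Finset.eq_of_subset_of_card_le hsub
    rw [Nat.card_Icc, card_botVals hc hT]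
    omega
  have htop : topVals A L T = Finset.Icc 1 A := by
    ext v
    rw [Finset.mem_Icc]
    constructor
    · intro hv
      have hbnd := topVals_bounds hc hT hv
      refine ⟨hbnd.1, ?_⟩
      by_contra hcon
      exact top_bot_disj hc hT hv (by rw [hbot, Finset.mem_Icc]; omega)
    · intro hv
      rcases top_or_bot hc hT hv.1 (by omega) with h | h
      · exact h
      · rw [hbot, Finset.mem_Icc] at h
        omega
  exact eq_of_topVals hc hT (P1_isSYT hc hA hAB) (by rw [htop, topVals_P1 hA])

lemma exists_vly (hc : TwoRow cells A B L) (hT : IsSYT cells g T) (hA : 1 ≤ A)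
    (hAB : A + B = g) (hne : T ≠ P1 A B L) : ∃ t, Vly cells T t := by
  by_contra h
  push_neg at h
  exact hne (novly_eq_P1 hc hT hA hAB h)

/-- If the tableau `P1` has a "peak" at `(t, a)`, then `t = A` and `a = L + A`. -/
lemma pkD_P1 (hc : TwoRow cells A B L) (hA : 1 ≤ A) {t a : ℕ}
    (h : PkD cells (P1 A B L) t a) : t = A ∧ a = L + A := by
  obtain ⟨x, y, hmx, hvx, hmy, hvy, hne, hdist⟩ := h
  obtain ⟨hLx, hxA⟩ := hc.inv0 hmx
  have hyB := hc.inv1 hmy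
  rw [P1_top' hLx hxA] at hvx
  rw [P1_bot hyB] at hvy
  have hd : Nat.dist x y = x - y + (y - x) := rfl
  omega

/-- The auxiliary set of values in all top cells but the last. -/
lemma top_prefix_eq (hc : TwoRow cells A B L) (hT : IsSYT cells g T) (hA : 1 ≤ A)
    (hsmall : ∀ i, i < A - 1 → T (0, L + i) < A) :
    (range (A - 1)).image (fun i => T (0, L + i)) = Finset.Icc 1 (A - 1) := by
  apply Finset.eq_of_subset_of_card_le
  · intro v hv
    rcases Finset.mem_image.mp hv with ⟨i, hi, he⟩
    rw [Finset.mem_range] at hi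
    have hb := val_bounds hT (hc.mem0 (show i < A by omega))
    have := hsmall i hi
    rw [Finset.mem_Icc]
    omega
  · rw [Nat.card_Icc, Finset.card_image_of_injOn ((top_injOn hc hT).mono (by
      intro x hx
      simp only [Finset.coe_range, Set.mem_Iio] at hx ⊢
      omega)), Finset.card_range]
    omega

lemma topVals_last (hc : TwoRow cells A B L) (hT : IsSYT cells g T) (hA : 1 ≤ A)
    (hsmall : ∀ i, i < A - 1 → T (0, L + i) < A) :
    topVals A L T = insert (T (0, L + (A - 1))) (Finset.Icc 1 (A - 1)) := by
  rw [← top_prefix_eq hc hT hA hsmall]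
  ext v
  rw [mem_topVals, Finset.mem_insert, Finset.mem_image]
  constructor
  · rintro ⟨i, hi, he⟩
    rcases Nat.lt_or_ge i (A - 1) with h | h
    · exact Or.inr ⟨i, Finset.mem_range.mpr h, he⟩
    · left
      have hieq : i = A - 1 := by omega
      rw [hieq] at he
      exact he.symm
  · rintro (rfl | ⟨i, hi, he⟩)
    · exact ⟨A - 1, by omega, rfl⟩
    · exact ⟨i, by have := Finset.mem_range.mp hi; omega, he⟩

/-- Counting: `y` bottom cells with values `< A` forces `y ≤ A - 1`. -/
lemma bot_count (hc : TwoRow cells A B L) (hT : IsSYT cells g T) {y : ℕ} (hy : y ≤ B)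
    (hb : ∀ k, k < y → 1 ≤ T (1, k) ∧ T (1, k) < A) : y ≤ A - 1 := by
  have hs : (range y).image (fun k => T (1, k)) ⊆ Finset.Icc 1 (A - 1) := by
    intro v hv
    rcases Finset.mem_image.mp hv with ⟨k, hk, he⟩
    rw [Finset.mem_range] at hk
    have := hb k hk
    rw [Finset.mem_Icc]
    omega
  have hcard : ((range y).image (fun k => T (1, k))).card = y := by
    rw [Finset.card_image_of_injOn ((bot_injOn hc hT).mono (by
      intro x hx
      simp only [Finset.coe_range, Set.mem_Iio] at hx ⊢
      omega)), Finset.card_range]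
  have := Finset.card_le_card hs
  rw [hcard, Nat.card_Icc] at this
  omega

/-- Characterization of the tableaux moved by `π_{A, L+A}`: only `P1` and `P2`. -/
lemma tau_char (hc : TwoRow cells A B L) (hT : IsSYT cells g T) (hA : 1 ≤ A) (hB : 1 ≤ B)
    (hLA : 2 ≤ L + A) (hAB : A + B = g) (h : ShouldSwap cells A (L + A) T) :
    T = P1 A B L ∨ T = P2 A B L := by
  rw [shouldSwap_iff hc hT] at h
  rcases h with ⟨y, x, hmy, hvy, hmx, hvx, hne, hdist⟩ | ⟨x, y, hmx, hvx, hmy, hvy, hne, hdist⟩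
  · -- valley: A at bottom cell (1,y), A+1 at top cell (0,x)
    obtain ⟨hLx, hxA⟩ := hc.inv0 hmx
    have hyB := hc.inv1 hmy
    have hd : Nat.dist y x = y - x + (x - y) := rfl
    rcases Nat.lt_or_ge x y with hxy | hxy
    · -- degenerate: y = x + (L + A - 1), impossible
      exfalso
      have hbvals : ∀ k, k < y → 1 ≤ T (1, k) ∧ T (1, k) < A := by
        intro k hk
        have hb := val_bounds hT (hc.mem1 (show k < B by omega))
        have hlt : T (1, k) < T (1, y) := row_lt hT (hc.mem1 (by omega)) (hc.mem1 hyB) hk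
        omega
      have hyA := bot_count hc hT (by omega) hbvals
      have hLx0 : L = 0 ∧ x = 0 ∧ y = A - 1 := by omega
      obtain ⟨rfl, rfl, rfl⟩ := hLx0
      have hcol := col_lt hT hmx (hc.mem1 (show 0 < B by omega)) (by omega)
      have h10 := hbvals 0 (by omega)
      omega
    · -- main: x = L + A - 1, y = 0:  `T = P2`
      have hxy0 : x = L + A - 1 ∧ y = 0 := by omega
      obtain ⟨rfl, rfl⟩ := hxy0
      right
      have hmlast : ((0 : ℕ), L + A - 1) ∈ cells := by
        have h' := hc.mem0 (show A - 1 < A by omega)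
        rwa [show L + (A - 1) = L + A - 1 by omega] at h'
      have hsmall : ∀ i, i < A - 1 → T (0, L + i) < A := by
        intro i hi
        have hlt : T (0, L + i) < T (0, L + A - 1) :=
          row_lt hT (hc.mem0 (show i < A by omega)) hmlast (by omega)
        have hneA : T (0, L + i) ≠ A := by
          intro he
          have := cell_inj hT (hc.mem0 (show i < A by omega)) hmy (by rw [he, hvy])
          simp at this
        omega
      have htv := topVals_last hc hT hA hsmall
      rw [show L + (A - 1) = L + A - 1 by omega, hvx] at htv
      exact eq_of_topVals hc hT (P2_isSYT hc hA hB hLA hAB) (by rw [htv, topVals_P2 hA])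
  · -- peak: A at top cell (0,x), A+1 at bottom cell (1,y)
    obtain ⟨hLx, hxA⟩ := hc.inv0 hmx
    have hyB := hc.inv1 hmy
    have hd : Nat.dist x y = x - y + (y - x) := rfl
    rcases Nat.lt_or_ge x y with hxy | hxy
    · -- degenerate
      exfalso
      have hbvals : ∀ k, k < y → 1 ≤ T (1, k) ∧ T (1, k) < A := by
        intro k hk
        have hb := val_bounds hT (hc.mem1 (show k < B by omega))
        have hlt : T (1, k) < T (1, y) := row_lt hT (hc.mem1 (by omega)) (hc.mem1 hyB) hk
        have hneA : T (1, k) ≠ A := by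
          intro he
          have := cell_inj hT (hc.mem1 (show k < B by omega)) hmx (by rw [he, hvx])
          simp at this
        omega
      have hyA := bot_count hc hT (by omega) hbvals
      have hLx0 : L = 0 ∧ x = 0 ∧ y = A - 1 := by omega
      obtain ⟨rfl, rfl, rfl⟩ := hLx0
      have hcol := col_lt hT hmx (hc.mem1 (show 0 < B by omega)) (by omega)
      have h10 := hbvals 0 (by omega)
      omega
    · -- main: `T = P1`
      have hxy0 : x = L + A - 1 ∧ y = 0 := by omega
      obtain ⟨rfl, rfl⟩ := hxy0
      left
      have hmlast : ((0 : ℕ), L + A - 1) ∈ cells := by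
        have h' := hc.mem0 (show A - 1 < A by omega)
        rwa [show L + (A - 1) = L + A - 1 by omega] at h'
      have hsmall : ∀ i, i < A - 1 → T (0, L + i) < A := by
        intro i hi
        have hlt : T (0, L + i) < T (0, L + A - 1) :=
          row_lt hT (hc.mem0 (show i < A by omega)) hmlast (by omega)
        omega
      have htv := topVals_last hc hT hA hsmall
      rw [show L + (A - 1) = L + A - 1 by omega, hvx] at htv
      have hIcc : insert A (Finset.Icc 1 (A - 1)) = Finset.Icc 1 A := by
        ext v
        rw [Finset.mem_insert, Finset.mem_Icc, Finset.mem_Icc]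
        omega
      rw [hIcc] at htv
      exact eq_of_topVals hc hT (P1_isSYT hc hA hAB) (by rw [htv, topVals_P1 hA])

end EHAux

namespace EHAux

variable {g A B L : ℕ} {cells : Finset (ℕ × ℕ)} {T T' : ℕ × ℕ → ℕ}

/-- The sum of top-row entries (potential function). -/
def Phi (A L : ℕ) (T : ℕ × ℕ → ℕ) : ℕ := ∑ i ∈ range A, T (0, L + i)

lemma Phi_swap_vly (hc : TwoRow cells A B L) (hT : IsSYT cells g T) {t j j' : ℕ}
    (hm : ((1 : ℕ), j) ∈ cells) (hv : T (1, j) = t)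
    (hm' : ((0 : ℕ), j') ∈ cells) (hv' : T (0, j') = t + 1) :
    Phi A L (swapVals t T) + 1 = Phi A L T := by
  obtain ⟨hLj', hj'A⟩ := hc.inv0 hm'
  obtain ⟨i₀, rfl, hi₀⟩ : ∃ i, j' = L + i ∧ i < A := ⟨j' - L, by omega, by omega⟩
  have h1 : Phi A L T = T (0, L + i₀) + ∑ i ∈ (range A).erase i₀, T (0, L + i) :=
    (Finset.add_sum_erase _ _ (Finset.mem_range.mpr hi₀)).symm
  have h2 : Phi A L (swapVals t T) =
      swapVals t T (0, L + i₀) + ∑ i ∈ (range A).erase i₀, swapVals t T (0, L + i) :=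
    (Finset.add_sum_erase _ _ (Finset.mem_range.mpr hi₀)).symm
  have h3 : ∑ i ∈ (range A).erase i₀, swapVals t T (0, L + i) =
      ∑ i ∈ (range A).erase i₀, T (0, L + i) := by
    apply Finset.sum_congr rfl
    intro i hi
    have hiA : i < A := Finset.mem_range.mp (Finset.mem_of_mem_erase hi)
    have hine : i ≠ i₀ := Finset.ne_of_mem_erase hi
    have hnt : T (0, L + i) ≠ t := by
      intro he
      have := cell_inj hT (hc.mem0 hiA) hm (he.trans hv.symm)
      simp at this
    have hnt1 : T (0, L + i) ≠ t + 1 := by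
      intro he
      have h' := cell_inj hT (hc.mem0 hiA) hm' (he.trans hv'.symm)
      have : L + i = L + i₀ := congrArg Prod.snd h'
      omega
    show Equiv.swap t (t + 1) (T (0, L + i)) = T (0, L + i)
    rw [swap_eq, if_neg hnt, if_neg hnt1]
  have h4 : swapVals t T (0, L + i₀) = t := by
    show Equiv.swap t (t + 1) (T (0, L + i₀)) = t
    rw [hv', swap_eq, if_neg (by omega), if_pos rfl]
  rw [h3, h4] at h2
  rw [hv'] at h1
  omega

lemma Phi_swap_pk (hc : TwoRow cells A B L) (hT : IsSYT cells g T) {t j j' : ℕ}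
    (hm : ((0 : ℕ), j) ∈ cells) (hv : T (0, j) = t)
    (hm' : ((1 : ℕ), j') ∈ cells) (hv' : T (1, j') = t + 1) :
    Phi A L T + 1 = Phi A L (swapVals t T) := by
  obtain ⟨hLj, hjA⟩ := hc.inv0 hm
  obtain ⟨i₀, rfl, hi₀⟩ : ∃ i, j = L + i ∧ i < A := ⟨j - L, by omega, by omega⟩
  have h1 : Phi A L T = T (0, L + i₀) + ∑ i ∈ (range A).erase i₀, T (0, L + i) :=
    (Finset.add_sum_erase _ _ (Finset.mem_range.mpr hi₀)).symm
  have h2 : Phi A L (swapVals t T) =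
      swapVals t T (0, L + i₀) + ∑ i ∈ (range A).erase i₀, swapVals t T (0, L + i) :=
    (Finset.add_sum_erase _ _ (Finset.mem_range.mpr hi₀)).symm
  have h3 : ∑ i ∈ (range A).erase i₀, swapVals t T (0, L + i) =
      ∑ i ∈ (range A).erase i₀, T (0, L + i) := by
    apply Finset.sum_congr rfl
    intro i hi
    have hiA : i < A := Finset.mem_range.mp (Finset.mem_of_mem_erase hi)
    have hine : i ≠ i₀ := Finset.ne_of_mem_erase hi
    have hnt : T (0, L + i) ≠ t := by
      intro he
      have h' := cell_inj hT (hc.mem0 hiA) hm (he.trans hv.symm)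
      have : L + i = L + i₀ := congrArg Prod.snd h'
      omega
    have hnt1 : T (0, L + i) ≠ t + 1 := by
      intro he
      have := cell_inj hT (hc.mem0 hiA) hm' (he.trans hv'.symm)
      simp at this
    show Equiv.swap t (t + 1) (T (0, L + i)) = T (0, L + i)
    rw [swap_eq, if_neg hnt, if_neg hnt1]
  have h4 : swapVals t T (0, L + i₀) = t + 1 := by
    show Equiv.swap t (t + 1) (T (0, L + i₀)) = t + 1
    rw [hv, swap_eq, if_pos rfl]
  rw [h3, h4] at h2
  rw [hv] at h1
  omega

lemma Phi_piAct_vlyD (hc : TwoRow cells A B L) (hT : IsSYT cells g T) {t a : ℕ}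
    (h : VlyD cells T t a) : Phi A L (piAct cells t a T) + 1 = Phi A L T := by
  rw [piAct_of_shouldSwap ((shouldSwap_iff hc hT).mpr (Or.inl h))]
  obtain ⟨j, j', hm, hv, hm', hv', _, _⟩ := h
  exact Phi_swap_vly hc hT hm hv hm' hv'

lemma Phi_piAct_pkD (hc : TwoRow cells A B L) (hT : IsSYT cells g T) {t a : ℕ}
    (h : PkD cells T t a) : Phi A L T + 1 = Phi A L (piAct cells t a T) := by
  rw [piAct_of_shouldSwap ((shouldSwap_iff hc hT).mpr (Or.inr h))]
  obtain ⟨j, j', hm, hv, hm', hv', _, _⟩ := h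
  exact Phi_swap_pk hc hT hm hv hm' hv'

lemma step_good (hc : TwoRow cells A B L) (hT : IsSYT cells g T) (hT' : IsSYT cells g T')
    {t a : ℕ} (hv : VlyD cells T t a) (hnp : ¬ PkD cells T' t a) :
    Phi A L (piAct cells t a T) + 1 = Phi A L T ∧
    (Phi A L (piAct cells t a T') + 1 = Phi A L T' ∨ piAct cells t a T' = T') := by
  refine ⟨Phi_piAct_vlyD hc hT hv, ?_⟩
  by_cases hss : ShouldSwap cells t a T'
  · rcases (shouldSwap_iff hc hT').mp hss with hv' | hp'
    · exact Or.inl (Phi_piAct_vlyD hc hT' hv')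
    · exact absurd hp' hnp
  · exact Or.inr (piAct_of_not_shouldSwap hss)

lemma step_neutral (hc : TwoRow cells A B L) (hT : IsSYT cells g T) (hT' : IsSYT cells g T')
    {t a : ℕ} (hv : VlyD cells T t a) (hp : PkD cells T' t a) :
    Phi A L (piAct cells t a T) + 1 = Phi A L T ∧
    Phi A L T' + 1 = Phi A L (piAct cells t a T') :=
  ⟨Phi_piAct_vlyD hc hT hv, Phi_piAct_pkD hc hT' hp⟩

end EHAux

namespace EHAux

variable {g A B L : ℕ} {cells : Finset (ℕ × ℕ)}

private def meas (A L : ℕ) (T T' : ℕ × ℕ → ℕ) : ℕ :=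
  Phi A L T + Phi A L T' + 2 * min (Phi A L T) (Phi A L T')

/-- Any two distinct standard tableaux can be moved simultaneously to the pair
`(P1, P2)` by a word in the generators. -/
lemma reach (hc : TwoRow cells A B L) (hA : 1 ≤ A) (hB : 1 ≤ B) (hLA : 2 ≤ L + A)
    (hAB : A + B = g) :
    ∀ (N : ℕ) (T T' : ℕ × ℕ → ℕ), IsSYT cells g T → IsSYT cells g T' → T ≠ T' →
      meas A L T T' < N →
      ∃ l : List (ℕ × ℕ), (∀ p ∈ l, 1 ≤ p.1 ∧ p.1 < g ∧ 0 < p.2) ∧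
        ((applyList cells l T = P1 A B L ∧ applyList cells l T' = P2 A B L) ∨
         (applyList cells l T = P2 A B L ∧ applyList cells l T' = P1 A B L)) := by
  intro N
  induction N with
  | zero => intro T T' _ _ _ h; exact absurd h (by omega)
  | succ n ih =>
    intro T T' hT hT' hne hm
    by_cases htar : (T = P1 A B L ∧ T' = P2 A B L) ∨ (T = P2 A B L ∧ T' = P1 A B L)
    · exact ⟨[], by simp, htar⟩
    · have hstep : ∃ t a, 1 ≤ t ∧ t < g ∧ 1 ≤ a ∧
          meas A L (piAct cells t a T) (piAct cells t a T') < meas A L T T' := by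
        by_cases hTP : T = P1 A B L
        · have hTne : T' ≠ P1 A B L := fun h => hne (hTP.trans h.symm)
          obtain ⟨t, hvly⟩ := exists_vly hc hT' hA hAB hTne
          obtain ⟨a, hvd, ht1, ht2, ha⟩ := vlyD_of_vly hc hT' hvly
          by_cases hpk : PkD cells T t a
          · exfalso
            obtain ⟨htA, haA⟩ := pkD_P1 hc hA (hTP ▸ hpk)
            rw [htA, haA] at hvd
            have hss : ShouldSwap cells A (L + A) T' :=
              (shouldSwap_iff hc hT').mpr (Or.inl hvd)
            rcases tau_char hc hT' hA hB hLA hAB hss with h | h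
            · exact hTne h
            · exact htar (Or.inl ⟨hTP, h⟩)
          · refine ⟨t, a, ht1, ht2, ha, ?_⟩
            obtain ⟨e1, e2⟩ := step_good hc hT' hT hvd hpk
            unfold meas
            rcases e2 with h | h
            · omega
            · rw [h]; omega
        · by_cases hT'P : T' = P1 A B L
          · obtain ⟨t, hvly⟩ := exists_vly hc hT hA hAB hTP
            obtain ⟨a, hvd, ht1, ht2, ha⟩ := vlyD_of_vly hc hT hvly
            by_cases hpk : PkD cells T' t a
            · exfalso
              obtain ⟨htA, haA⟩ := pkD_P1 hc hA (hT'P ▸ hpk)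
              rw [htA, haA] at hvd
              have hss : ShouldSwap cells A (L + A) T :=
                (shouldSwap_iff hc hT).mpr (Or.inl hvd)
              rcases tau_char hc hT hA hB hLA hAB hss with h | h
              · exact hTP h
              · exact htar (Or.inr ⟨h, hT'P⟩)
            · refine ⟨t, a, ht1, ht2, ha, ?_⟩
              obtain ⟨e1, e2⟩ := step_good hc hT hT' hvd hpk
              unfold meas
              rcases e2 with h | h
              · omega
              · rw [h]; omega
          · obtain ⟨t₁, hvly1⟩ := exists_vly hc hT hA hAB hTP
            obtain ⟨a₁, hvd1, ht11, ht12, ha1⟩ := vlyD_of_vly hc hT hvly1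
            obtain ⟨t₂, hvly2⟩ := exists_vly hc hT' hA hAB hT'P
            obtain ⟨a₂, hvd2, ht21, ht22, ha2⟩ := vlyD_of_vly hc hT' hvly2
            by_cases hpk1 : PkD cells T' t₁ a₁
            · by_cases hpk2 : PkD cells T t₂ a₂
              · rcases le_total (Phi A L T) (Phi A L T') with hle | hle
                · refine ⟨t₁, a₁, ht11, ht12, ha1, ?_⟩
                  obtain ⟨e1, e2⟩ := step_neutral hc hT hT' hvd1 hpk1
                  unfold meas
                  omega
                · refine ⟨t₂, a₂, ht21, ht22, ha2, ?_⟩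
                  obtain ⟨e1, e2⟩ := step_neutral hc hT' hT hvd2 hpk2
                  unfold meas
                  omega
              · refine ⟨t₂, a₂, ht21, ht22, ha2, ?_⟩
                obtain ⟨e1, e2⟩ := step_good hc hT' hT hvd2 hpk2
                unfold meas
                rcases e2 with h | h
                · omega
                · rw [h]; omega
            · refine ⟨t₁, a₁, ht11, ht12, ha1, ?_⟩
              obtain ⟨e1, e2⟩ := step_good hc hT hT' hvd1 hpk1
              unfold meas
              rcases e2 with h | h
              · omega
              · rw [h]; omega
      obtain ⟨t, a, ht1, ht2, ha, hdec⟩ := hstep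
      obtain ⟨l, hl, hres⟩ := ih (piAct cells t a T) (piAct cells t a T')
        (piAct_isSYT hT t a) (piAct_isSYT hT' t a)
        (fun h => hne (piAct_inj hT hT' h)) (by omega)
      refine ⟨(t, a) :: l, ?_, ?_⟩
      · intro p hp
        rcases List.mem_cons.mp hp with rfl | hp
        · exact ⟨ht1, ht2, ha⟩
        · exact hl p hp
      · rw [applyList_cons, applyList_cons]
        exact hres

end EHAux

namespace EHAux

variable {g A B L : ℕ} {cells : Finset (ℕ × ℕ)}

/-- Realization of an arbitrary transposition of tableaux by a word in the generators. -/
lemma trans_word (hc : TwoRow cells A B L) (hA : 1 ≤ A) (hB : 1 ≤ B) (hLA : 2 ≤ L + A)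
    (hAB : A + B = g) {X Y : ℕ × ℕ → ℕ} (hX : IsSYT cells g X) (hY : IsSYT cells g Y)
    (hne : X ≠ Y) :
    ∃ w : List (ℕ × ℕ), (∀ p ∈ w, 1 ≤ p.1 ∧ p.1 < g ∧ 0 < p.2) ∧
      ∀ U, IsSYT cells g U →
        applyList cells w U = if U = X then Y else if U = Y then X else U := by
  obtain ⟨l, hl, hres⟩ := reach hc hA hB hLA hAB (meas A L X Y + 1) X Y hX hY hne (by omega)
  have htau : piAct cells A (L + A) (P2 A B L) = P1 A B L := by
    have h := piAct_invol (P1_isSYT hc hA hAB) A (L + A)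
    rwa [piAct_tau_P1 hc hA hB hLA] at h
  refine ⟨l ++ (A, L + A) :: l.reverse, ?_, ?_⟩
  · intro p hp
    rcases List.mem_append.mp hp with hp | hp
    · exact hl p hp
    · rcases List.mem_cons.mp hp with rfl | hp
      · exact ⟨hA, by omega, by omega⟩
      · exact hl p (List.mem_reverse.mp hp)
  · intro U hU
    have key : applyList cells (l ++ (A, L + A) :: l.reverse) U =
        applyList cells l.reverse (piAct cells A (L + A) (applyList cells l U)) := by
      rw [applyList_append, applyList_cons]
    by_cases hUX : U = X
    · subst hUX
      rw [if_pos rfl, key]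
      rcases hres with ⟨h1, h2⟩ | ⟨h1, h2⟩
      · rw [h1, piAct_tau_P1 hc hA hB hLA, ← h2, applyList_reverse hY l]
      · rw [h1, htau, ← h2, applyList_reverse hY l]
    · by_cases hUY : U = Y
      · subst hUY
        rw [if_neg hUX, if_pos rfl, key]
        rcases hres with ⟨h1, h2⟩ | ⟨h1, h2⟩
        · rw [h2, htau, ← h1, applyList_reverse hX l]
        · rw [h2, piAct_tau_P1 hc hA hB hLA, ← h1, applyList_reverse hX l]
      · rw [if_neg hUX, if_neg hUY, key]
        have hu : IsSYT cells g (applyList cells l U) := applyList_isSYT hU l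
        have hne1 : applyList cells l U ≠ P1 A B L ∧ applyList cells l U ≠ P2 A B L := by
          rcases hres with ⟨h1, h2⟩ | ⟨h1, h2⟩
          · exact ⟨fun he => hUX (applyList_injOn hU hX l (he.trans h1.symm)),
              fun he => hUY (applyList_injOn hU hY l (he.trans h2.symm))⟩
          · exact ⟨fun he => hUY (applyList_injOn hU hY l (he.trans h2.symm)),
              fun he => hUX (applyList_injOn hU hX l (he.trans h1.symm))⟩
        have hnss : ¬ ShouldSwap cells A (L + A) (applyList cells l U) := by
          intro hss
          rcases tau_char hc hu hA hB hLA hAB hss with h | h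
          · exact hne1.1 h
          · exact hne1.2 h
        rw [piAct_of_not_shouldSwap hnss, applyList_reverse hU l]

/-- The master lemma: every permutation of the standard tableaux of a two-row
shape is realized by a word in the generators `π_{t,a}`. -/
lemma master (hc : TwoRow cells A B L) (hAB : A + B = g) :
    ∀ F : Equiv.Perm {T : ℕ × ℕ → ℕ // IsSYT cells g T},
      ∃ l : List (ℕ × ℕ), (∀ p ∈ l, 1 ≤ p.1 ∧ p.1 < g ∧ 0 < p.2) ∧
        ∀ T : {T : ℕ × ℕ → ℕ // IsSYT cells g T},
          (F T : ℕ × ℕ → ℕ) = applyList cells l (T : ℕ × ℕ → ℕ) := by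
  intro F
  by_cases hex : ∃ x y : {T : ℕ × ℕ → ℕ // IsSYT cells g T}, x ≠ y
  · obtain ⟨x₀, y₀, hxy₀⟩ := hex
    have hA : 1 ≤ A := by
      by_contra h
      have hA0 : A = 0 := by omega
      refine hxy₀ (Subtype.ext (eq_of_topVals hc x₀.2 y₀.2 ?_))
      simp [topVals, hA0]
    have hB : 1 ≤ B := by
      by_contra h
      have hB0 : B = 0 := by omega
      refine hxy₀ (Subtype.ext (eq_of_topVals hc x₀.2 y₀.2 ?_))
      have htv : ∀ T : ℕ × ℕ → ℕ, IsSYT cells g T → topVals A L T = Finset.Icc 1 g := by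
        intro T hT
        apply Finset.eq_of_subset_of_card_le
        · intro v hv
          rw [Finset.mem_Icc]
          exact topVals_bounds hc hT hv
        · rw [card_topVals hc hT, Nat.card_Icc]
          omega
      rw [htv _ x₀.2, htv _ y₀.2]
    have hLA : 2 ≤ L + A := by
      by_contra hcon
      have hL0 : L = 0 := by omega
      have hA1 : A = 1 := by omega
      subst hL0
      have hone : ∀ T : ℕ × ℕ → ℕ, IsSYT cells g T → T (0, 0) = 1 := by
        intro T hT
        have h1g : 1 ≤ g := by omega
        obtain ⟨c, hm, he⟩ := exists_cell hT le_rfl h1g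
        rcases hc.rows hm with h0 | h1
        · have e : c = ((0 : ℕ), c.2) := Prod.ext h0 rfl
          rw [e] at hm he
          obtain ⟨hL', hA'⟩ := hc.inv0 hm
          have hz : c.2 = 0 := by omega
          rw [hz] at he
          exact he
        · exfalso
          have e : c = ((1 : ℕ), c.2) := Prod.ext h1 rfl
          rw [e] at hm he
          have hB' := hc.inv1 hm
          have hj0 : c.2 = 0 := by
            by_contra hj
            have hlt := row_lt hT (hc.mem1 (show 0 < B by omega)) hm (by omega)
            have hbd := val_bounds hT (hc.mem1 (show 0 < B by omega))
            omega
          rw [hj0] at he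
          have hm0 : ((0 : ℕ), (0 : ℕ)) ∈ cells := by
            have := hc.mem0 (show 0 < A by omega)
            simpa using this
          have hcol := col_lt hT hm0 (hc.mem1 (show 0 < B by omega)) (by omega)
          have hbd := val_bounds hT hm0
          omega
      refine hxy₀ (Subtype.ext (eq_of_topVals hc x₀.2 y₀.2 ?_))
      have htv : ∀ T : ℕ × ℕ → ℕ, IsSYT cells g T → topVals A 0 T = {(1 : ℕ)} := by
        intro T hT
        rw [topVals, hA1]
        rw [show Finset.range 1 = {0} from rfl, Finset.image_singleton]
        rw [show (0 : ℕ) + 0 = 0 by omega, hone T hT]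
      rw [htv _ x₀.2, htv _ y₀.2]
    -- finiteness of the set of tableaux
    have hfin : Finite {T : ℕ × ℕ → ℕ // IsSYT cells g T} := by
      let f : {T : ℕ × ℕ → ℕ // IsSYT cells g T} → ({c // c ∈ cells} → Fin (g + 1)) :=
        fun T c => ⟨T.1 c.1, by have := val_bounds T.2 c.2; omega⟩
      have hinj : Function.Injective f := by
        intro S U h
        apply Subtype.ext
        funext c
        by_cases hm : c ∈ cells
        · have := congrFun h ⟨c, hm⟩
          simpa [f, Fin.ext_iff] using this
        · rw [S.2.1 c hm, U.2.1 c hm]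
      exact Finite.of_injective f hinj
    refine Equiv.Perm.swap_induction_on F ?_ ?_
    · exact ⟨[], by simp, fun T => rfl⟩
    · rintro f x y hxy ⟨l, hl, hres⟩
      obtain ⟨w, hwb, hw⟩ := trans_word hc hA hB hLA hAB x.2 y.2
        (fun h => hxy (Subtype.ext h))
      refine ⟨l ++ w, ?_, ?_⟩
      · intro p hp
        rcases List.mem_append.mp hp with hp | hp
        · exact hl p hp
        · exact hwb p hp
      · intro T
        rw [applyList_append, ← hres T]
        have h2 := hw (f T).1 (f T).2
        rw [h2]
        have hmul : ((Equiv.swap x y * f) T) = Equiv.swap x y (f T) := rfl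
        rw [hmul]
        by_cases hfx : f T = x
        · rw [hfx, Equiv.swap_apply_left, if_pos rfl]
        · by_cases hfy : f T = y
          · rw [hfy, Equiv.swap_apply_right,
              if_neg (fun h : (y : ℕ × ℕ → ℕ) = (x : ℕ × ℕ → ℕ) => hxy (Subtype.ext h.symm)),
              if_pos rfl]
          · rw [Equiv.swap_apply_of_ne_of_ne hfx hfy,
              if_neg (fun h => hfx (Subtype.ext h)), if_neg (fun h => hfy (Subtype.ext h))]
  · push_neg at hex
    exact ⟨[], by simp, fun T => congrArg Subtype.val (hex (F T) T)⟩

end EHAux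

/-- For `r = 1` and any ramification sequences `α, β` with `ρ(g,1,d,α,β) = 0`, the
group generated by the involutions `π_{t,a}` acting on the standard Young tableaux
of the two-row skew diagram `σ(g,1,d,α,β)` is the full symmetric group: every
permutation of the set of tableaux is realized by a composition of the
generators. -/
theorem stmt_17 (g d : ℕ) (α β : ℕ → ℕ)
    (hd : d ≤ g + 1)
    (hα : α 1 ≤ α 0) (hβ : β 1 ≤ β 0)
    (hα0 : α 0 + 1 ≤ d) (hβ0 : β 0 + 1 ≤ d)
    (hρ : g = 2 * (g + 1 - d) + (α 0 + α 1) + (β 0 + β 1)) :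
    ∀ F : Equiv.Perm {T : ℕ × ℕ → ℕ // IsSYT (sigmaCells g 1 d α β) g T},
      ∃ l : List (ℕ × ℕ), (∀ p ∈ l, 1 ≤ p.1 ∧ p.1 < g ∧ 0 < p.2) ∧
        ∀ T : {T : ℕ × ℕ → ℕ // IsSYT (sigmaCells g 1 d α β) g T},
          (F T : ℕ × ℕ → ℕ) = applyList (sigmaCells g 1 d α β) l (T : ℕ × ℕ → ℕ) := by
  intro F
  have hcells : EHAux.TwoRow (sigmaCells g 1 d α β)
      (α 1 + (g + 1 - d) + β 0) (α 0 + (g + 1 - d) + β 1) (α 0 - α 1) := by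
    intro c
    constructor
    · intro hm
      simp only [sigmaCells, Finset.mem_biUnion, Finset.mem_range, Finset.mem_image,
        Finset.mem_Ico] at hm
      obtain ⟨i, hi, j, ⟨hj1, hj2⟩, hceq⟩ := hm
      subst hceq
      interval_cases i
      · norm_num at hj1 hj2
        exact Or.inl ⟨rfl, by show α 0 - α 1 ≤ j; omega,
          by show j < α 0 - α 1 + (α 1 + (g + 1 - d) + β 0); omega⟩
      · norm_num at hj1 hj2
        exact Or.inr ⟨rfl, by show j < α 0 + (g + 1 - d) + β 1; omega⟩
    · rintro (⟨h0, hL, hA⟩ | ⟨h1, hB⟩)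
      · simp only [sigmaCells, Finset.mem_biUnion, Finset.mem_range, Finset.mem_image,
          Finset.mem_Ico]
        refine ⟨0, by omega, c.2, ⟨?_, ?_⟩, by rw [← h0]⟩
        · norm_num
          omega
        · norm_num
          omega
      · simp only [sigmaCells, Finset.mem_biUnion, Finset.mem_range, Finset.mem_image,
          Finset.mem_Ico]
        refine ⟨1, by omega, c.2, ⟨?_, ?_⟩, by rw [← h1]⟩
        · norm_num
        · norm_num
          omega
  have hAB : (α 1 + (g + 1 - d) + β 0) + (α 0 + (g + 1 - d) + β 1) = g := by omega
  exact EHAux.master hcells hAB F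
end
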